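/- arXiv:2307.06881 — 13 statements merged into one kernel-verified Lean document; each statement's English description precedes it below -/
import Mathlib

section
/- For every infinite set D ⊆ ℕ there is an infinite subset D' ⊆ D which is very sparse. -/
/-- Set of finite nonempty sums of distinct elements of `B`. -/
def FS (B : Set ℕ) : Set ℕ :=
  {n | ∃ F : Finset ℕ, F.Nonempty ∧ ↑F ⊆ B ∧ F.sum id = n}

/-- `F` is a representation of `x` as a finite nonempty sum of distinct elements of `D`. -/
def Represents (D : Set ℕ) (F : Finset ℕ) (x : ℕ) : Prop :=
  F.Nonempty ∧ ↑F ⊆ D ∧ F.sum id = x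

/-- `D` is sparse: every element of `FS D` has a unique representation. -/
def Sparse (D : Set ℕ) : Prop :=
  ∀ x ∈ FS D, ∃! F : Finset ℕ, Represents D F x

/-- `D` is very sparse. -/
def VerySparse (D : Set ℕ) : Prop :=
  Sparse D ∧ ∀ x y F G, Represents D F x → Represents D G y →
    (F ∩ G).Nonempty → x + y ∉ FS D

/-- Membership in the Hindman ideal. -/
def InHindman (A : Set ℕ) : Prop :=
  ∀ B : Set ℕ, B.Infinite → ¬ FS B ⊆ A

lemma inf_gt {D : Set ℕ} (hD : D.Infinite) (n : ℕ) : ∃ m, m ∈ D ∧ n < m := by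
  by_contra h
  push_neg at h
  exact hD ((Set.finite_Iic n).subset (fun x hx => Set.mem_Iic.mpr (h x hx)))

noncomputable def seqAux (D : Set ℕ) (hD : D.Infinite) : ℕ → ℕ × ℕ
  | 0 =>
      let a := (inf_gt hD 0).choose
      (a, a)
  | n + 1 =>
      let s := (seqAux D hD n).2
      let a := (inf_gt hD (2 * s)).choose
      (a, s + a)

noncomputable def seqF (D : Set ℕ) (hD : D.Infinite) (n : ℕ) : ℕ := (seqAux D hD n).1

lemma seqF_mem (D : Set ℕ) (hD : D.Infinite) (n : ℕ) : seqF D hD n ∈ D := by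
  cases n with
  | zero => exact (inf_gt hD 0).choose_spec.1
  | succ n => exact (inf_gt hD (2 * (seqAux D hD n).2)).choose_spec.1

lemma seqAux_sum (D : Set ℕ) (hD : D.Infinite) (n : ℕ) :
    ∑ i ∈ Finset.range (n + 1), seqF D hD i = (seqAux D hD n).2 := by
  induction n with
  | zero => simp [seqF, seqAux]
  | succ n ih =>
      rw [Finset.sum_range_succ, ih]
      rfl

lemma seqF_grow (D : Set ℕ) (hD : D.Infinite) (n : ℕ) :
    2 * ∑ i ∈ Finset.range n, seqF D hD i < seqF D hD n := by
  cases n with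
  | zero =>
      simpa [seqF, seqAux] using (inf_gt hD 0).choose_spec.2
  | succ n =>
      rw [seqAux_sum]
      exact (inf_gt hD (2 * (seqAux D hD n).2)).choose_spec.2

lemma seqF_strictMono (D : Set ℕ) (hD : D.Infinite) : StrictMono (seqF D hD) := by
  apply strictMono_nat_of_lt_succ
  intro n
  have h := seqF_grow D hD (n + 1)
  have h2 : seqF D hD n ≤ ∑ i ∈ Finset.range (n + 1), seqF D hD i :=
    Finset.single_le_sum (f := seqF D hD) (fun i _ => Nat.zero_le _) (Finset.self_mem_range_succ n)
  omega

/-- Uniqueness of representations with coefficients ≤ 2 for super-increasing sequences. -/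
lemma key_uniq (f : ℕ → ℕ) (hf : ∀ n, 2 * ∑ i ∈ Finset.range n, f i < f n) :
    ∀ N (g h : ℕ → ℕ), (∀ i, g i ≤ 2) → (∀ i, h i ≤ 2) →
      ∑ i ∈ Finset.range N, g i * f i = ∑ i ∈ Finset.range N, h i * f i →
      ∀ i < N, g i = h i := by
  intro N
  induction N with
  | zero => intro g h _ _ _ i hi; omega
  | succ N ih =>
      intro g h hg hh hsum i hi
      have hb : ∀ (k : ℕ → ℕ), (∀ i, k i ≤ 2) →
          ∑ i ∈ Finset.range N, k i * f i < f N := by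
        intro k hk
        calc ∑ i ∈ Finset.range N, k i * f i
            ≤ ∑ i ∈ Finset.range N, 2 * f i :=
              Finset.sum_le_sum (fun i _ => Nat.mul_le_mul_right _ (hk i))
          _ = 2 * ∑ i ∈ Finset.range N, f i := by rw [Finset.mul_sum]
          _ < f N := hf N
      rw [Finset.sum_range_succ, Finset.sum_range_succ] at hsum
      have htop : g N = h N := by
        by_contra hne
        rcases Nat.lt_or_ge (g N) (h N) with hlt | hge
        · have hmul : g N * f N + f N ≤ h N * f N := by
            have := Nat.mul_le_mul_right (f N) (Nat.succ_le_of_lt hlt)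
            rwa [Nat.succ_mul] at this
          have h1 := hb g hg
          linarith [Nat.zero_le (∑ i ∈ Finset.range N, h i * f i)]
        · have hlt' : h N < g N := lt_of_le_of_ne hge (fun e => hne e.symm)
          have hmul : h N * f N + f N ≤ g N * f N := by
            have := Nat.mul_le_mul_right (f N) (Nat.succ_le_of_lt hlt')
            rwa [Nat.succ_mul] at this
          have h2 := hb h hh
          linarith [Nat.zero_le (∑ i ∈ Finset.range N, g i * f i)]
      have hsum' : ∑ i ∈ Finset.range N, g i * f i = ∑ i ∈ Finset.range N, h i * f i := by
        rw [htop] at hsum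
        exact Nat.add_right_cancel hsum
      rcases Nat.lt_succ_iff_lt_or_eq.mp hi with hlt | heq
      · exact ih g h hg hh hsum' i hlt
      · rw [heq]; exact htop

lemma indicator_sum (f : ℕ → ℕ) (A : Finset ℕ) {N : ℕ} (hA : A ⊆ Finset.range N) :
    ∑ i ∈ Finset.range N, (if i ∈ A then 1 else 0) * f i = ∑ i ∈ A, f i := by
  rw [Finset.sum_congr rfl (fun i _ => by rw [ite_mul, one_mul, zero_mul]),
    Finset.sum_ite_mem, Finset.inter_eq_right.mpr hA]

theorem every_infinite_set_has_very_sparse_infinite_subset :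
    ∀ D : Set ℕ, D.Infinite →
      ∃ D' : Set ℕ, D' ⊆ D ∧ D'.Infinite ∧ VerySparse D' := by
  intro D hD
  set f := seqF D hD with hfdef
  have hinj : Function.Injective f := (seqF_strictMono D hD).injective
  have hgrow := seqF_grow D hD
  refine ⟨Set.range f, ?_, Set.infinite_range_of_injective hinj, ?_, ?_⟩
  · rintro x ⟨n, rfl⟩; exact seqF_mem D hD n
  -- helper to convert a representation to an index set
  · -- Sparse
    rintro x ⟨F, hF⟩
    refine ⟨F, hF, ?_⟩
    rintro G ⟨hGne, hGsub, hGsum⟩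
    obtain ⟨hFne, hFsub, hFsum⟩ := hF
    obtain ⟨A, hAsub, hAim⟩ := Finset.subset_set_image_iff.mp (by simpa using hFsub : ↑F ⊆ f '' Set.univ)
    obtain ⟨B, hBsub, hBim⟩ := Finset.subset_set_image_iff.mp (by simpa using hGsub : ↑G ⊆ f '' Set.univ)
    have hAsum : ∑ a ∈ A, f a = x := by
      rw [← hFsum, ← hAim, Finset.sum_image (fun a _ b _ e => hinj e)]; rfl
    have hBsum : ∑ a ∈ B, f a = x := by
      rw [← hGsum, ← hBim, Finset.sum_image (fun a _ b _ e => hinj e)]; rfl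
    -- choose N large
    obtain ⟨N, hN⟩ : ∃ N, A ⊆ Finset.range N ∧ B ⊆ Finset.range N := by
      refine ⟨(A ∪ B).sup id + 1, ?_, ?_⟩ <;>
        · intro a ha
          simp only [Finset.mem_range, Nat.lt_succ_iff]
          exact Finset.le_sup (f := id) (by simp [ha])
    have heq : ∀ i < N, (if i ∈ A then 1 else 0) = (if i ∈ B then (1:ℕ) else 0) := by
      apply key_uniq f hgrow N _ _ (fun i => by split <;> omega) (fun i => by split <;> omega)
      rw [indicator_sum f A hN.1, indicator_sum f B hN.2, hAsum, hBsum]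
    have hABeq : A = B := by
      ext a
      constructor <;> intro ha
      · have := heq a (Finset.mem_range.mp (hN.1 ha)); simp [ha] at this
        by_contra hb; simp [hb] at this
      · have := heq a (Finset.mem_range.mp (hN.2 ha)); simp [ha] at this
        by_contra hb; simp [hb] at this
    rw [← hAim, ← hBim, hABeq]
  · -- Very sparse condition
    rintro x y F G ⟨hFne, hFsub, hFsum⟩ ⟨hGne, hGsub, hGsum⟩ ⟨z, hz⟩ ⟨H, hHne, hHsub, hHsum⟩
    obtain ⟨A, hAsub, hAim⟩ := Finset.subset_set_image_iff.mp (by simpa using hFsub : ↑F ⊆ f '' Set.univ)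
    obtain ⟨B, hBsub, hBim⟩ := Finset.subset_set_image_iff.mp (by simpa using hGsub : ↑G ⊆ f '' Set.univ)
    obtain ⟨C, hCsub, hCim⟩ := Finset.subset_set_image_iff.mp (by simpa using hHsub : ↑H ⊆ f '' Set.univ)
    have hAsum : ∑ a ∈ A, f a = x := by
      rw [← hFsum, ← hAim, Finset.sum_image (fun a _ b _ e => hinj e)]; rfl
    have hBsum : ∑ a ∈ B, f a = y := by
      rw [← hGsum, ← hBim, Finset.sum_image (fun a _ b _ e => hinj e)]; rfl
    have hCsum : ∑ a ∈ C, f a = x + y := by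
      rw [← hHsum, ← hCim, Finset.sum_image (fun a _ b _ e => hinj e)]; rfl
    -- shared index
    rw [Finset.mem_inter, ← hAim, ← hBim] at hz
    obtain ⟨a, haA, hafz⟩ := Finset.mem_image.mp hz.1
    have haB : a ∈ B := by
      obtain ⟨b, hbB, hbfz⟩ := Finset.mem_image.mp hz.2
      rwa [← hinj (hbfz.trans hafz.symm)]
    obtain ⟨N, hNA, hNB, hNC⟩ :
        ∃ N, A ⊆ Finset.range N ∧ B ⊆ Finset.range N ∧ C ⊆ Finset.range N := by
      refine ⟨(A ∪ B ∪ C).sup id + 1, ?_, ?_, ?_⟩ <;>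
        · intro t ht
          simp only [Finset.mem_range, Nat.lt_succ_iff]
          exact Finset.le_sup (f := id) (by simp [ht])
    set g : ℕ → ℕ := fun i => (if i ∈ A then 1 else 0) + (if i ∈ B then 1 else 0) with hg
    set h : ℕ → ℕ := fun i => (if i ∈ C then 1 else 0) with hh
    have hsum : ∑ i ∈ Finset.range N, g i * f i = ∑ i ∈ Finset.range N, h i * f i := by
      simp only [hg, hh, add_mul, Finset.sum_add_distrib]
      rw [indicator_sum f A hNA, indicator_sum f B hNB, indicator_sum f C hNC,
        hAsum, hBsum, hCsum]
    have := key_uniq f hgrow N g h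
      (fun i => by simp only [hg]; split <;> split <;> omega)
      (fun i => by simp only [hh]; split <;> omega)
      hsum a (Finset.mem_range.mp (hNA haA))
    simp only [hg, hh, haA, haB, if_pos] at this
    split at this <;> omega
end

section
/- If D ⊆ ℕ is very sparse, then for every y ∈ FS(D), the set {x ∈ FS(D) : α_D(x) ∩ α_D(y) ≠ ∅} belongs to the Hindman ideal, i.e., it contains no set of the form FS(B) for an infinite B ⊆ ℕ. -/
theorem very_sparse_intersecting_alpha_in_hindman
    (D : Set ℕ) (hD : VerySparse D) (y : ℕ) (hy : y ∈ FS D) :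
    InHindman {x | x ∈ FS D ∧ ∃ F G : Finset ℕ,
      Represents D F x ∧ Represents D G y ∧ (F ∩ G).Nonempty} := by
  intro B hB hsub
  -- unique representation of y
  obtain ⟨G₀, hG₀, huniq⟩ := hD.1 y hy
  -- every b ∈ B is in the bad set
  have hmemA : ∀ b ∈ B, ∃ F : Finset ℕ, ∃ g : ℕ,
      Represents D F b ∧ g ∈ F ∩ G₀ := by
    intro b hb
    have hbFS : b ∈ FS B := ⟨{b}, Finset.singleton_nonempty b, by simpa using hb, by simp⟩
    obtain ⟨-, F, G, hF, hG, hFG⟩ := hsub hbFS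
    obtain ⟨g, hg⟩ := hFG
    refine ⟨F, g, hF, ?_⟩
    have : G = G₀ := huniq G hG
    simpa [this] using hg
  -- total choice functions
  have hchoice : ∀ b : ℕ, ∃ p : Finset ℕ × ℕ, b ∈ B →
      Represents D p.1 b ∧ p.2 ∈ p.1 ∩ G₀ := by
    intro b
    by_cases hb : b ∈ B
    · obtain ⟨F, g, h1, h2⟩ := hmemA b hb
      exact ⟨(F, g), fun _ => ⟨h1, h2⟩⟩
    · exact ⟨(∅, 0), fun h => absurd h hb⟩
  choose p hp using hchoice
  -- pigeonhole on G₀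
  have hmaps : Set.MapsTo (fun b => (p b).2) B ↑G₀ := by
    intro b hb
    have := (hp b hb).2
    simp only [Finset.mem_inter] at this
    exact this.2
  obtain ⟨b₁, hb₁, b₂, hb₂, hne, heq⟩ :=
    hB.exists_ne_map_eq_of_mapsTo hmaps G₀.finite_toSet
  -- b₁ + b₂ ∉ FS D by very sparseness
  have h1 := hp b₁ hb₁
  have h2 := hp b₂ hb₂
  have hg₁ : (p b₁).2 ∈ (p b₁).1 := (Finset.mem_inter.1 h1.2).1
  have hg₂ : (p b₁).2 ∈ (p b₂).1 := by
    have := (Finset.mem_inter.1 h2.2).1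
    rwa [← heq] at this
  have hnot : b₁ + b₂ ∉ FS D :=
    hD.2 b₁ b₂ (p b₁).1 (p b₂).1 h1.1 h2.1
      ⟨(p b₁).2, Finset.mem_inter.2 ⟨hg₁, hg₂⟩⟩
  -- but b₁ + b₂ ∈ FS B ⊆ A ⊆ FS D
  have hsum : b₁ + b₂ ∈ FS B := by
    refine ⟨{b₁, b₂}, ⟨b₁, by simp⟩, ?_, ?_⟩
    · intro x hx
      simp only [Finset.coe_insert, Finset.coe_singleton, Set.mem_insert_iff,
        Set.mem_singleton_iff] at hx
      rcases hx with h | h <;> subst h <;> assumption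
    · rw [Finset.sum_pair hne]; rfl
  exact hnot (hsub hsum).1
end

section
/- The Hindman ideal is tall: every infinite set A ⊆ ℕ has an infinite subset B ⊆ A such that B contains no set of the form FS(C) for infinite C. -/
theorem hindman_ideal_tall :
    ∀ A : Set ℕ, A.Infinite →
      ∃ B : Set ℕ, B ⊆ A ∧ B.Infinite ∧ InHindman B := by
  intro A hA
  have hgt : ∀ n : ℕ, ∃ a, a ∈ A ∧ n < a := by
    intro n
    obtain ⟨a, ha, hn⟩ := hA.exists_gt n
    exact ⟨a, ha, hn⟩
  -- build a fast-growing sequence in A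
  let f : ℕ → ℕ := fun n =>
    Nat.rec (Classical.choose (hgt 0))
      (fun _ fn => Classical.choose (hgt (2 * fn))) n
  have hf0 : f 0 ∈ A ∧ 0 < f 0 := Classical.choose_spec (hgt 0)
  have hfs : ∀ n, f (n + 1) ∈ A ∧ 2 * f n < f (n + 1) := fun n =>
    Classical.choose_spec (hgt (2 * f n))
  have hfA : ∀ n, f n ∈ A := by
    intro n; cases n with
    | zero => exact hf0.1
    | succ m => exact (hfs m).1
  have hmono : StrictMono f := by
    apply strictMono_nat_of_lt_succ
    intro n
    have := (hfs n).2
    omega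
  have hpos : ∀ n, 0 < f n := by
    intro n
    have := hmono.monotone (Nat.zero_le n)
    have := hf0.2
    omega
  -- sum-freeness
  have hsf : ∀ i j k, f i + f j ≠ f k := by
    intro i j k h
    rcases le_total (f i) (f j) with hle | hle
    · have hjk : j < k := hmono.lt_iff_lt.mp (by have := hpos i; omega)
      have h1 : f (j + 1) ≤ f k := hmono.monotone hjk
      have h2 : 2 * f j < f (j + 1) := (hfs j).2
      omega
    · have hik : i < k := hmono.lt_iff_lt.mp (by have := hpos j; omega)
      have h1 : f (i + 1) ≤ f k := hmono.monotone hik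
      have h2 : 2 * f i < f (i + 1) := (hfs i).2
      omega
  refine ⟨Set.range f, ?_, ?_, ?_⟩
  · rintro x ⟨n, rfl⟩; exact hfA n
  · exact Set.infinite_range_of_injective hmono.injective
  · intro C hC hsub
    obtain ⟨c₁, hc₁⟩ := hC.nonempty
    obtain ⟨c₂, hc₂, hlt⟩ := hC.exists_gt c₁
    have h1 : c₁ ∈ FS C := ⟨{c₁}, Finset.singleton_nonempty _, by simpa, by simp⟩
    have h2 : c₂ ∈ FS C := ⟨{c₂}, Finset.singleton_nonempty _, by simpa, by simp⟩
    have h12 : c₁ + c₂ ∈ FS C := by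
      refine ⟨{c₁, c₂}, ⟨c₁, by simp⟩, ?_, ?_⟩
      · intro x hx
        simp only [Finset.coe_insert, Finset.coe_singleton, Set.mem_insert_iff,
          Set.mem_singleton_iff] at hx
        rcases hx with rfl | rfl
        · exact hc₁
        · exact hc₂
      · rw [Finset.sum_pair (Nat.ne_of_lt hlt)]; rfl
    obtain ⟨i, hi⟩ := hsub h1
    obtain ⟨j, hj⟩ := hsub h2
    obtain ⟨k, hk⟩ := hsub h12
    exact hsf i j k (by rw [hi, hj, hk])
end

section
/- The ideal Fin² is Katětov below the Hindman ideal: there exists a function f : ℕ → ℕ×ℕ such that f⁻¹[C] belongs to the Hindman ideal for every C ∈ Fin². -/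
/-- Membership in the ideal Fin² on ℕ × ℕ. -/
def InFinSq (C : Set (ℕ × ℕ)) : Prop :=
  {n : ℕ | {k : ℕ | (n, k) ∈ C}.Infinite}.Finite

private lemma pv_eq {x n : ℕ} (h1 : 2 ^ n ∣ x) (h2 : ¬ 2 ^ (n + 1) ∣ x) :
    padicValNat 2 x = n := by
  have hx : x ≠ 0 := by rintro rfl; exact h2 (dvd_zero _)
  have h1' := (padicValNat_dvd_iff_le (p := 2) hx).mp h1
  have h2' : ¬ (n + 1 ≤ padicValNat 2 x) := fun h =>
    h2 ((padicValNat_dvd_iff_le (p := 2) hx).mpr h)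
  omega

private lemma pv_of_mod {x y m n : ℕ} (hnm : n < m) (hxy : x % 2 ^ m = y % 2 ^ m)
    (hy1 : 2 ^ n ∣ y) (hy2 : ¬ 2 ^ (n + 1) ∣ y) : padicValNat 2 x = n := by
  have key : ∀ k, k ≤ m → (2 ^ k ∣ x ↔ 2 ^ k ∣ y) := by
    intro k hk
    have hd : (2 : ℕ) ^ k ∣ 2 ^ m := pow_dvd_pow 2 hk
    rw [Nat.dvd_iff_mod_eq_zero, Nat.dvd_iff_mod_eq_zero, ← Nat.mod_mod_of_dvd x hd,
      ← Nat.mod_mod_of_dvd y hd, hxy]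
  exact pv_eq ((key n hnm.le).mpr hy1) (fun h => hy2 ((key (n + 1) hnm).mp h))

private lemma sum_mod_card (M c : ℕ) (F : Finset ℕ) (h : ∀ b ∈ F, b % M = c % M) :
    F.sum id % M = (F.card * c) % M := by
  classical
  induction F using Finset.induction_on with
  | empty => simp
  | @insert a s ha ih =>
    have h1 : a % M = c % M := h a (Finset.mem_insert_self _ _)
    have h2 := ih (fun b hb => h b (Finset.mem_insert_of_mem hb))
    rw [Finset.sum_insert ha, Finset.card_insert_of_notMem ha]
    have hadd : (a + s.sum id) % M = (c + s.card * c) % M := by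
      rw [Nat.add_mod, h1, h2, ← Nat.add_mod]
    have he : (s.card + 1) * c = c + s.card * c := by ring
    simpa [he] using hadd

private lemma exists_infinite_mod {B : Set ℕ} (hB : B.Infinite) {M : ℕ} (hM : 0 < M) :
    ∃ c, {b ∈ B | b % M = c}.Infinite := by
  by_contra h
  push_neg at h
  apply hB
  have hsub : B ⊆ ⋃ c ∈ Finset.range M, {b ∈ B | b % M = c} := by
    intro b hb
    simp only [Set.mem_iUnion, Set.mem_setOf_eq, Finset.mem_range]
    exact ⟨b % M, Nat.mod_lt _ hM, hb, rfl⟩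
  exact ((Set.Finite.biUnion (Finset.range M).finite_toSet fun c _ => h c)).subset hsub

private lemma key_lemma (B : Set ℕ) (hB : B.Infinite) (N : ℕ) :
    ∃ n, N ≤ n ∧ {x ∈ FS B | padicValNat 2 x = n}.Infinite := by
  classical
  set M := 2 * N + 2 with hMdef
  obtain ⟨c, hc⟩ := exists_infinite_mod hB (pow_pos (by norm_num : (0:ℕ) < 2) M)
  set B₂ := {b ∈ B | b % 2 ^ M = c} with hB₂def
  have hB₂B : B₂ ⊆ B := fun b hb => hb.1
  have hcc : c % 2 ^ M = c := by
    obtain ⟨b, hb⟩ := hc.nonempty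
    rw [← hb.2, Nat.mod_mod_of_dvd b dvd_rfl]
  by_cases hc0 : c % 2 ^ (N + 1) = 0
  · -- all elements of B₂ are divisible by 2^(N+1)
    have hdvd : ∀ b ∈ B₂, 2 ^ (N + 1) ∣ b := by
      intro b hb
      have hNM : (2:ℕ) ^ (N + 1) ∣ 2 ^ M := pow_dvd_pow 2 (by omega)
      rw [Nat.dvd_iff_mod_eq_zero, ← Nat.mod_mod_of_dvd b hNM, hb.2, hc0]
    have hB₂' : (B₂ \ {0}).Infinite := hc.diff (Set.finite_singleton 0)
    by_cases hfib : ∃ n, {b ∈ B₂ \ {0} | padicValNat 2 b = n}.Infinite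
    · obtain ⟨n, hn⟩ := hfib
      obtain ⟨b, hb⟩ := hn.nonempty
      have hbne : b ≠ 0 := hb.1.2
      have hle : N + 1 ≤ n := by
        rw [← hb.2]
        exact (padicValNat_dvd_iff_le (p := 2) hbne).mp (hdvd b hb.1.1)
      refine ⟨n, by omega, hn.mono ?_⟩
      rintro x ⟨⟨hxB₂, _⟩, hxv⟩
      exact ⟨⟨{x}, Finset.singleton_nonempty x, by simpa using hB₂B hxB₂, by simp⟩, hxv⟩
    · push_neg at hfib
      obtain ⟨b₀, hb₀⟩ := hB₂'.nonempty
      have hb₀ne : b₀ ≠ 0 := hb₀.2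
      set n := padicValNat 2 b₀ with hndef
      have hn : N + 1 ≤ n := (padicValNat_dvd_iff_le (p := 2) hb₀ne).mp (hdvd b₀ hb₀.1)
      have hb₀dv : 2 ^ n ∣ b₀ := pow_padicValNat_dvd
      have hb₀ndv : ¬ 2 ^ (n + 1) ∣ b₀ := pow_succ_padicValNat_not_dvd hb₀ne
      have hT : (⋃ i ∈ Finset.range (n + 1), {b ∈ B₂ \ {0} | padicValNat 2 b = i}).Finite :=
        Set.Finite.biUnion (Finset.range (n + 1)).finite_toSet fun i _ => hfib i
      have hB₃ : ((B₂ \ {0}) \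
          ((⋃ i ∈ Finset.range (n + 1), {b ∈ B₂ \ {0} | padicValNat 2 b = i}) ∪ {b₀})).Infinite :=
        hB₂'.diff (hT.union (Set.finite_singleton b₀))
      refine ⟨n, by omega, ?_⟩
      have hinj : Set.InjOn (fun b => b₀ + b) ((B₂ \ {0}) \
          ((⋃ i ∈ Finset.range (n + 1), {b ∈ B₂ \ {0} | padicValNat 2 b = i}) ∪ {b₀})) :=
        fun a _ b _ h => by dsimp at h; omega
      refine (hB₃.image hinj).mono ?_
      rintro x ⟨b', hb', rfl⟩
      obtain ⟨hb'B₂', hb'nT⟩ := hb'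
      have hb'ne : b' ≠ b₀ := fun h => hb'nT (Or.inr (by simp [h]))
      have hb'big : n + 1 ≤ padicValNat 2 b' := by
        by_contra h
        exact hb'nT (Or.inl (by
          simp only [Set.mem_iUnion, Finset.mem_range]
          exact ⟨padicValNat 2 b', by omega, hb'B₂', rfl⟩))
      have hb'dv : 2 ^ (n + 1) ∣ b' :=
        dvd_trans (pow_dvd_pow 2 hb'big) pow_padicValNat_dvd
      have hx1 : 2 ^ n ∣ b₀ + b' :=
        dvd_add hb₀dv (dvd_trans (pow_dvd_pow 2 (by omega)) hb'dv)
      have hx2 : ¬ 2 ^ (n + 1) ∣ b₀ + b' := by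
        intro h
        exact hb₀ndv (by
          have := Nat.dvd_sub h hb'dv
          simpa using this)
      refine ⟨⟨{b₀, b'}, Finset.insert_nonempty _ _, ?_, ?_⟩, pv_eq hx1 hx2⟩
      · intro z hz
        simp only [Finset.coe_insert, Finset.coe_singleton, Set.mem_insert_iff,
          Set.mem_singleton_iff] at hz
        rcases hz with rfl | rfl
        · exact hB₂B hb₀.1
        · exact hB₂B hb'B₂'.1
      · rw [Finset.sum_pair (fun h => hb'ne h.symm)]
        rfl
  · -- c has 2-adic valuation v ≤ N
    have hcne : c ≠ 0 := fun h => hc0 (by simp [h])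
    set v := padicValNat 2 c with hvdef
    have hdv : 2 ^ v ∣ c := pow_padicValNat_dvd
    have hndv : ¬ 2 ^ (v + 1) ∣ c := pow_succ_padicValNat_not_dvd hcne
    have hvN : v ≤ N := by
      by_contra h
      apply hc0
      rw [← Nat.dvd_iff_mod_eq_zero]
      exact dvd_trans (pow_dvd_pow 2 (by omega)) hdv
    set j := N - v with hjdef
    have hjv : j + v = N := by omega
    obtain ⟨F₀, hF₀sub, hF₀card⟩ := hc.exists_subset_card_eq (2 ^ j - 1)
    have hB₃ : (B₂ \ ↑F₀).Infinite := hc.diff F₀.finite_toSet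
    refine ⟨N, le_refl N, ?_⟩
    have hinj : Set.InjOn (fun b => F₀.sum id + b) (B₂ \ ↑F₀) := fun a _ b _ h => by dsimp at h; omega
    refine (hB₃.image hinj).mono ?_
    rintro x ⟨b', hb', rfl⟩
    obtain ⟨hb'B₂, hb'nF₀⟩ := hb'
    have hb'notmem : b' ∉ F₀ := fun h => hb'nF₀ (Finset.mem_coe.mpr h)
    set F := insert b' F₀ with hFdef
    have hFcard : F.card = 2 ^ j := by
      rw [Finset.card_insert_of_notMem hb'notmem, hF₀card]
      have : 0 < 2 ^ j := pow_pos (by norm_num) j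
      omega
    have hFsub : ↑F ⊆ B := by
      intro z hz
      simp only [hFdef, Finset.coe_insert, Set.mem_insert_iff] at hz
      rcases hz with rfl | hz
      · exact hB₂B hb'B₂
      · exact hB₂B (hF₀sub hz)
    have hFsum : F.sum id = F₀.sum id + b' := by
      rw [Finset.sum_insert hb'notmem]
      simp [Nat.add_comm]
    have hmod : ∀ b ∈ F, b % 2 ^ M = c % 2 ^ M := by
      intro b hb
      have hbB₂ : b ∈ B₂ := by
        simp only [hFdef, Finset.mem_insert] at hb
        rcases hb with rfl | hb
        · exact hb'B₂
        · exact hF₀sub (Finset.mem_coe.mpr hb)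
      rw [hbB₂.2, hcc]
    have hsummod : F.sum id % 2 ^ M = (2 ^ j * c) % 2 ^ M := by
      rw [sum_mod_card (2 ^ M) c F hmod, hFcard]
    have hy1 : 2 ^ N ∣ 2 ^ j * c := by
      rw [← hjv, pow_add]
      exact mul_dvd_mul_left _ hdv
    have hy2 : ¬ 2 ^ (N + 1) ∣ 2 ^ j * c := by
      intro h
      apply hndv
      have hrw : (2:ℕ) ^ (N + 1) = 2 ^ j * 2 ^ (v + 1) := by
        rw [← pow_add]
        congr 1
        omega
      rw [hrw] at h
      exact (Nat.mul_dvd_mul_iff_left (pow_pos (by norm_num : (0:ℕ) < 2) j)).mp h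
    have hval : padicValNat 2 (F₀.sum id + b') = N := by
      apply pv_of_mod (m := M) (y := 2 ^ j * c) (by omega) _ hy1 hy2
      rw [← hFsum]
      exact hsummod
    exact ⟨⟨F, ⟨b', Finset.mem_insert_self _ _⟩, hFsub, hFsum⟩, hval⟩

theorem finsq_katetov_below_hindman :
    ∃ f : ℕ → ℕ × ℕ, ∀ C : Set (ℕ × ℕ), InFinSq C → InHindman (f ⁻¹' C) := by
  refine ⟨fun x => (padicValNat 2 x, x), fun C hC B hB hsub => ?_⟩
  have hE : {n | {x ∈ FS B | padicValNat 2 x = n}.Infinite}.Infinite := by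
    apply Set.infinite_of_forall_exists_gt
    intro a
    obtain ⟨n, hn, h⟩ := key_lemma B hB (a + 1)
    exact ⟨n, h, by omega⟩
  have hEsub : {n | {x ∈ FS B | padicValNat 2 x = n}.Infinite} ⊆
      {n : ℕ | {k : ℕ | (n, k) ∈ C}.Infinite} := by
    intro n hn
    refine hn.mono ?_
    rintro x ⟨hxFS, hxv⟩
    have := hsub hxFS
    simp only [Set.mem_preimage] at this
    rw [hxv] at this
    exact this
  exact hE (hC.subset hEsub)
end

section
/- The ideal Fin² is Katětov below the Ramsey ideal: there exists a function f : [ℕ]² → ℕ×ℕ such that f⁻¹[C] belongs to the Ramsey ideal for every C ∈ Fin². -/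
/-- The set of unordered pairs of distinct elements of `H`. -/
def pairsOf (H : Set ℕ) : Set (Sym2 ℕ) :=
  {p | ∃ a b, a ≠ b ∧ a ∈ H ∧ b ∈ H ∧ p = Sym2.mk a b}

/-- Membership in the Ramsey ideal. -/
def InRamsey (A : Set (Sym2 ℕ)) : Prop :=
  ∀ H : Set ℕ, H.Infinite → ¬ pairsOf H ⊆ A

theorem finsq_katetov_below_ramsey :
    ∃ f : Sym2 ℕ → ℕ × ℕ, ∀ C : Set (ℕ × ℕ), InFinSq C → InRamsey (f ⁻¹' C) := by
  refine ⟨Sym2.lift ⟨fun a b => (min a b, max a b), by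
    intro a b; simp [min_comm, max_comm]⟩, ?_⟩
  intro C hC H hH hsub
  -- pick a ∈ H with finite section
  obtain ⟨a, haH, haF⟩ := ((hH.diff hC).nonempty)
  have hsec : {k : ℕ | (a, k) ∈ C}.Finite := by
    by_contra h
    exact haF (by simpa [InFinSq] using h)
  -- pick b ∈ H, b ∉ section, b > a
  have hinf : (H \ ({k : ℕ | (a, k) ∈ C} ∪ {k | k ≤ a})).Infinite :=
    hH.diff (hsec.union (Set.finite_le_nat a))
  obtain ⟨b, hbH, hb⟩ := hinf.nonempty
  simp only [Set.mem_union, Set.mem_setOf_eq, not_or, not_le] at hb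
  obtain ⟨hbC, hab⟩ := hb
  have hpair : Sym2.mk a b ∈ pairsOf H :=
    ⟨a, b, hab.ne, haH, hbH, rfl⟩
  have := hsub hpair
  simp only [Set.mem_preimage, Sym2.lift_mk] at this
  rw [min_eq_left hab.le, max_eq_right hab.le] at this
  exact hbC this
end

section
/- If B ⊆ ℕ is not in the Hindman ideal (i.e., FS(C) ⊆ B for some infinite C), then there exists k ∈ ℕ such that B ∩ {2^k(2n+1) : n ∈ ℕ} is infinite. -/
/-- Every nonzero natural is `2^v * (2n+1)` where `v` is its 2-adic valuation. -/
lemma exists_odd_part (m : ℕ) (hm : m ≠ 0) :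
    ∃ n : ℕ, m = 2 ^ (padicValNat 2 m) * (2 * n + 1) := by
  haveI : Fact (Nat.Prime 2) := ⟨Nat.prime_two⟩
  set K := padicValNat 2 m with hK
  obtain ⟨t, ht⟩ := pow_padicValNat_dvd (p := 2) (n := m)
  rw [← hK] at ht
  have hodd : Odd t := by
    rw [Nat.odd_iff, ← Nat.two_dvd_ne_zero]
    rintro ⟨s, hs⟩
    refine pow_succ_padicValNat_not_dvd (p := 2) hm ⟨s, ?_⟩
    rw [← hK, ht, hs]; ring
  obtain ⟨n, hn⟩ := hodd
  exact ⟨n, by rw [ht, hn]⟩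

lemma singleton_mem_FS {C : Set ℕ} {c : ℕ} (hc : c ∈ C) : c ∈ FS C :=
  ⟨{c}, Finset.singleton_nonempty c, by simpa, by simp⟩

theorem not_hindman_meets_some_Ak (B : Set ℕ)
    (hB : ∃ C : Set ℕ, C.Infinite ∧ FS C ⊆ B) :
    ∃ k : ℕ, (B ∩ {m : ℕ | ∃ n : ℕ, m = 2 ^ k * (2 * n + 1)}).Infinite := by
  obtain ⟨C, hCinf, hCB⟩ := hB
  haveI : Fact (Nat.Prime 2) := ⟨Nat.prime_two⟩
  set v : ℕ → ℕ := padicValNat 2 with hv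
  have hC' : (C \ {0}).Infinite := hCinf.diff (Set.finite_singleton 0)
  by_cases hcase : ∃ k : ℕ, {c ∈ C \ {0} | v c = k}.Infinite
  · obtain ⟨k, hk⟩ := hcase
    refine ⟨k, hk.mono ?_⟩
    rintro c ⟨⟨hcC, hc0⟩, hvc⟩
    refine ⟨hCB (singleton_mem_FS hcC), ?_⟩
    obtain ⟨n, hn⟩ := exists_odd_part c (by simpa using hc0)
    exact ⟨n, by rw [← hvc, hv]; exact hn⟩
  · push_neg at hcase
    -- pick some nonzero element c0 of C
    obtain ⟨c0, hc0C, hc00⟩ := hC'.nonempty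
    set k := v c0 with hk
    -- elements of C \ {0} with valuation ≤ k form a finite set
    have hfin : {c ∈ C \ {0} | v c ≤ k}.Finite := by
      have : {c ∈ C \ {0} | v c ≤ k} ⊆ ⋃ j ∈ Finset.range (k + 1), {c ∈ C \ {0} | v c = j} := by
        rintro c ⟨hc, hvc⟩
        have hj : v c ∈ (↑(Finset.range (k + 1)) : Set ℕ) := by
          simp only [Finset.coe_range, Set.mem_Iio]; omega
        exact Set.mem_biUnion hj ⟨hc, rfl⟩
      exact (Set.Finite.biUnion (Finset.range (k + 1)).finite_toSet
        fun j _ => hcase j).subset this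
    set D := (C \ {0}) \ {c ∈ C \ {0} | v c ≤ k} with hD
    have hDinf : D.Infinite := hC'.diff hfin
    have hDprop : ∀ c ∈ D, c ∈ C ∧ c ≠ 0 ∧ k < v c := by
      rintro c ⟨⟨hcC, hc0⟩, hnot⟩
      refine ⟨hcC, by simpa using hc0, ?_⟩
      by_contra h
      exact hnot ⟨⟨hcC, hc0⟩, by omega⟩
    refine ⟨k, Set.Infinite.mono ?_ (hDinf.image (f := fun c => c0 + c)
      (fun a _ b _ h => by exact Nat.add_left_cancel h))⟩
    rintro x ⟨c, hcD, rfl⟩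
    obtain ⟨hcC, hc0, hkv⟩ := hDprop c hcD
    -- c0 + c ∈ FS C
    have hkk : v c0 < v c := hkv
    have hne : c0 ≠ c := by intro h; rw [h] at hkk; exact lt_irrefl _ hkk
    have hmem : c0 + c ∈ FS C := by
      refine ⟨{c0, c}, ⟨c0, by simp⟩, ?_, ?_⟩
      · intro x hx
        simp only [Finset.coe_insert, Finset.coe_singleton, Set.mem_insert_iff,
          Set.mem_singleton_iff] at hx
        rcases hx with rfl | rfl <;> assumption
      · rw [Finset.sum_pair hne]; rfl
    refine ⟨hCB hmem, ?_⟩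
    -- c0 = 2^k * (2a+1), 2^(k+1) ∣ c
    obtain ⟨a, ha⟩ := exists_odd_part c0 (by simpa using hc00)
    have hdvd : 2 ^ (k + 1) ∣ c := dvd_trans (pow_dvd_pow 2 hkv) pow_padicValNat_dvd
    obtain ⟨b, hb⟩ := hdvd
    have ha' : c0 = 2 ^ k * (2 * a + 1) := by rw [hk, hv]; exact ha
    exact ⟨a + b, by show c0 + c = _; rw [ha', hb]; ring⟩
end

section
/- The summable ideal is not Katětov below the van der Waerden ideal: for every function φ : ℕ → ℕ there exists A ⊆ ℕ such that A contains arithmetic progressions of arbitrary finite length while ∑_{y ∈ φ[A]} 1/(y+1) < ∞. -/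
/-- Membership in the summable ideal. -/
def InSummable (A : Set ℕ) : Prop :=
  Summable (fun n : A => (1 : ℝ) / ((n : ℕ) + 1))

/-- `A` contains an arithmetic progression of length `k`. -/
def HasAP (A : Set ℕ) (k : ℕ) : Prop :=
  ∃ a d : ℕ, 0 < d ∧ ∀ i < k, a + i * d ∈ A

/-- Van der Waerden for `ℕ` with `Bool` colors. -/
lemma vdw_nat (C : ℕ → Bool) (L : ℕ) :
    ∃ d > 0, ∃ b c, ∀ i < L, C (b + i * d) = c := by
  obtain ⟨a, ha, b, c, hc⟩ := Combinatorics.exists_mono_homothetic_copy (Finset.range L) C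
  refine ⟨a, ha, b, c, fun i hi => ?_⟩
  have := hc i (Finset.mem_range.2 hi)
  simpa [smul_eq_mul, Nat.mul_comm, Nat.add_comm] using this

theorem summable_not_katetov_below_vdw :
    ∀ φ : ℕ → ℕ, ∃ A : Set ℕ, (∀ k : ℕ, HasAP A k) ∧ InSummable (φ '' A) := by
  intro φ
  by_cases h : ∃ m, ∀ k, HasAP {x | φ x ≤ m} k
  · obtain ⟨m, hm⟩ := h
    refine ⟨{x | φ x ≤ m}, hm, ?_⟩
    have hfin : (φ '' {x | φ x ≤ m}).Finite := by
      apply (Set.finite_Iic m).subset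
      rintro y ⟨x, hx, rfl⟩
      exact hx
    haveI := hfin.to_subtype
    exact summable_of_finite_support (Set.toFinite _)
  · push_neg at h
    set M : ℕ → ℕ := fun k => (k + 1) * 2 ^ k with hM
    have key : ∀ k, ∃ a d, 0 < d ∧ ∀ i < k, M k < φ (a + i * d) := by
      intro k
      obtain ⟨k₀, hk₀⟩ := h (M k)
      obtain ⟨d, hd, b, c, hc⟩ := vdw_nat (fun x => decide (φ x ≤ M k)) (k + k₀)
      cases c with
      | true =>
        exfalso
        apply hk₀
        refine ⟨b, d, hd, fun i hi => ?_⟩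
        have := hc i (by omega)
        simpa using this
      | false =>
        refine ⟨b, d, hd, fun i hi => ?_⟩
        have := hc i (by omega)
        simp only [decide_eq_false_iff_not, not_le] at this
        exact this
    choose a d hd hφ using key
    set A : Set ℕ := ⋃ k, {n | ∃ i < k, n = a k + i * d k} with hA
    refine ⟨A, ?_, ?_⟩
    · intro k
      exact ⟨a k, d k, hd k, fun i hi => Set.mem_iUnion.2 ⟨k, ⟨i, hi, rfl⟩⟩⟩
    · -- summability
      have hmem : ∀ y : ↥(φ '' A), ∃ k, ∃ i, i < k ∧ (y : ℕ) = φ (a k + i * d k) := by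
        rintro ⟨y, x, hx, rfl⟩
        obtain ⟨k, i, hi, rfl⟩ := Set.mem_iUnion.1 hx
        exact ⟨k, i, hi, rfl⟩
      choose K I hI hKI using hmem
      have hbig : ∀ y : ↥(φ '' A), M (K y) < (y : ℕ) := by
        intro y
        rw [hKI y]
        exact hφ _ _ (hI y)
      apply summable_of_sum_le (c := (2 : ℝ))
      · intro y
        positivity
      · intro u
        classical
        have hmaps : ∀ y ∈ u, K y ∈ Finset.range (u.sup K + 1) :=
          fun y hy => Finset.mem_range.2 (Nat.lt_succ_of_le (Finset.le_sup hy))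
        rw [← Finset.sum_fiberwise_of_maps_to hmaps]
        have hinner : ∀ k ∈ Finset.range (u.sup K + 1),
            (∑ y ∈ u.filter (fun y => K y = k), (1 : ℝ) / ((y : ℕ) + 1)) ≤ (1 / 2) ^ k := by
          intro k _
          have hcard : (u.filter (fun y => K y = k)).card ≤ k := by
            have : Set.InjOn I ↑(u.filter (fun y => K y = k)) := by
              intro y1 h1 y2 h2 hI12
              simp only [Finset.coe_filter, Set.mem_setOf_eq] at h1 h2
              have e1 := hKI y1
              have e2 := hKI y2
              rw [h1.2] at e1
              rw [h2.2] at e2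
              exact Subtype.ext (by rw [e1, e2, hI12])
            calc (u.filter (fun y => K y = k)).card
                ≤ (Finset.range k).card := by
                  apply Finset.card_le_card_of_injOn I ?_ this
                  intro y hy
                  simp only [Finset.mem_coe, Finset.mem_filter] at hy
                  exact Finset.mem_range.2 (hy.2 ▸ hI y)
              _ = k := Finset.card_range k
          have hterm : ∀ y ∈ u.filter (fun y => K y = k),
              (1 : ℝ) / ((y : ℕ) + 1) ≤ 1 / ((k + 1) * 2 ^ k) := by
            intro y hy
            simp only [Finset.mem_filter] at hy
            have hb := hbig y
            rw [hy.2] at hb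
            have hMk : ((k + 1) * 2 ^ k : ℝ) ≤ ((y : ℕ) : ℝ) + 1 := by
              have : (k + 1) * 2 ^ k ≤ (y : ℕ) + 1 := by
                have := hb
                simp only [hM] at this
                omega
              exact_mod_cast this
            apply one_div_le_one_div_of_le
            · positivity
            · exact hMk
          calc (∑ y ∈ u.filter (fun y => K y = k), (1 : ℝ) / ((y : ℕ) + 1))
              ≤ (u.filter (fun y => K y = k)).card • ((1 : ℝ) / ((k + 1) * 2 ^ k)) :=
                Finset.sum_le_card_nsmul _ _ _ hterm
            _ ≤ (k : ℝ) * (1 / ((k + 1) * 2 ^ k)) := by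
                rw [nsmul_eq_mul]
                apply mul_le_mul_of_nonneg_right
                · exact_mod_cast hcard
                · positivity
            _ ≤ (1 / 2) ^ k := by
                rw [div_pow, one_pow]
                rw [mul_one_div, div_le_div_iff₀ (by positivity) (by positivity)]
                have : (k : ℝ) ≤ k + 1 := by linarith
                calc (k : ℝ) * 2 ^ k ≤ (k + 1) * 2 ^ k := by nlinarith [pow_pos (by norm_num : (0:ℝ) < 2) k]
                  _ = 1 * ((k + 1) * 2 ^ k) := by ring
        calc (∑ k ∈ Finset.range (u.sup K + 1), ∑ y ∈ u.filter (fun y => K y = k),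
                (1 : ℝ) / ((y : ℕ) + 1))
            ≤ ∑ k ∈ Finset.range (u.sup K + 1), (1 / 2 : ℝ) ^ k :=
              Finset.sum_le_sum hinner
          _ ≤ 2 := sum_geometric_two_le _
end

section
/- The summable ideal is not Katětov below the Hindman ideal: for every function φ : ℕ → ℕ there exists an infinite set D ⊆ ℕ such that ∑_{y ∈ φ[FS(D)]} 1/(y+1) < ∞. -/
namespace SNKH

open Finset in
/-- Every element of a stream `FS` is a sum of entries over a nonempty finite index set. -/
theorem fs_repr {a : Stream' ℕ} {x : ℕ} (h : x ∈ Hindman.FS a) :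
    ∃ F : Finset ℕ, F.Nonempty ∧ ∑ i ∈ F, a.get i = x := by
  induction h with
  | head' a => exact ⟨{0}, ⟨0, by simp⟩, by simp⟩
  | tail' a m h ih =>
      obtain ⟨F, hne, hsum⟩ := ih
      refine ⟨F.image (· + 1), hne.image _, ?_⟩
      rw [Finset.sum_image (by intro x _ y _ h; simp only at h; omega)]
      simpa using hsum
  | cons' a m h ih =>
      obtain ⟨F, hne, hsum⟩ := ih
      refine ⟨insert 0 (F.image (· + 1)), ⟨0, Finset.mem_insert_self _ _⟩, ?_⟩
      rw [Finset.sum_insert (by simp), Finset.sum_image (by intro x _ y _ h; simp only at h; omega)]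
      have : a.get 0 = a.head := rfl
      simp only [Stream'.get_tail] at hsum ⊢
      rw [this, hsum]

/-- A single Hindman refinement: for a function `p` and bound `b`, pass to a sub-FS-system on
which `p` is either constantly some `v < b` or everywhere `≥ b`. -/
theorem refineOne (p : ℕ → ℕ) (a : Stream' ℕ) (b : ℕ) :
    ∃ a' : Stream' ℕ, Hindman.FS a' ⊆ Hindman.FS a ∧
      ((∃ v, v < b ∧ ∀ x ∈ Hindman.FS a', p x = v) ∨ ∀ x ∈ Hindman.FS a', b ≤ p x) := by
  set cells : Set (Set ℕ) := (fun j => {x | x ∈ Hindman.FS a ∧ min (p x) b = j}) '' Set.Iic b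
    with hcells
  have fin : cells.Finite := (Set.finite_Iic b).image _
  have cov : Hindman.FS a ⊆ ⋃₀ cells := by
    intro x hx
    exact ⟨_, ⟨min (p x) b, Set.mem_Iic.mpr (min_le_right _ _), rfl⟩, hx, rfl⟩
  obtain ⟨c, hc, a', ha'⟩ := Hindman.FS_partition_regular a cells fin cov
  obtain ⟨j, hj, rfl⟩ := hc
  refine ⟨a', fun x hx => (ha' hx).1, ?_⟩
  rcases lt_or_eq_of_le (Set.mem_Iic.mp hj) with hjb | rfl
  · left
    refine ⟨j, hjb, fun x hx => ?_⟩
    have hm := (ha' hx).2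
    rcases le_total (p x) b with h | h
    · rwa [min_eq_left h] at hm
    · rw [min_eq_right h] at hm; omega
  · right
    intro x hx
    have hm := (ha' hx).2
    exact min_eq_right_iff.mp hm

open Finset in
/-- Iterated refinement over a finite set of shifts. -/
theorem refineFinset (φ : ℕ → ℕ) (b low : ℕ) (T : Finset ℕ) (S : Finset ℕ) :
    ∀ a : Stream' ℕ, (∀ s ∈ S, ∀ x ∈ Hindman.FS a, φ (x + s) ∈ T ∨ low ≤ φ (x + s)) →
      ∃ (a' : Stream' ℕ) (E : Finset ℕ), Hindman.FS a' ⊆ Hindman.FS a ∧ E.card ≤ S.card ∧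
        (∀ v ∈ E, low ≤ v) ∧
        ∀ s ∈ S, ∀ x ∈ Hindman.FS a', φ (x + s) ∈ T ∪ E ∨ b ≤ φ (x + s) := by
  classical
  induction S using Finset.induction with
  | empty =>
      intro a _
      exact ⟨a, ∅, subset_rfl, by simp, by simp, by simp⟩
  | @insert s S hs ih =>
      intro a hinv
      obtain ⟨a1, E1, h1sub, h1card, h1low, h1inv⟩ :=
        ih a (fun t ht x hx => hinv t (Finset.mem_insert_of_mem ht) x hx)
      obtain ⟨a2, h2sub, h2⟩ := refineOne (fun x => φ (x + s)) a1 b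
      have hsubsub : Hindman.FS a2 ⊆ Hindman.FS a := fun x hx => h1sub (h2sub hx)
      rcases h2 with ⟨v, hvb, hvconst⟩ | hbig
      · by_cases hvT : v ∈ T ∪ E1
        · refine ⟨a2, E1, hsubsub, h1card.trans (by simp [Finset.card_insert_of_notMem hs]),
            h1low, ?_⟩
          intro t ht x hx
          rcases Finset.mem_insert.mp ht with rfl | ht'
          · left; rw [hvconst x hx]; exact hvT
          · exact h1inv t ht' x (h2sub hx)
        · have hhead : a2.head ∈ Hindman.FS a2 := Hindman.FS.head a2
          have hlowv : low ≤ v := by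
            have h := hinv s (Finset.mem_insert_self _ _) a2.head (hsubsub hhead)
            rw [hvconst _ hhead] at h
            rcases h with h | h
            · exact absurd (Finset.mem_union_left _ h) hvT
            · exact h
          refine ⟨a2, insert v E1, hsubsub, ?_, ?_, ?_⟩
          · calc (insert v E1).card ≤ E1.card + 1 := Finset.card_insert_le _ _
              _ ≤ S.card + 1 := by omega
              _ = (insert s S).card := (Finset.card_insert_of_notMem hs).symm
          · intro u hu
            rcases Finset.mem_insert.mp hu with rfl | hu'
            · exact hlowv
            · exact h1low u hu'
          · intro t ht x hx
            rcases Finset.mem_insert.mp ht with rfl | ht'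
            · left
              rw [hvconst x hx]
              exact Finset.mem_union_right _ (Finset.mem_insert_self _ _)
            · rcases h1inv t ht' x (h2sub hx) with h | h
              · left
                rcases Finset.mem_union.mp h with h | h
                · exact Finset.mem_union_left _ h
                · exact Finset.mem_union_right _ (Finset.mem_insert_of_mem h)
              · right; exact h
      · refine ⟨a2, E1, hsubsub, h1card.trans (by simp [Finset.card_insert_of_notMem hs]),
          h1low, ?_⟩
        intro t ht x hx
        rcases Finset.mem_insert.mp ht with rfl | ht'
        · right; exact hbig x hx
        · exact h1inv t ht' x (h2sub hx)

/-- The finite set of all (possibly empty) subset sums of `D`. -/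
def SH (D : Finset ℕ) : Finset ℕ := D.powerset.image fun F => F.sum id

theorem zero_mem_SH (D : Finset ℕ) : 0 ∈ SH D := by
  refine Finset.mem_image.mpr ⟨∅, by simp, rfl⟩

theorem sum_mem_SH {D F : Finset ℕ} (h : F ⊆ D) : F.sum id ∈ SH D :=
  Finset.mem_image.mpr ⟨F, Finset.mem_powerset.mpr h, rfl⟩

theorem card_SH_le (D : Finset ℕ) : (SH D).card ≤ 2 ^ D.card := by
  calc (SH D).card ≤ D.powerset.card := Finset.card_image_le
    _ = 2 ^ D.card := Finset.card_powerset D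

theorem mem_SH_insert {d : ℕ} {D : Finset ℕ} {s : ℕ} (h : s ∈ SH (insert d D)) :
    s ∈ SH D ∨ ∃ t ∈ SH D, s = d + t := by
  classical
  obtain ⟨F, hF, rfl⟩ := Finset.mem_image.mp h
  rw [Finset.mem_powerset] at hF
  by_cases hd : d ∈ F
  · right
    refine ⟨(F.erase d).sum id, sum_mem_SH ?_, ?_⟩
    · intro e he
      have h1 := Finset.mem_erase.mp he
      rcases Finset.mem_insert.mp (hF h1.2) with h2 | h2
      · exact absurd h2 h1.1
      · exact h2
    · rw [← Finset.add_sum_erase F id hd]; rfl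
  · left
    refine sum_mem_SH ?_
    intro e he
    rcases Finset.mem_insert.mp (hF he) with rfl | h2
    · exact absurd he hd
    · exact h2

/-- The state of the recursive construction. -/
structure St (φ : ℕ → ℕ) where
  n : ℕ
  a : Stream' ℕ
  D : Finset ℕ
  T : Finset ℕ
  hcard : D.card = n
  pos : ∀ x ∈ Hindman.FS a, 1 ≤ x
  inv : ∀ s ∈ SH D, ∀ x ∈ Hindman.FS a, φ (x + s) ∈ T ∨ 8 ^ n ≤ φ (x + s)

/-- What one construction step produces. -/
def Step (φ : ℕ → ℕ) (σ σ' : St φ) (d : ℕ) (E : Finset ℕ) : Prop :=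
  σ'.n = σ.n + 1 ∧ σ'.D = insert d σ.D ∧ σ'.T = σ.T ∪ E ∧
    (∀ e ∈ σ.D, e < d) ∧ d ∈ Hindman.FS σ.a ∧
    (∀ v ∈ E, 8 ^ σ.n ≤ v) ∧ E.card ≤ 2 ^ (σ.n + 1)

open Finset in
/-- Extraction of a large block element from the pool. -/
theorem block (a : Stream' ℕ) (pos : ∀ x ∈ Hindman.FS a, 1 ≤ x) (N : ℕ) :
    ∃ (d : ℕ) (k : ℕ), d ∈ Hindman.FS a ∧ N < d ∧
      ∀ x ∈ Hindman.FS (a.drop k), x + d ∈ Hindman.FS a := by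
  classical
  refine ⟨∑ i ∈ Finset.range (N + 1), a.get i, N + 1, ?_, ?_, ?_⟩
  · exact Hindman.FS.finset_sum a _ (by simp)
  · have h1 : ∀ i ∈ Finset.range (N + 1), 1 ≤ a.get i :=
      fun i _ => pos _ (Hindman.FS.singleton a i)
    calc N < N + 1 := Nat.lt_succ_self N
      _ = ∑ _i ∈ Finset.range (N + 1), 1 := by simp
      _ ≤ ∑ i ∈ Finset.range (N + 1), a.get i := Finset.sum_le_sum h1
  · intro x hx
    obtain ⟨F, hne, hsum⟩ := fs_repr hx
    have hsum' : ∑ i ∈ F.image (· + (N + 1)), a.get i = x := by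
      rw [Finset.sum_image (by intro x _ y _ h; simp only at h; omega)]
      rw [← hsum]
      apply Finset.sum_congr rfl
      intro i _
      rw [Stream'.get_drop]
      congr 1; omega
    have hdisj : Disjoint (F.image (· + (N + 1))) (Finset.range (N + 1)) := by
      rw [Finset.disjoint_left]
      intro i hi hri
      obtain ⟨j, _, rfl⟩ := Finset.mem_image.mp hi
      have := Finset.mem_range.mp hri
      omega
    have := Hindman.FS.finset_sum a ((F.image (· + (N + 1))) ∪ Finset.range (N + 1))
      (by refine Finset.Nonempty.mono Finset.subset_union_right (by simp))
    rw [Finset.sum_union hdisj, hsum'] at this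
    exact this

/-- The main inductive step of the construction. -/
theorem exists_step (φ : ℕ → ℕ) (σ : St φ) : ∃ (σ' : St φ) (d : ℕ) (E : Finset ℕ),
    Step φ σ σ' d E := by
  classical
  obtain ⟨d, k, hdFS, hdN, hadd⟩ := block σ.a σ.pos (σ.D.sup id)
  have hdD : ∀ e ∈ σ.D, e < d := fun e he =>
    lt_of_le_of_lt (Finset.le_sup (f := id) he) hdN
  have hsub1 : Hindman.FS (σ.a.drop k) ⊆ Hindman.FS σ.a := Hindman.FS_iter_tail_sub_FS σ.a k
  -- intermediate invariant for the extended shift set at the old threshold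
  have hmid : ∀ s ∈ SH (insert d σ.D), ∀ x ∈ Hindman.FS (σ.a.drop k),
      φ (x + s) ∈ σ.T ∨ 8 ^ σ.n ≤ φ (x + s) := by
    intro s hs x hx
    rcases mem_SH_insert hs with h | ⟨t, ht, rfl⟩
    · exact σ.inv s h x (hsub1 hx)
    · have : x + (d + t) = (x + d) + t := by ring
      rw [this]
      exact σ.inv t ht (x + d) (hadd x hx)
  obtain ⟨a2, E, h2sub, h2card, h2low, h2inv⟩ :=
    refineFinset φ (8 ^ (σ.n + 1)) (8 ^ σ.n) σ.T (SH (insert d σ.D)) (σ.a.drop k) hmid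
  have hdnotD : d ∉ σ.D := fun h => lt_irrefl d (hdD d h)
  have hcard' : (insert d σ.D).card = σ.n + 1 := by
    rw [Finset.card_insert_of_notMem hdnotD, σ.hcard]
  refine ⟨⟨σ.n + 1, a2, insert d σ.D, σ.T ∪ E, hcard',
    fun x hx => σ.pos x (hsub1 (h2sub hx)), h2inv⟩, d, E, rfl, rfl, rfl, hdD, hdFS, h2low, ?_⟩
  calc E.card ≤ (SH (insert d σ.D)).card := h2card
    _ ≤ 2 ^ (insert d σ.D).card := card_SH_le _
    _ = 2 ^ (σ.n + 1) := by rw [hcard']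

/-- The initial state. -/
def init (φ : ℕ → ℕ) : St φ where
  n := 0
  a := fun n => n + 1
  D := ∅
  T := {0}
  hcard := rfl
  pos := by
    intro x hx
    obtain ⟨F, ⟨i, hi⟩, hsum⟩ := fs_repr hx
    calc 1 ≤ i + 1 := Nat.le_add_left 1 i
      _ ≤ ∑ j ∈ F, (j + 1) :=
        Finset.single_le_sum (f := fun j => j + 1) (fun j _ => Nat.zero_le _) hi
      _ = x := hsum
  inv := by
    intro s hs x _
    have hs0 : s = 0 := by
      simp only [SH, Finset.powerset_empty, Finset.image_singleton] at hs
      simpa using hs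
    subst hs0
    rcases Nat.eq_zero_or_pos (φ (x + 0)) with h | h
    · left; simpa using h
    · right; show 8 ^ 0 ≤ φ (x + 0); rw [pow_zero]; omega

noncomputable def next (φ : ℕ → ℕ) (σ : St φ) : St φ × ℕ × Finset ℕ :=
  ⟨(exists_step φ σ).choose, (exists_step φ σ).choose_spec.choose,
    (exists_step φ σ).choose_spec.choose_spec.choose⟩

theorem next_spec (φ : ℕ → ℕ) (σ : St φ) :
    Step φ σ (next φ σ).1 (next φ σ).2.1 (next φ σ).2.2 :=
  (exists_step φ σ).choose_spec.choose_spec.choose_spec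

noncomputable def chain (φ : ℕ → ℕ) : ℕ → St φ
  | 0 => init φ
  | n + 1 => (next φ (chain φ n)).1

noncomputable def dseq (φ : ℕ → ℕ) (m : ℕ) : ℕ := (next φ (chain φ m)).2.1

noncomputable def Eseq (φ : ℕ → ℕ) (m : ℕ) : Finset ℕ := (next φ (chain φ m)).2.2

theorem chain_step (φ : ℕ → ℕ) (m : ℕ) :
    Step φ (chain φ m) (chain φ (m + 1)) (dseq φ m) (Eseq φ m) :=
  next_spec φ (chain φ m)

theorem chain_n (φ : ℕ → ℕ) (m : ℕ) : (chain φ m).n = m := by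
  induction m with
  | zero => rfl
  | succ m ih => rw [(chain_step φ m).1, ih]

theorem chain_card (φ : ℕ → ℕ) (m : ℕ) : (chain φ m).D.card = m := by
  rw [(chain φ m).hcard, chain_n]

theorem chain_D (φ : ℕ → ℕ) (m : ℕ) :
    (chain φ m).D = (Finset.range m).image (dseq φ) := by
  induction m with
  | zero => simp [chain, init]
  | succ m ih =>
      rw [(chain_step φ m).2.1, ih, Finset.range_add_one, Finset.image_insert]

theorem dseq_strictMono (φ : ℕ → ℕ) : StrictMono (dseq φ) := by
  apply strictMono_nat_of_lt_succ
  intro m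
  apply (chain_step φ (m + 1)).2.2.2.1
  rw [(chain_step φ m).2.1]
  exact Finset.mem_insert_self _ _

theorem chain_T (φ : ℕ → ℕ) (m : ℕ) :
    (chain φ m).T ⊆ insert 0 ((Finset.range m).biUnion (Eseq φ)) := by
  classical
  induction m with
  | zero =>
      intro v hv
      simp only [chain, init] at hv
      simp [Finset.mem_singleton.mp hv]
  | succ m ih =>
      rw [(chain_step φ m).2.2.1]
      intro v hv
      rcases Finset.mem_union.mp hv with h | h
      · have := ih h
        rcases Finset.mem_insert.mp this with h' | h'
        · simp [h']
        · obtain ⟨k, hk, hvk⟩ := Finset.mem_biUnion.mp h'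
          refine Finset.mem_insert_of_mem (Finset.mem_biUnion.mpr ⟨k, ?_, hvk⟩)
          simp only [Finset.mem_range] at hk ⊢
          omega
      · refine Finset.mem_insert_of_mem (Finset.mem_biUnion.mpr ⟨m, by simp, h⟩)

/-- The covering family. -/
noncomputable def G (φ : ℕ → ℕ) (m : ℕ) : Finset ℕ :=
  (if m = 0 then {0} else ∅) ∪ (Eseq φ m ∪
    ((SH (chain φ m).D).image fun s => φ (dseq φ m + s)).filter (fun v => 8 ^ m ≤ v))

theorem zero_mem_G0 (φ : ℕ → ℕ) : 0 ∈ G φ 0 := by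
  have : (0 : ℕ) ∈ (if (0:ℕ) = 0 then ({0} : Finset ℕ) else ∅) := by simp
  exact Finset.mem_union_left _ this

theorem mem_G_of_E {φ : ℕ → ℕ} {k v : ℕ} (h : v ∈ Eseq φ k) : v ∈ G φ k :=
  Finset.mem_union_right _ (Finset.mem_union_left _ h)

theorem mem_G_of_W {φ : ℕ → ℕ} {m v : ℕ}
    (h : v ∈ ((SH (chain φ m).D).image fun s => φ (dseq φ m + s)).filter (fun v => 8 ^ m ≤ v)) :
    v ∈ G φ m :=
  Finset.mem_union_right _ (Finset.mem_union_right _ h)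

theorem G_low (φ : ℕ → ℕ) (m : ℕ) : ∀ v ∈ G φ m, 8 ^ m ≤ v + 1 := by
  intro v hv
  rcases Finset.mem_union.mp hv with h | h
  · rcases Nat.eq_zero_or_pos m with rfl | hm
    · simp
    · rw [if_neg (by omega)] at h
      exact absurd h (Finset.notMem_empty v)
  · rcases Finset.mem_union.mp h with h | h
    · have := (chain_step φ m).2.2.2.2.2.1 v h
      rw [chain_n] at this
      omega
    · have := (Finset.mem_filter.mp h).2
      omega

theorem G_card (φ : ℕ → ℕ) (m : ℕ) : (G φ m).card ≤ 2 ^ (m + 3) := by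
  have h1 : (if m = 0 then ({0} : Finset ℕ) else ∅).card ≤ 1 := by
    split <;> simp
  have h2 : (Eseq φ m).card ≤ 2 ^ (m + 1) := by
    have := (chain_step φ m).2.2.2.2.2.2
    rwa [chain_n] at this
  have h3 : (((SH (chain φ m).D).image fun s => φ (dseq φ m + s)).filter
      (fun v => 8 ^ m ≤ v)).card ≤ 2 ^ m := by
    calc _ ≤ (((SH (chain φ m).D).image fun s => φ (dseq φ m + s))).card :=
          Finset.card_filter_le _ _
      _ ≤ (SH (chain φ m).D).card := Finset.card_image_le
      _ ≤ 2 ^ (chain φ m).D.card := card_SH_le _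
      _ = 2 ^ m := by rw [chain_card]
  calc (G φ m).card ≤ _ + (Eseq φ m ∪ _).card := Finset.card_union_le _ _
    _ ≤ _ + ((Eseq φ m).card + _) := by
        exact Nat.add_le_add_left (Finset.card_union_le _ _) _
    _ ≤ 1 + (2 ^ (m + 1) + 2 ^ m) := by
        apply Nat.add_le_add h1
        exact Nat.add_le_add h2 h3
    _ ≤ 2 ^ (m + 3) := by
        have : (1:ℕ) ≤ 2 ^ m := Nat.one_le_two_pow
        ring_nf
        omega

/-- Main covering property. -/
theorem image_subset_G (φ : ℕ → ℕ) :
    φ '' FS (Set.range (dseq φ)) ⊆ ⋃ m, ↑(G φ m) := by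
  classical
  rintro y ⟨x, ⟨F, hne, hFD, hsum⟩, rfl⟩
  -- the maximal element of F is some dseq m
  have hmax := F.max'_mem hne
  obtain ⟨m, hm⟩ := hFD hmax
  set e := F.max' hne with he
  -- F.erase e is contained in (chain φ m).D
  have herase : F.erase e ⊆ (chain φ m).D := by
    intro f hf
    have h1 := Finset.mem_erase.mp hf
    obtain ⟨k, hk⟩ := hFD (Finset.mem_of_mem_erase hf)
    have hfe : f < e := lt_of_le_of_ne (F.le_max' f h1.2) h1.1
    have hkm : k < m := by
      apply (dseq_strictMono φ).lt_iff_lt.mp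
      rw [hk, hm]
      exact hfe
    rw [chain_D]
    exact Finset.mem_image.mpr ⟨k, Finset.mem_range.mpr hkm, hk⟩
  set s := (F.erase e).sum id with hs
  have hsSH : s ∈ SH (chain φ m).D := sum_mem_SH herase
  have hxes : x = e + s := by
    rw [← hsum, ← Finset.add_sum_erase F id hmax]
    rfl
  have hdFS : dseq φ m ∈ Hindman.FS (chain φ m).a := (chain_step φ m).2.2.2.2.1
  have hinv := (chain φ m).inv s hsSH (dseq φ m) hdFS
  rw [chain_n] at hinv
  have hφx : φ x = φ (dseq φ m + s) := by rw [hxes, hm]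
  rw [Set.mem_iUnion] at *
  rw [hφx]
  rcases hinv with h | h
  · -- φ x is a committed small value
    have hT := chain_T φ m h
    rcases Finset.mem_insert.mp hT with h' | h'
    · exact ⟨0, Finset.mem_coe.mpr (by rw [h']; exact zero_mem_G0 φ)⟩
    · obtain ⟨k, _, hvk⟩ := Finset.mem_biUnion.mp h'
      exact ⟨k, Finset.mem_coe.mpr (mem_G_of_E hvk)⟩
  · -- φ x is a large value recorded in W
    exact ⟨m, Finset.mem_coe.mpr (mem_G_of_W
      (Finset.mem_filter.mpr ⟨Finset.mem_image.mpr ⟨s, hsSH, rfl⟩, h⟩))⟩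

set_option maxHeartbeats 1000000 in
/-- Summability criterion: a set covered by finite sets `G m` whose elements are `≥ 8^m - 1`
and whose cardinalities are `≤ 2^(m+3)` is in the summable ideal. -/
theorem summable_of_cover (A : Set ℕ) (G : ℕ → Finset ℕ)
    (hlow : ∀ m, ∀ v ∈ G m, 8 ^ m ≤ v + 1) (hcard : ∀ m, (G m).card ≤ 2 ^ (m + 3))
    (hsub : A ⊆ ⋃ m, ↑(G m)) : InSummable A := by
  classical
  set w : ℕ → ℝ := fun v => (1 : ℝ) / ((v : ℝ) + 1) with hw
  have hwpos : ∀ v : ℕ, 0 ≤ w v := by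
    intro v
    apply div_nonneg zero_le_one
    positivity
  have hmem : ∀ a : A, ∃ m, (a : ℕ) ∈ G m := by
    intro a
    have := hsub a.2
    simpa using this
  let ι : A → Σ m, {v // v ∈ G m} := fun a => ⟨(hmem a).choose, ⟨a, (hmem a).choose_spec⟩⟩
  have hinj : Function.Injective ι := by
    intro a b h
    have h2 := congrArg (fun q : Σ m, {v // v ∈ G m} => (q.2 : ℕ)) h
    exact Subtype.ext h2
  have hsummable : Summable (fun q : Σ m, {v // v ∈ G m} => w q.2) := by
    rw [summable_sigma_of_nonneg (fun q => hwpos _)]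
    constructor
    · intro m
      exact Summable.of_finite
    · refine Summable.of_nonneg_of_le (f := fun m => 8 * (1 / 4 : ℝ) ^ m)
        (fun m => tsum_nonneg (fun v => hwpos _)) ?_ ?_
      · intro m
        have htsum : ∑' v : {v // v ∈ G m}, w v = ∑ v ∈ G m, w v := by
          rw [tsum_fintype]
          exact Finset.sum_attach _ _
        rw [htsum]
        have hbound : ∀ v ∈ G m, w v ≤ (1 / 8 : ℝ) ^ m := by
          intro v hv
          have h8 : (8 : ℝ) ^ m ≤ (v : ℝ) + 1 := by
            have := hlow m v hv
            exact_mod_cast this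
          rw [hw]
          simp only [one_div_pow]
          exact one_div_le_one_div_of_le (by positivity) h8
        calc ∑ v ∈ G m, w v ≤ (G m).card • ((1 / 8 : ℝ) ^ m) :=
              Finset.sum_le_card_nsmul _ _ _ hbound
          _ = ((G m).card : ℝ) * (1 / 8 : ℝ) ^ m := by rw [nsmul_eq_mul]
          _ ≤ (2 ^ (m + 3) : ℝ) * (1 / 8 : ℝ) ^ m := by
              apply mul_le_mul_of_nonneg_right _ (by positivity)
              exact_mod_cast hcard m
          _ = 8 * (1 / 4 : ℝ) ^ m := by
              rw [pow_add]
              have : (2 : ℝ) ^ m * (1 / 8 : ℝ) ^ m = (1 / 4 : ℝ) ^ m := by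
                rw [← mul_pow]; norm_num
              ring_nf
              nlinarith [this]
      · exact (summable_geometric_of_lt_one (by norm_num) (by norm_num)).mul_left 8
  have := hsummable.comp_injective hinj
  exact this

end SNKH

theorem summable_not_katetov_below_hindman :
    ∀ φ : ℕ → ℕ, ∃ D : Set ℕ, D.Infinite ∧ InSummable (φ '' FS D) := by
  intro φ
  refine ⟨Set.range (SNKH.dseq φ), Set.infinite_range_of_injective
    (SNKH.dseq_strictMono φ).injective, ?_⟩
  exact SNKH.summable_of_cover _ (SNKH.G φ) (SNKH.G_low φ) (SNKH.G_card φ)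
    (SNKH.image_subset_G φ)
end

section
/- The summable ideal is not Katětov below the Ramsey ideal: for every function φ : [ℕ]² → ℕ there exists an infinite set H ⊆ ℕ such that ∑_{y ∈ φ[[H]²]} 1/(y+1) < ∞. -/
/-! ### Auxiliary summability lemmas -/

lemma inSummable_iff_indicator (A : Set ℕ) :
    InSummable A ↔ Summable (A.indicator fun n : ℕ => (1:ℝ)/(n+1)) := by
  rw [← summable_subtype_iff_indicator]
  rfl

lemma inSummable_mono {A B : Set ℕ} (h : A ⊆ B) (hB : InSummable B) : InSummable A := by
  rw [inSummable_iff_indicator] at *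
  refine Summable.of_nonneg_of_le (fun n => ?_) (fun n => ?_) hB
  · exact Set.indicator_nonneg (fun n _ => by positivity) n
  · exact Set.indicator_le_indicator_of_subset h (fun n => by positivity) n

lemma inSummable_union {A B : Set ℕ} (hA : InSummable A) (hB : InSummable B) :
    InSummable (A ∪ B) := by
  rw [inSummable_iff_indicator] at *
  refine Summable.of_nonneg_of_le (fun n => ?_) (fun n => ?_) (hA.add hB)
  · exact Set.indicator_nonneg (fun n _ => by positivity) n
  · classical
    by_cases hn : n ∈ A ∪ B
    · rw [Set.indicator_of_mem hn]
      rcases hn with hn | hn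
      · have := Set.indicator_nonneg (s := B) (f := fun n : ℕ => (1:ℝ)/(n+1)) (fun n _ => by positivity) n
        simp only [Pi.add_apply, Set.indicator_of_mem hn]
        linarith
      · have := Set.indicator_nonneg (s := A) (f := fun n : ℕ => (1:ℝ)/(n+1)) (fun n _ => by positivity) n
        simp only [Pi.add_apply, Set.indicator_of_mem hn]
        linarith
    · rw [Set.indicator_of_notMem hn]
      have h1 := Set.indicator_nonneg (s := A) (f := fun n : ℕ => (1:ℝ)/(n+1)) (fun n _ => by positivity) n
      have h2 := Set.indicator_nonneg (s := B) (f := fun n : ℕ => (1:ℝ)/(n+1)) (fun n _ => by positivity) n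
      simpa using add_nonneg h1 h2

lemma inSummable_finite {A : Set ℕ} (hA : A.Finite) : InSummable A := by
  haveI := hA.fintype
  exact summable_of_finite_support (Set.toFinite _)

lemma summable_aux : Summable (fun l : ℕ => ((l:ℝ)+1) * (2⁻¹)^l) := by
  have h1 := summable_pow_mul_geometric_of_norm_lt_one (r := (2⁻¹:ℝ)) 1 (by norm_num)
  have h2 : Summable (fun l : ℕ => (2⁻¹:ℝ)^l) :=
    summable_geometric_of_lt_one (by norm_num) (by norm_num)
  exact (h1.add h2).congr fun l => by ring

/-- Key estimate: a set of naturals each of which is witnessed by a pair `(p.1, p.2)` with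
`p.1 ≤ p.2`, recovered by `W`, and of size at least `2 ^ p.2`, is in the summable ideal. -/
lemma inSummable_of_witness (W : ℕ × ℕ → ℕ) (A : Set ℕ)
    (h : ∀ n ∈ A, ∃ p : ℕ × ℕ, p.1 ≤ p.2 ∧ W p = n ∧ 2 ^ p.2 ≤ n) : InSummable A := by
  classical
  rw [inSummable_iff_indicator]
  have h' : ∀ n : ℕ, ∃ p : ℕ × ℕ, n ∈ A → (p.1 ≤ p.2 ∧ W p = n ∧ 2 ^ p.2 ≤ n) := by
    intro n
    by_cases hn : n ∈ A
    · obtain ⟨p, hp⟩ := h n hn; exact ⟨p, fun _ => hp⟩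
    · exact ⟨(0,0), fun hc => absurd hc hn⟩
  choose P hP using h'
  set c := ∑' l : ℕ, ((l:ℝ)+1) * (2⁻¹)^l with hc
  apply summable_of_sum_range_le (c := c)
  · intro n
    exact Set.indicator_nonneg (fun n _ => by positivity) n
  · intro N
    have hrw : ∑ i ∈ Finset.range N, A.indicator (fun n : ℕ => (1:ℝ)/(n+1)) i
        = ∑ n ∈ (Finset.range N).filter (· ∈ A), (1:ℝ)/(n+1) := by
      rw [Finset.sum_filter]
      refine Finset.sum_congr rfl fun i _ => ?_
      by_cases hi : i ∈ A <;> simp [Set.indicator_of_mem, Set.indicator_of_notMem, hi]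
    rw [hrw]
    set u := (Finset.range N).filter (· ∈ A) with hu
    have hmemA : ∀ n ∈ u, n ∈ A := by intro n hn; simpa using (Finset.mem_filter.mp hn).2
    have step1 : ∑ n ∈ u, (1:ℝ)/(n+1) ≤ ∑ n ∈ u, ((2:ℝ)⁻¹)^((P n).2) := by
      apply Finset.sum_le_sum
      intro n hn
      obtain ⟨_, _, h3⟩ := hP n (hmemA n hn)
      have h2n : (2:ℝ)^((P n).2) ≤ (n:ℝ)+1 := by
        have : (2:ℕ)^((P n).2) ≤ n := h3
        calc (2:ℝ)^((P n).2) ≤ (n:ℝ) := by exact_mod_cast this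
        _ ≤ (n:ℝ)+1 := by linarith
      rw [inv_pow]
      rw [one_div]
      exact inv_anti₀ (by positivity) h2n
    have step2 : ∑ n ∈ u, ((2:ℝ)⁻¹)^((P n).2)
        = ∑ l ∈ u.image (fun n => (P n).2), (u.filter (fun n => (P n).2 = l)).card • ((2:ℝ)⁻¹)^l :=
      Finset.sum_comp (fun l => ((2:ℝ)⁻¹)^l) (fun n => (P n).2)
    have cardb : ∀ l ∈ u.image (fun n => (P n).2),
        ((u.filter (fun n => (P n).2 = l)).card : ℝ) ≤ (l:ℝ)+1 := by
      intro l _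
      have : (u.filter (fun n => (P n).2 = l)).card ≤ (Finset.range (l+1)).card := by
        apply Finset.card_le_card_of_injOn (fun n => (P n).1)
        · intro n hn
          obtain ⟨hn1, hn2⟩ := Finset.mem_filter.mp hn
          obtain ⟨hle, _, _⟩ := hP n (hmemA n hn1)
          simp only [Finset.mem_coe, Finset.mem_range]
          have hn2' : (P n).2 = l := hn2
          omega
        · intro a ha b hb hab
          obtain ⟨ha1, ha2⟩ := Finset.mem_filter.mp ha
          obtain ⟨hb1, hb2⟩ := Finset.mem_filter.mp hb
          obtain ⟨_, hwa, _⟩ := hP a (hmemA a ha1)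
          obtain ⟨_, hwb, _⟩ := hP b (hmemA b hb1)
          have : P a = P b := Prod.ext hab (ha2.trans hb2.symm)
          rw [← hwa, ← hwb, this]
      simpa using (Nat.cast_le (α := ℝ)).mpr this
    have step3 : ∑ l ∈ u.image (fun n => (P n).2), (u.filter (fun n => (P n).2 = l)).card • ((2:ℝ)⁻¹)^l
        ≤ ∑ l ∈ u.image (fun n => (P n).2), ((l:ℝ)+1) * (2⁻¹)^l := by
      apply Finset.sum_le_sum
      intro l hl
      rw [nsmul_eq_mul]
      exact mul_le_mul_of_nonneg_right (cardb l hl) (by positivity)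
    have step4 : ∑ l ∈ u.image (fun n => (P n).2), ((l:ℝ)+1) * (2⁻¹)^l ≤ c :=
      Summable.sum_le_tsum _ (fun l _ => by positivity) summable_aux
    linarith

/-! ### Combinatorial construction -/

lemma exists_strictMono_in {M : Set ℕ} (hM : M.Infinite) :
    ∃ g : ℕ → ℕ, StrictMono g ∧ ∀ k, g k ∈ M := by
  choose nxt hmem hlt using fun a => hM.exists_gt a
  refine ⟨fun k => nxt^[k] (nxt 0), ?_, ?_⟩
  · apply strictMono_nat_of_lt_succ
    intro k
    rw [Function.iterate_succ_apply']
    exact hlt _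
  · intro k
    induction k with
    | zero => exact hmem 0
    | succ k ih =>
      show nxt^[k+1] (nxt 0) ∈ M
      rw [Function.iterate_succ_apply']
      exact hmem _

/-- The basic dichotomy: along any infinite subsequence `s`, a function `f` admits a further
infinite subsequence on which it is either constant or grows at least as fast as any
prescribed bound `B`. -/
lemma dichotomy (f : ℕ → ℕ) (s : ℕ → ℕ) (hs : StrictMono s) (B : ℕ → ℕ) :
    ∃ t : ℕ → ℕ, StrictMono t ∧ (∀ k, ∃ m, t k = s m) ∧
      ((∀ k, f (t k) = f (t 0)) ∨ (∀ k, B k ≤ f (t k))) := by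
  by_cases hconst : ∃ c, {m | f (s m) = c}.Infinite
  · obtain ⟨c, hc⟩ := hconst
    obtain ⟨g, hg, hgm⟩ := exists_strictMono_in hc
    refine ⟨s ∘ g, hs.comp hg, fun k => ⟨g k, rfl⟩, Or.inl fun k => ?_⟩
    have h1 : f (s (g k)) = c := hgm k
    have h2 : f (s (g 0)) = c := hgm 0
    simpa [h1] using h2.symm
  · push_neg at hconst
    have claim : ∀ b a : ℕ, ∃ m, a < m ∧ b ≤ f (s m) := by
      intro b a
      have hbad : {m | f (s m) < b}.Finite := by
        apply Set.Finite.subset (Set.Finite.biUnion (Set.finite_Iio b) (fun c _ => hconst c))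
        intro m hm
        exact Set.mem_biUnion hm rfl
      obtain ⟨m, hm1, hm2⟩ := hbad.infinite_compl.exists_gt a
      exact ⟨m, hm2, by simpa using hm1⟩
    choose nxt h1 h2 using claim
    set r : ℕ → ℕ := fun k => Nat.rec (nxt (B 0) 0) (fun k ih => nxt (B (k+1)) ih) k with hr
    have hrsucc : ∀ k, r (k+1) = nxt (B (k+1)) (r k) := fun k => rfl
    have hrm : StrictMono r := by
      apply strictMono_nat_of_lt_succ
      intro k
      rw [hrsucc]
      exact h1 _ _
    refine ⟨s ∘ r, hs.comp hrm, fun k => ⟨r k, rfl⟩, Or.inr fun k => ?_⟩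
    cases k with
    | zero => exact h2 (B 0) 0
    | succ k => exact h2 (B (k+1)) (r k)

noncomputable def stageAux (φ : Sym2 ℕ → ℕ) (n : ℕ) (σ : {g : ℕ → ℕ // StrictMono g}) :
    {g : ℕ → ℕ // StrictMono g} :=
  ⟨(dichotomy (fun x => φ (Sym2.mk (σ.1 0) x)) (fun m => σ.1 (m+1))
      (fun a b hab => σ.2 (by omega)) (fun k => 2^(k+n+1))).choose,
   (dichotomy (fun x => φ (Sym2.mk (σ.1 0) x)) (fun m => σ.1 (m+1))
      (fun a b hab => σ.2 (by omega)) (fun k => 2^(k+n+1))).choose_spec.1⟩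

noncomputable def stage (φ : Sym2 ℕ → ℕ) : ℕ → {g : ℕ → ℕ // StrictMono g}
  | 0 => ⟨id, strictMono_id⟩
  | n+1 => stageAux φ n (stage φ n)

lemma stage_spec (φ : Sym2 ℕ → ℕ) (n : ℕ) :
    (∀ k, ∃ m, (stage φ (n+1)).1 k = (stage φ n).1 (m+1)) ∧
      ((∀ k, φ (Sym2.mk ((stage φ n).1 0) ((stage φ (n+1)).1 k))
          = φ (Sym2.mk ((stage φ n).1 0) ((stage φ (n+1)).1 0))) ∨
       (∀ k, 2^(k+n+1) ≤ φ (Sym2.mk ((stage φ n).1 0) ((stage φ (n+1)).1 k)))) := by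
  have h := (dichotomy (fun x => φ (Sym2.mk ((stage φ n).1 0) x)) (fun m => (stage φ n).1 (m+1))
      (fun a b hab => (stage φ n).2 (by omega)) (fun k => 2^(k+n+1))).choose_spec
  exact ⟨h.2.1, h.2.2⟩

/-- Positions: elements of a later stage sit deep in earlier stages. -/
lemma stage_pos (φ : Sym2 ℕ → ℕ) (n : ℕ) :
    ∀ k, ∃ m, k ≤ m ∧ (stage φ (n+1)).1 k = (stage φ n).1 (m+1) := by
  choose mf hmf using (stage_spec φ n).1
  have hmono : StrictMono mf := by
    intro a b hab
    have h1 : (stage φ n).1 (mf a + 1) < (stage φ n).1 (mf b + 1) := by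
      rw [← hmf a, ← hmf b]
      exact (stage φ (n+1)).2 hab
    have := ((stage φ n).2.lt_iff_lt).mp h1
    omega
  exact fun k => ⟨mf k, hmono.le_apply, hmf k⟩

noncomputable def headSeq (φ : Sym2 ℕ → ℕ) (n : ℕ) : ℕ := (stage φ n).1 0

lemma headSeq_strictMono (φ : Sym2 ℕ → ℕ) : StrictMono (headSeq φ) := by
  apply strictMono_nat_of_lt_succ
  intro n
  obtain ⟨m, _, hm⟩ := stage_pos φ n 0
  unfold headSeq
  rw [hm]
  exact (stage φ n).2 (by omega)

lemma head_mem_stage (φ : Sym2 ℕ → ℕ) :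
    ∀ d i, ∃ k, d ≤ k ∧ headSeq φ (i+1+d) = (stage φ (i+1)).1 k := by
  intro d
  induction d with
  | zero => exact fun i => ⟨0, le_refl _, rfl⟩
  | succ d ih =>
    intro i
    obtain ⟨k', hk', hval⟩ := ih (i+1)
    obtain ⟨m, hm, hmval⟩ := stage_pos φ (i+1) k'
    refine ⟨m+1, by omega, ?_⟩
    have : i+1+(d+1) = (i+1)+1+d := by omega
    rw [this, hval, hmval]

noncomputable def constSeq (φ : Sym2 ℕ → ℕ) (i : ℕ) : ℕ :=
  φ (Sym2.mk (headSeq φ i) ((stage φ (i+1)).1 0))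

lemma pair_dichotomy (φ : Sym2 ℕ → ℕ) {i j : ℕ} (hij : i < j) :
    φ (Sym2.mk (headSeq φ i) (headSeq φ j)) = constSeq φ i ∨
      2^j ≤ φ (Sym2.mk (headSeq φ i) (headSeq φ j)) := by
  obtain ⟨k, hk, hval⟩ := head_mem_stage φ (j-i-1) i
  have hj : i+1+(j-i-1) = j := by omega
  rw [hj] at hval
  rcases (stage_spec φ i).2 with hconst | hgrow
  · left
    rw [hval]
    exact hconst k
  · right
    rw [hval]
    calc (2:ℕ)^j ≤ 2^(k+i+1) := Nat.pow_le_pow_right (by norm_num) (by omega)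
    _ ≤ _ := hgrow k

/-! ### Main theorem -/

theorem summable_not_katetov_below_ramsey :
    ∀ φ : Sym2 ℕ → ℕ, ∃ H : Set ℕ, H.Infinite ∧ InSummable (φ '' pairsOf H) := by
  intro φ
  obtain ⟨t, ht, -, htcases⟩ := dichotomy (constSeq φ) id strictMono_id (fun k => 2^k)
  set e : ℕ → ℕ := fun k => headSeq φ (t k) with he
  have hemono : StrictMono e := (headSeq_strictMono φ).comp ht
  refine ⟨Set.range e, Set.infinite_range_of_injective hemono.injective, ?_⟩
  -- every element of the image has a pair witness
  have key : ∀ n ∈ φ '' pairsOf (Set.range e), ∃ k l : ℕ, k < l ∧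
      n = φ (Sym2.mk (e k) (e l)) ∧ (n = constSeq φ (t k) ∨ 2 ^ l ≤ n) := by
    rintro n ⟨p, ⟨a, b, hab, ⟨k, rfl⟩, ⟨l, rfl⟩, rfl⟩, rfl⟩
    have hkl : k ≠ l := fun h => hab (by rw [h])
    -- wlog k < l
    obtain ⟨k, l, hlt, hpair⟩ : ∃ k' l' : ℕ, k' < l' ∧ Sym2.mk (e k) (e l) = Sym2.mk (e k') (e l') := by
      rcases lt_or_gt_of_ne hkl with h | h
      · exact ⟨k, l, h, rfl⟩
      · exact ⟨l, k, h, Sym2.eq_swap⟩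
    refine ⟨k, l, hlt, by rw [hpair], ?_⟩
    rw [hpair]
    have := pair_dichotomy φ (ht hlt)
    rcases this with h | h
    · exact Or.inl h
    · right
      calc (2:ℕ)^l ≤ 2^(t l) := Nat.pow_le_pow_right (by norm_num) ht.le_apply
      _ ≤ _ := h
  set C : Set ℕ := Set.range (fun k => constSeq φ (t k)) with hC
  set B : Set ℕ := {n | ∃ p : ℕ × ℕ, p.1 ≤ p.2 ∧ φ (Sym2.mk (e p.1) (e p.2)) = n ∧ 2 ^ p.2 ≤ n}
    with hB
  have hsub : φ '' pairsOf (Set.range e) ⊆ C ∪ B := by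
    intro n hn
    obtain ⟨k, l, hlt, hval, hcase⟩ := key n hn
    rcases hcase with h | h
    · exact Or.inl ⟨k, h.symm⟩
    · exact Or.inr ⟨(k, l), hlt.le, hval.symm, h⟩
  have hBsum : InSummable B := by
    apply inSummable_of_witness (fun p => φ (Sym2.mk (e p.1) (e p.2)))
    rintro n ⟨p, h1, h2, h3⟩
    exact ⟨p, h1, h2, h3⟩
  have hCsum : InSummable C := by
    rcases htcases with h | h
    · apply inSummable_mono (B := {constSeq φ (t 0)}) ?_ (inSummable_finite (Set.finite_singleton _))
      rintro n ⟨k, rfl⟩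
      exact h k
    · apply inSummable_of_witness (fun p => constSeq φ (t p.2))
      rintro n ⟨k, rfl⟩
      exact ⟨(k, k), le_refl _, rfl, h k⟩
  exact inSummable_mono hsub (inSummable_union hCsum hBsum)
end

section
/- Canonical Ramsey reduction to the summable ideal, constant-on-min case: if T ⊆ ℕ is infinite and φ : [ℕ]² → ℕ satisfies that for all x, y ∈ [T]², φ(x) = φ(y) if and only if min x = min y, then there is an infinite H ⊆ T with ∑_{y ∈ φ[[H]²]} 1/(y+1) < ∞. -/
theorem canonical_ramsey_min_case (T : Set ℕ) (hT : T.Infinite)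
    (φ : Sym2 ℕ → ℕ)
    (hmin : ∀ a b c d : ℕ, a < b → c < d → a ∈ T → b ∈ T → c ∈ T → d ∈ T →
      (φ (Sym2.mk a b) = φ (Sym2.mk c d) ↔ a = c)) :
    ∃ H : Set ℕ, H ⊆ T ∧ H.Infinite ∧ InSummable (φ '' pairsOf H) := by
  classical
  -- choose for each t a bigger element of T
  have hgt : ∀ t : ℕ, ∃ b, b ∈ T ∧ t < b := by
    intro t
    obtain ⟨b, hb, h⟩ := hT.exists_gt t
    exact ⟨b, hb, h⟩
  choose nb hnbT hnblt using hgt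
  set f : ℕ → ℕ := fun t => φ (Sym2.mk t (nb t)) with hf
  have hfval : ∀ t ∈ T, ∀ b ∈ T, t < b → φ (Sym2.mk t b) = f t := by
    intro t ht b hb htb
    exact (hmin t b t (nb t) htb (hnblt t) ht hb ht (hnbT t)).mpr rfl
  have hfinj : ∀ t₁ ∈ T, ∀ t₂ ∈ T, f t₁ = f t₂ → t₁ = t₂ := by
    intro t₁ h₁ t₂ h₂ hft
    obtain ⟨b, hb, hbgt⟩ := hT.exists_gt (max t₁ t₂)
    have l₁ : t₁ < b := lt_of_le_of_lt (le_max_left _ _) hbgt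
    have l₂ : t₂ < b := lt_of_le_of_lt (le_max_right _ _) hbgt
    have e₁ := hfval t₁ h₁ b hb l₁
    have e₂ := hfval t₂ h₂ b hb l₂
    exact (hmin t₁ b t₂ b l₁ l₂ h₁ hb h₂ hb).mp (by rw [e₁, e₂, hft])
  -- can find large elements with large f-values
  have step : ∀ (m n : ℕ), ∃ t, t ∈ T ∧ m < t ∧ 2 ^ n ≤ f t := by
    intro m n
    set S : Set ℕ := {t ∈ T | f t < 2 ^ n} with hS
    have hSfin : S.Finite := by
      apply Set.Finite.of_finite_image (f := f)
      · exact (Set.finite_Iio (2 ^ n)).subset (by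
          rintro y ⟨t, ⟨htT, htlt⟩, rfl⟩
          exact htlt)
      · intro x hx y hy hxy
        exact hfinj x hx.1 y hy.1 hxy
    have hinf : (T \ S).Infinite := hT.diff hSfin
    obtain ⟨t, ht, hmt⟩ := hinf.exists_gt m
    refine ⟨t, ht.1, hmt, ?_⟩
    by_contra hc
    exact ht.2 ⟨ht.1, lt_of_not_ge hc⟩
  choose F hF1 hF2 hF3 using step
  -- the selected sequence
  set a : ℕ → ℕ := fun n => Nat.rec (F 0 0) (fun n prev => F prev (n + 1)) n with ha
  have haT : ∀ n, a n ∈ T := by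
    intro n; cases n with
    | zero => exact hF1 0 0
    | succ k => exact hF1 _ _
  have haf : ∀ n, 2 ^ n ≤ f (a n) := by
    intro n; cases n with
    | zero => exact hF3 0 0
    | succ k => exact hF3 _ _
  have hamono : StrictMono a := by
    apply strictMono_nat_of_lt_succ
    intro n
    exact hF2 (a n) (n + 1)
  refine ⟨Set.range a, ?_, Set.infinite_range_of_injective hamono.injective, ?_⟩
  · rintro x ⟨n, rfl⟩; exact haT n
  -- every value in the image is f (a i) for some i
  have hval : ∀ y ∈ φ '' pairsOf (Set.range a), ∃ i, f (a i) = y := by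
    rintro y ⟨p, ⟨u, v, huv, ⟨i, rfl⟩, ⟨j, rfl⟩, rfl⟩, rfl⟩
    have hij : i ≠ j := fun h => huv (by rw [h])
    rcases hij.lt_or_gt with h | h
    · exact ⟨i, (hfval (a i) (haT i) (a j) (haT j) (hamono h)).symm⟩
    · refine ⟨j, ?_⟩
      rw [Sym2.eq_swap]
      exact (hfval (a j) (haT j) (a i) (haT i) (hamono h)).symm
  -- summability
  unfold InSummable
  set A := φ '' pairsOf (Set.range a) with hA
  have hex : ∀ y : A, ∃ i, f (a i) = (y : ℕ) := fun y => hval y y.2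
  set g : A → ℕ := fun y => Nat.find (hex y) with hg
  have hginj : Function.Injective g := by
    intro y₁ y₂ hgy
    apply Subtype.ext
    rw [← Nat.find_spec (hex y₁), ← Nat.find_spec (hex y₂)]
    exact congrArg (fun i => f (a i)) hgy
  have hbound : ∀ y : A, (1 : ℝ) / ((y : ℕ) + 1) ≤ (1 / 2) ^ (g y) := by
    intro y
    have h1 : 2 ^ (g y) ≤ (y : ℕ) := (Nat.find_spec (hex y)) ▸ haf _
    have h2 : (2 : ℝ) ^ (g y) ≤ ((y : ℕ) : ℝ) + 1 := by
      calc (2 : ℝ) ^ (g y) = ((2 ^ (g y) : ℕ) : ℝ) := by push_cast; ring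
        _ ≤ ((y : ℕ) : ℝ) := by exact_mod_cast h1
        _ ≤ ((y : ℕ) : ℝ) + 1 := by linarith
    rw [div_pow, one_pow]
    exact one_div_le_one_div_of_le (by positivity) h2
  have hsum : Summable (fun y : A => ((1 : ℝ) / 2) ^ (g y)) :=
    (summable_geometric_of_lt_one (by norm_num) (by norm_num)).comp_injective hginj
  exact Summable.of_nonneg_of_le (fun y => by positivity) hbound hsum
end

section
/- Canonical Ramsey reduction to the summable ideal, injective case: if T ⊆ ℕ is infinite and φ : [ℕ]² → ℕ is injective on [T]², then there is an infinite H ⊆ T with ∑_{y ∈ φ[[H]²]} 1/(y+1) < ∞. -/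
lemma exists_good (T : Set ℕ) (hT : T.Infinite) (φ : Sym2 ℕ → ℕ)
    (hinj : ∀ p ∈ pairsOf T, ∀ q ∈ pairsOf T, φ p = φ q → p = q)
    (F : Finset ℕ) (N B : ℕ) :
    ∃ t, t ∈ T ∧ N < t ∧ ∀ a ∈ F, a ∈ T → a ≠ t → B ≤ φ (Sym2.mk (a) (t)) := by
  classical
  set Bad : ℕ → Set ℕ := fun a =>
    {t | t ∈ T ∧ t ≠ a ∧ a ∈ T ∧ φ (Sym2.mk (a) (t)) < B} with hBadDef
  have hBadFin : ∀ a, (Bad a).Finite := by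
    intro a
    have himg : (fun t => φ (Sym2.mk (a) (t))) '' Bad a ⊆ Set.Iio B := by
      rintro _ ⟨t, ht, rfl⟩
      exact ht.2.2.2
    have hinjOn : Set.InjOn (fun t => φ (Sym2.mk (a) (t))) (Bad a) := by
      rintro t1 ht1 t2 ht2 h
      have hp : Sym2.mk (a) (t1) ∈ pairsOf T :=
        ⟨a, t1, (ht1.2.1).symm, ht1.2.2.1, ht1.1, rfl⟩
      have hq : Sym2.mk (a) (t2) ∈ pairsOf T :=
        ⟨a, t2, (ht2.2.1).symm, ht2.2.2.1, ht2.1, rfl⟩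
      have := hinj _ hp _ hq h
      rw [Sym2.eq_iff] at this
      rcases this with ⟨-, h'⟩ | ⟨h1, h2⟩
      · exact h'
      · rw [h2, h1]
    exact Set.Finite.of_finite_image ((Set.finite_Iio B).subset himg) hinjOn
  have hfin : ((⋃ a ∈ (F : Set ℕ), Bad a) ∪ Set.Iic N).Finite :=
    (Set.Finite.biUnion F.finite_toSet (fun a _ => hBadFin a)).union (Set.finite_Iic N)
  obtain ⟨t, htT, htn⟩ := (hT.diff hfin).nonempty
  refine ⟨t, htT, ?_, ?_⟩
  · by_contra h
    exact htn (Or.inr (Set.mem_Iic.mpr (not_lt.mp h)))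
  · intro a haF haT hat
    by_contra h
    exact htn (Or.inl (Set.mem_biUnion haF ⟨htT, fun h' => hat (h'.symm), haT, not_le.mp h⟩))

noncomputable def seq (T : Set ℕ) (hT : T.Infinite) (φ : Sym2 ℕ → ℕ)
    (hinj : ∀ p ∈ pairsOf T, ∀ q ∈ pairsOf T, φ p = φ q → p = q) : ℕ → ℕ
  | n =>
    (exists_good T hT φ hinj
      ((Finset.range n).attach.image (fun m => seq T hT φ hinj m.1))
      (((Finset.range n).attach.image (fun m => seq T hT φ hinj m.1)).sup id)
      (4 ^ n)).choose
  decreasing_by all_goals exact Finset.mem_range.mp m.2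

lemma seq_spec (T : Set ℕ) (hT : T.Infinite) (φ : Sym2 ℕ → ℕ)
    (hinj : ∀ p ∈ pairsOf T, ∀ q ∈ pairsOf T, φ p = φ q → p = q) (n : ℕ) :
    seq T hT φ hinj n ∈ T ∧
    (((Finset.range n).attach.image (fun m => seq T hT φ hinj m.1)).sup id)
      < seq T hT φ hinj n ∧
    ∀ a ∈ (Finset.range n).attach.image (fun m => seq T hT φ hinj m.1),
      a ∈ T → a ≠ seq T hT φ hinj n → 4 ^ n ≤ φ (Sym2.mk (a) (seq T hT φ hinj n)) := by
  rw [seq]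
  exact (exists_good T hT φ hinj _ _ _).choose_spec

lemma seq_mem (T : Set ℕ) (hT : T.Infinite) (φ : Sym2 ℕ → ℕ)
    (hinj : ∀ p ∈ pairsOf T, ∀ q ∈ pairsOf T, φ p = φ q → p = q) (n : ℕ) :
    seq T hT φ hinj n ∈ T := (seq_spec T hT φ hinj n).1

lemma seq_mono (T : Set ℕ) (hT : T.Infinite) (φ : Sym2 ℕ → ℕ)
    (hinj : ∀ p ∈ pairsOf T, ∀ q ∈ pairsOf T, φ p = φ q → p = q) :
    StrictMono (seq T hT φ hinj) := by
  intro m n hmn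
  have hmem : seq T hT φ hinj m ∈
      (Finset.range n).attach.image (fun m => seq T hT φ hinj m.1) :=
    Finset.mem_image.mpr ⟨⟨m, Finset.mem_range.mpr hmn⟩, Finset.mem_attach _ _, rfl⟩
  exact lt_of_le_of_lt (Finset.le_sup (f := id) hmem) (seq_spec T hT φ hinj n).2.1

lemma seq_key (T : Set ℕ) (hT : T.Infinite) (φ : Sym2 ℕ → ℕ)
    (hinj : ∀ p ∈ pairsOf T, ∀ q ∈ pairsOf T, φ p = φ q → p = q)
    {m n : ℕ} (hmn : m < n) :
    4 ^ n ≤ φ (Sym2.mk (seq T hT φ hinj m) (seq T hT φ hinj n)) := by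
  have hmem : seq T hT φ hinj m ∈
      (Finset.range n).attach.image (fun m => seq T hT φ hinj m.1) :=
    Finset.mem_image.mpr ⟨⟨m, Finset.mem_range.mpr hmn⟩, Finset.mem_attach _ _, rfl⟩
  exact (seq_spec T hT φ hinj n).2.2 _ hmem (seq_mem T hT φ hinj m)
    (seq_mono T hT φ hinj hmn).ne

theorem canonical_ramsey_injective_case (T : Set ℕ) (hT : T.Infinite)
    (φ : Sym2 ℕ → ℕ)
    (hinj : ∀ p ∈ pairsOf T, ∀ q ∈ pairsOf T, φ p = φ q → p = q) :
    ∃ H : Set ℕ, H ⊆ T ∧ H.Infinite ∧ InSummable (φ '' pairsOf H) := by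
  classical
  set s := seq T hT φ hinj with hs
  refine ⟨Set.range s, ?_, ?_, ?_⟩
  · rintro _ ⟨n, rfl⟩; exact seq_mem T hT φ hinj n
  · exact Set.infinite_range_of_injective (seq_mono T hT φ hinj).injective
  · unfold InSummable
    set H := Set.range s with hH
    have hy : ∀ y : ↥(φ '' pairsOf H), ∃ i j : ℕ, i < j ∧
        φ (Sym2.mk (s i) (s j)) = (y : ℕ) := by
      rintro ⟨y, p, hp, rfl⟩
      obtain ⟨a, b, hab, ha, hb, rfl⟩ := hp
      obtain ⟨m, rfl⟩ := ha
      obtain ⟨n, rfl⟩ := hb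
      have hmn : m ≠ n := fun h => hab (by rw [h])
      rcases hmn.lt_or_gt with h | h
      · exact ⟨m, n, h, rfl⟩
      · exact ⟨n, m, h, by rw [Sym2.eq_swap]⟩
    choose i j hij hφ using hy
    have hi : Function.Injective (fun y : ↥(φ '' pairsOf H) => (i y, j y)) := by
      intro y y' h
      have h1 : i y = i y' := congrArg Prod.fst h
      have h2 : j y = j y' := congrArg Prod.snd h
      have : (y : ℕ) = (y' : ℕ) := by rw [← hφ y, ← hφ y', h1, h2]
      exact Subtype.ext this
    have hg : Summable (fun p : ℕ × ℕ => (1 / 2 : ℝ) ^ p.1 * (1 / 2 : ℝ) ^ p.2) :=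
      Summable.mul_of_nonneg summable_geometric_two summable_geometric_two
        (fun _ => by positivity) (fun _ => by positivity)
    have hcomp := hg.comp_injective hi
    refine Summable.of_nonneg_of_le (fun y => by positivity) ?_ hcomp
    intro y
    have h4 : 4 ^ (j y) ≤ (y : ℕ) := by
      rw [← hφ y]; exact seq_key T hT φ hinj (hij y)
    have hpow : 2 ^ (i y + j y) ≤ (y : ℕ) + 1 := by
      calc 2 ^ (i y + j y) ≤ 2 ^ (j y + j y) :=
            Nat.pow_le_pow_right (by norm_num) (Nat.add_le_add_right (hij y).le _)
        _ = 4 ^ (j y) := by rw [← two_mul, pow_mul]; norm_num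
        _ ≤ (y : ℕ) + 1 := le_trans h4 (Nat.le_succ _)
    have hpowR : (2 : ℝ) ^ (i y + j y) ≤ (y : ℕ) + 1 := by
      calc (2 : ℝ) ^ (i y + j y) = ((2 ^ (i y + j y) : ℕ) : ℝ) := by push_cast; ring
        _ ≤ (((y : ℕ) + 1 : ℕ) : ℝ) := by exact_mod_cast hpow
        _ = (y : ℕ) + 1 := by push_cast; ring
    have : (1 : ℝ) / ((y : ℕ) + 1) ≤ 1 / 2 ^ (i y + j y) :=
      one_div_le_one_div_of_le (by positivity) hpowR
    calc (1 : ℝ) / ((y : ℕ) + 1) ≤ 1 / 2 ^ (i y + j y) := this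
      _ = (1 / 2 : ℝ) ^ (i y) * (1 / 2 : ℝ) ^ (j y) := by
          rw [pow_add, one_div_pow, one_div_pow, one_div_mul_one_div]
end

section
/- The Hindman ideal is not Katětov below the Ramsey ideal: there is no function f : [ℕ]² → ℕ such that f⁻¹[A] ∈ R for every A in the Hindman ideal. -/
section AuxHelpers

lemma mem_FS_single {B : Set ℕ} {x : ℕ} (hx : x ∈ B) : x ∈ FS B :=
  ⟨{x}, Finset.singleton_nonempty x, by simpa using hx, by simp⟩

lemma mem_FS_pair {B : Set ℕ} {x y : ℕ} (hx : x ∈ B) (hy : y ∈ B) (hxy : x ≠ y) :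
    x + y ∈ FS B := by
  refine ⟨{x, y}, by simp, ?_, by rw [Finset.sum_pair hxy]; rfl⟩
  intro z hz
  simp only [Finset.coe_insert, Finset.coe_singleton, Set.mem_insert_iff,
    Set.mem_singleton_iff] at hz
  rcases hz with rfl | rfl <;> assumption

lemma inHindman_mono {A A' : Set ℕ} (h : A ⊆ A') (h' : InHindman A') : InHindman A :=
  fun B hB hsub => h' B hB (fun x hx => h (hsub hx))

lemma infinite_three_pos {B : Set ℕ} (hB : B.Infinite) :
    ∃ b₁ b₂ b₃ : ℕ, b₁ ∈ B ∧ b₂ ∈ B ∧ b₃ ∈ B ∧ 0 < b₁ ∧ b₁ < b₂ ∧ b₂ < b₃ := by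
  have h1 : (B \ Set.Iic 0).Infinite := hB.diff (Set.finite_Iic 0)
  obtain ⟨b₁, hb₁⟩ := h1.nonempty
  obtain ⟨b₂, hb₂⟩ := (h1.diff (Set.finite_Iic b₁)).nonempty
  obtain ⟨b₃, hb₃⟩ := ((h1.diff (Set.finite_Iic b₁)).diff (Set.finite_Iic b₂)).nonempty
  simp only [Set.mem_diff, Set.mem_Iic, not_le] at hb₁ hb₂ hb₃
  exact ⟨b₁, b₂, b₃, hb₁.1, hb₂.1.1, hb₃.1.1.1, hb₁.2, hb₂.2, hb₃.2⟩

lemma subsingleton_inHindman {v : ℕ} {A : Set ℕ} (h : A ⊆ {v}) : InHindman A := by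
  intro B hB hsub
  obtain ⟨b₁, b₂, _, h1, h2, _, _, hlt, _⟩ := infinite_three_pos hB
  have e1 := h (hsub (mem_FS_single h1))
  have e2 := h (hsub (mem_FS_single h2))
  simp only [Set.mem_singleton_iff] at e1 e2
  omega

lemma doubling_inHindman {W : Set ℕ} (h : ∀ x ∈ W, ∀ y ∈ W, x < y → 2 * x < y) :
    InHindman W := by
  intro B hB hsub
  obtain ⟨b₁, b₂, _, h1, h2, _, hp, hlt, _⟩ := infinite_three_pos hB
  have m2 : b₂ ∈ W := hsub (mem_FS_single h2)
  have m12 : b₁ + b₂ ∈ W := hsub (mem_FS_pair h1 h2 (by omega))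
  have := h b₂ m2 (b₁ + b₂) m12 (by omega)
  omega

lemma transl {f : Sym2 ℕ → ℕ} {e : ℕ → ℕ} (he : StrictMono e) (I : Set ℕ) {x : ℕ}
    (hx : x ∈ f '' pairsOf (e '' I)) :
    ∃ A B : ℕ, A ∈ I ∧ B ∈ I ∧ A < B ∧ f (Sym2.mk (e A) (e B)) = x := by
  obtain ⟨p, hp, rfl⟩ := hx
  obtain ⟨a, b, hab, ha, hb, rfl⟩ := hp
  obtain ⟨A, hA, rfl⟩ := ha
  obtain ⟨B, hB, rfl⟩ := hb
  have hne : A ≠ B := fun h => hab (by rw [h])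
  rcases hne.lt_or_gt with h | h
  · exact ⟨A, B, hA, hB, h, rfl⟩
  · exact ⟨B, A, hB, hA, h, by rw [Sym2.eq_swap]⟩

end AuxHelpers

theorem myRamsey (γ : Type) [Finite γ] :
    ∀ (r : ℕ) (c : (Fin r → ℕ) → γ) (S : Set ℕ), S.Infinite →
      ∃ T : Set ℕ, T ⊆ S ∧ T.Infinite ∧ ∃ g : γ, ∀ x : Fin r → ℕ,
        StrictMono x → (∀ i, x i ∈ T) → c x = g := by
  intro r
  induction r with
  | zero =>
    intro c S hS
    refine ⟨S, subset_rfl, hS, c (fun i => i.elim0), ?_⟩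
    intro x _ _
    have : x = fun i => i.elim0 := funext fun i => i.elim0
    rw [this]
  | succ r ih =>
    intro c S hS
    have hstep : ∀ S' : Set ℕ, S'.Infinite → ∃ T' : Set ℕ,
        T' ⊆ S' ∧ T'.Infinite ∧ (∀ x ∈ T', sInf S' < x) ∧
        ∃ g0 : γ, ∀ y : Fin r → ℕ, StrictMono y → (∀ i, y i ∈ T') →
          c (Fin.cons (sInf S') y) = g0 := by
      intro S' hS'
      have hS'' : (S' \ Set.Iic (sInf S')).Infinite := hS'.diff (Set.finite_Iic _)
      obtain ⟨T', hT'sub, hT'inf, g0, hg0⟩ :=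
        ih (fun y => c (Fin.cons (sInf S') y)) _ hS''
      refine ⟨T', fun x hx => (hT'sub hx).1, hT'inf, ?_, g0, hg0⟩
      intro x hx
      have := (hT'sub hx).2
      simp only [Set.mem_Iic, not_le] at this
      exact this
    classical
    let next : {S' : Set ℕ // S'.Infinite} → {S' : Set ℕ // S'.Infinite} :=
      fun P => ⟨(hstep P.1 P.2).choose, (hstep P.1 P.2).choose_spec.2.1⟩
    let chain : ℕ → {S' : Set ℕ // S'.Infinite} :=
      fun n => Nat.rec ⟨S, hS⟩ (fun _ P => next P) n
    have hch : ∀ n, chain (n + 1) = next (chain n) := fun _ => rfl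
    let a : ℕ → ℕ := fun n => sInf (chain n).1
    let gseq : ℕ → γ := fun n =>
      (hstep (chain n).1 (chain n).2).choose_spec.2.2.2.choose
    have fact1 : ∀ n, (chain (n + 1)).1 ⊆ (chain n).1 := by
      intro n
      rw [hch n]
      exact (hstep (chain n).1 (chain n).2).choose_spec.1
    have fact2 : ∀ n, ∀ x ∈ (chain (n + 1)).1, a n < x := by
      intro n
      rw [hch n]
      exact (hstep (chain n).1 (chain n).2).choose_spec.2.2.1
    have fact3 : ∀ n, ∀ y : Fin r → ℕ, StrictMono y →
        (∀ i, y i ∈ (chain (n + 1)).1) → c (Fin.cons (a n) y) = gseq n := by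
      intro n
      rw [hch n]
      exact (hstep (chain n).1 (chain n).2).choose_spec.2.2.2.choose_spec
    have fact4 : ∀ n m, n ≤ m → (chain m).1 ⊆ (chain n).1 := by
      intro n m h
      induction m, h using Nat.le_induction with
      | base => exact subset_rfl
      | succ m hm ihm => exact (fact1 m).trans ihm
    have fact5 : ∀ n, a n ∈ (chain n).1 := fun n => Nat.sInf_mem (chain n).2.nonempty
    have fact6 : StrictMono a := by
      apply strictMono_nat_of_lt_succ
      intro n
      exact fact2 n _ (fact5 (n + 1))
    obtain ⟨g0, hI⟩ : ∃ g0 : γ, {n | gseq n = g0}.Infinite := by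
      by_contra hcon
      push_neg at hcon
      have hfin : ∀ g0 : γ, {n | gseq n = g0}.Finite :=
        fun g0 => hcon g0
      have : (Set.univ : Set ℕ).Finite := by
        refine (Set.finite_iUnion fun g0 : γ => hfin g0).subset ?_
        intro n _
        exact Set.mem_iUnion.2 ⟨gseq n, rfl⟩
      exact Set.infinite_univ this
    refine ⟨a '' {n | gseq n = g0}, ?_, hI.image (fact6.injective.injOn), g0, ?_⟩
    · rintro x ⟨n, _, rfl⟩
      exact fact4 0 n (Nat.zero_le n) (fact5 n)
    · intro x hx hxT
      obtain ⟨n₀, hn₀, hx0⟩ := hxT 0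
      have htail_mono : StrictMono (Fin.tail x) := by
        intro i j hij
        exact hx (by rw [Fin.lt_def, Fin.val_succ, Fin.val_succ]; exact Nat.add_lt_add_right hij 1)
      have htail_mem : ∀ i, Fin.tail x i ∈ (chain (n₀ + 1)).1 := by
        intro i
        obtain ⟨m, _, hm⟩ := hxT i.succ
        have hgt : a n₀ < a m := by
          rw [hx0, hm]
          exact hx (Fin.succ_pos i)
        have : n₀ < m := fact6.lt_iff_lt.mp hgt
        rw [Fin.tail, ← hm]
        exact fact4 (n₀ + 1) m this (fact5 m)
      have : c x = gseq n₀ := by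
        rw [← Fin.cons_self_tail x, ← hx0]
        exact fact3 n₀ _ htail_mono htail_mem
      rw [this, hn₀]

set_option maxHeartbeats 1000000 in
lemma shape' (a1 b1 a2 b2 a3 b3 : ℕ) (o1 : a1<b1) (o2 : a2<b2) (o3 : a3<b3)
    (d12 : ¬(a1=a2 ∧ b1=b2)) (d13 : ¬(a1=a3 ∧ b1=b3)) (d23 : ¬(a2=a3 ∧ b2=b3))
    (m3a : a3=a1 ∨ a3=b1 ∨ a3=a2 ∨ a3=b2)
    (m3b : b3=a1 ∨ b3=b1 ∨ b3=a2 ∨ b3=b2)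
    (m1a : a1=a2 ∨ a1=b2 ∨ a1=a3 ∨ a1=b3)
    (m1b : b1=a2 ∨ b1=b2 ∨ b1=a3 ∨ b1=b3)
    (m2a : a2=a1 ∨ a2=b1 ∨ a2=a3 ∨ a2=b3)
    (m2b : b2=a1 ∨ b2=b1 ∨ b2=a3 ∨ b2=b3) :
    (a1=a3 ∧ b1=a2 ∧ b2=b3)
  ∨ (a2=a3 ∧ b2=a1 ∧ b1=b3)
  ∨ (a1=a2 ∧ b1=a3 ∧ b2=b3)
  ∨ (a1=a2 ∧ b2=a3 ∧ b1=b3)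
  ∨ (b1=b2 ∧ a1=a3 ∧ a2=b3)
  ∨ (b1=b2 ∧ a2=a3 ∧ a1=b3) := by
  rcases m3a with h|h|h|h <;> rcases m3b with h'|h'|h'|h' <;>
    rcases m1b with h2|h2|h2|h2 <;> omega

lemma mk3 {a b c : ℕ} (hab : a < b) (hbc : b < c) :
    ∃ σ : Fin 6 → ℕ, StrictMono σ ∧ σ 0 = a ∧ σ 1 = b ∧ σ 2 = c := by
  refine ⟨fun p => if p.val = 0 then a else if p.val = 1 then b else c + p.val - 2, ?_, ?_, ?_, ?_⟩
  · intro p q hpq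
    have hp := p.isLt
    have hq := q.isLt
    have hv : p.val < q.val := hpq
    simp only
    split_ifs <;> omega
  · simp
  · norm_num
  · norm_num

lemma mkSpaced {P Q R : Fin 6} (hPQ : P < Q) (hQR : Q < R) {a b c : ℕ}
    (ha : 5 ≤ a) (hb : a + 5 ≤ b) (hc : b + 5 ≤ c) :
    ∃ σ : Fin 6 → ℕ, StrictMono σ ∧ σ P = a ∧ σ Q = b ∧ σ R = c := by
  have hPQ' : P.val < Q.val := hPQ
  have hQR' : Q.val < R.val := hQR
  refine ⟨fun p => if p.val < P.val then p.val
    else if p.val < Q.val then a + (p.val - P.val)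
    else if p.val < R.val then b + (p.val - Q.val)
    else c + (p.val - R.val), ?_, ?_, ?_, ?_⟩
  · intro p q hpq
    have hp := p.isLt
    have hq := q.isLt
    have hPl := P.isLt
    have hQl := Q.isLt
    have hRl := R.isLt
    have hv : p.val < q.val := hpq
    simp only
    split_ifs <;> omega
  · simp only
    rw [if_neg (by omega), if_pos (by omega)]
    omega
  · simp only
    rw [if_neg (by omega), if_neg (by omega), if_pos (by omega)]
    omega
  · simp only
    rw [if_neg (by omega), if_neg (by omega), if_neg (by omega)]
    omega

set_option maxHeartbeats 2000000 in
lemma key (φ : ℕ → ℕ → ℕ) (gS : Fin 6 → Fin 6 → Fin 6 → Fin 6 → Fin 6 → Fin 6 → Bool)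
    (hHom : ∀ σ : Fin 6 → ℕ, StrictMono σ → ∀ i j k l m n : Fin 6,
      (φ (σ i) (σ j) + φ (σ k) (σ l) = φ (σ m) (σ n) ↔ gS i j k l m n = true))
    (SI1 : ∀ a b c : ℕ, a < b → b < c → φ a b ≠ φ a c)
    (SI3 : ∀ a b c : ℕ, a < b → b < c → φ a c ≠ φ b c)
    {i₁ j₁ i₂ j₂ i₃ j₃ : ℕ} (o₁ : i₁ < j₁) (o₂ : i₂ < j₂) (o₃ : i₃ < j₃)
    (d₁₂ : ¬(i₁ = i₂ ∧ j₁ = j₂)) (d₁₃ : ¬(i₁ = i₃ ∧ j₁ = j₃)) (d₂₃ : ¬(i₂ = i₃ ∧ j₂ = j₃))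
    (heq : φ i₁ j₁ + φ i₂ j₂ = φ i₃ j₃) :
    j₁ = i₂ ∨ j₂ = i₁ := by
  classical
  have hcard : ({i₁, j₁, i₂, j₂, i₃, j₃} : Finset ℕ).card ≤ 6 := by
    have h1 := Finset.card_insert_le i₁ ({j₁, i₂, j₂, i₃, j₃} : Finset ℕ)
    have h2 := Finset.card_insert_le j₁ ({i₂, j₂, i₃, j₃} : Finset ℕ)
    have h3 := Finset.card_insert_le i₂ ({j₂, i₃, j₃} : Finset ℕ)
    have h4 := Finset.card_insert_le j₂ ({i₃, j₃} : Finset ℕ)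
    have h5 := Finset.card_insert_le i₃ ({j₃} : Finset ℕ)
    have h6 : ({j₃} : Finset ℕ).card = 1 := Finset.card_singleton j₃
    omega
  obtain ⟨t, hst, htc⟩ := Infinite.exists_superset_card_eq _ 6 hcard
  set σ : Fin 6 → ℕ := fun p => ((t.orderIsoOfFin htc) p : ℕ) with hσdef
  have hσmono : StrictMono σ := fun p q hpq =>
    Subtype.coe_lt_coe.mpr ((t.orderIsoOfFin htc).lt_iff_lt.mpr hpq)
  have hσsurj : ∀ x ∈ ({i₁, j₁, i₂, j₂, i₃, j₃} : Finset ℕ), ∃ p, σ p = x := by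
    intro x hx
    refine ⟨(t.orderIsoOfFin htc).symm ⟨x, hst hx⟩, ?_⟩
    show ((t.orderIsoOfFin htc) ((t.orderIsoOfFin htc).symm ⟨x, hst hx⟩) : ℕ) = x
    rw [OrderIso.apply_symm_apply]
  obtain ⟨A₁, hA₁⟩ := hσsurj i₁ (by simp)
  obtain ⟨B₁, hB₁⟩ := hσsurj j₁ (by simp)
  obtain ⟨A₂, hA₂⟩ := hσsurj i₂ (by simp)
  obtain ⟨B₂, hB₂⟩ := hσsurj j₂ (by simp)
  obtain ⟨A₃, hA₃⟩ := hσsurj i₃ (by simp)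
  obtain ⟨B₃, hB₃⟩ := hσsurj j₃ (by simp)
  have v1 : A₁.val < B₁.val := hσmono.lt_iff_lt.mp (by rw [hA₁, hB₁]; exact o₁)
  have v2 : A₂.val < B₂.val := hσmono.lt_iff_lt.mp (by rw [hA₂, hB₂]; exact o₂)
  have v3 : A₃.val < B₃.val := hσmono.lt_iff_lt.mp (by rw [hA₃, hB₃]; exact o₃)
  have vd12 : ¬(A₁.val = A₂.val ∧ B₁.val = B₂.val) := by
    rintro ⟨h, h'⟩
    exact d₁₂ ⟨by rw [← hA₁, ← hA₂, Fin.ext h], by rw [← hB₁, ← hB₂, Fin.ext h']⟩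
  have vd13 : ¬(A₁.val = A₃.val ∧ B₁.val = B₃.val) := by
    rintro ⟨h, h'⟩
    exact d₁₃ ⟨by rw [← hA₁, ← hA₃, Fin.ext h], by rw [← hB₁, ← hB₃, Fin.ext h']⟩
  have vd23 : ¬(A₂.val = A₃.val ∧ B₂.val = B₃.val) := by
    rintro ⟨h, h'⟩
    exact d₂₃ ⟨by rw [← hA₂, ← hA₃, Fin.ext h], by rw [← hB₂, ← hB₃, Fin.ext h']⟩
  have hGS : gS A₁ B₁ A₂ B₂ A₃ B₃ = true :=
    (hHom σ hσmono A₁ B₁ A₂ B₂ A₃ B₃).mp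
      (by rw [hA₁, hB₁, hA₂, hB₂, hA₃, hB₃]; exact heq)
  have Rel : ∀ τ : Fin 6 → ℕ, StrictMono τ →
      φ (τ A₁) (τ B₁) + φ (τ A₂) (τ B₂) = φ (τ A₃) (τ B₃) :=
    fun τ hτ => (hHom τ hτ A₁ B₁ A₂ B₂ A₃ B₃).mpr hGS
  have mono1 : StrictMono (fun p : Fin 6 => 2 * p.val) := by
    intro p q h
    have : p.val < q.val := h
    simp only
    omega
  have E₁ : φ (2 * A₁.val) (2 * B₁.val) + φ (2 * A₂.val) (2 * B₂.val)
      = φ (2 * A₃.val) (2 * B₃.val) := Rel _ mono1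
  have mono2 : ∀ u : Fin 6, StrictMono (fun p : Fin 6 => 2 * p.val + if p = u then 1 else 0) := by
    intro u p q h
    have hv : p.val < q.val := h
    by_cases hp : p = u <;> by_cases hq : q = u <;> simp [hp, hq] <;> omega
  have E₂gen : ∀ u : Fin 6,
      φ (2 * A₁.val + if A₁ = u then 1 else 0) (2 * B₁.val + if B₁ = u then 1 else 0) +
      φ (2 * A₂.val + if A₂ = u then 1 else 0) (2 * B₂.val + if B₂ = u then 1 else 0) =
      φ (2 * A₃.val + if A₃ = u then 1 else 0) (2 * B₃.val + if B₃ = u then 1 else 0) :=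
    fun u => Rel _ (mono2 u)
  -- refutation: a position private to π₃
  have refute3 : ∀ u : Fin 6, (u = A₃ ∨ u = B₃) →
      u ≠ A₁ → u ≠ B₁ → u ≠ A₂ → u ≠ B₂ → False := by
    intro u hu h1 h2 h3 h4
    have E₂ := E₂gen u
    rw [if_neg (show ¬(A₁ = u) from fun h => h1 h.symm),
        if_neg (show ¬(B₁ = u) from fun h => h2 h.symm),
        if_neg (show ¬(A₂ = u) from fun h => h3 h.symm),
        if_neg (show ¬(B₂ = u) from fun h => h4 h.symm)] at E₂
    rcases hu with h | h
    · rw [if_pos (show A₃ = u from h.symm),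
          if_neg (show ¬(B₃ = u) from fun hh => by
            have := congrArg Fin.val (hh.trans h)
            omega)] at E₂
      simp only [add_zero] at E₂
      have hne := SI3 (2 * A₃.val) (2 * A₃.val + 1) (2 * B₃.val) (by omega) (by omega)
      omega
    · rw [if_pos (show B₃ = u from h.symm),
          if_neg (show ¬(A₃ = u) from fun hh => by
            have := congrArg Fin.val (hh.trans h)
            omega)] at E₂
      simp only [add_zero] at E₂
      have hne := SI1 (2 * A₃.val) (2 * B₃.val) (2 * B₃.val + 1) (by omega) (by omega)
      omega
  -- refutation: a position private to π₁
  have refute1 : ∀ u : Fin 6, (u = A₁ ∨ u = B₁) →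
      u ≠ A₂ → u ≠ B₂ → u ≠ A₃ → u ≠ B₃ → False := by
    intro u hu h1 h2 h3 h4
    have E₂ := E₂gen u
    rw [if_neg (show ¬(A₂ = u) from fun h => h1 h.symm),
        if_neg (show ¬(B₂ = u) from fun h => h2 h.symm),
        if_neg (show ¬(A₃ = u) from fun h => h3 h.symm),
        if_neg (show ¬(B₃ = u) from fun h => h4 h.symm)] at E₂
    rcases hu with h | h
    · rw [if_pos (show A₁ = u from h.symm),
          if_neg (show ¬(B₁ = u) from fun hh => by
            have := congrArg Fin.val (hh.trans h)
            omega)] at E₂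
      simp only [add_zero] at E₂
      have hne := SI3 (2 * A₁.val) (2 * A₁.val + 1) (2 * B₁.val) (by omega) (by omega)
      omega
    · rw [if_pos (show B₁ = u from h.symm),
          if_neg (show ¬(A₁ = u) from fun hh => by
            have := congrArg Fin.val (hh.trans h)
            omega)] at E₂
      simp only [add_zero] at E₂
      have hne := SI1 (2 * A₁.val) (2 * B₁.val) (2 * B₁.val + 1) (by omega) (by omega)
      omega
  -- refutation: a position private to π₂
  have refute2 : ∀ u : Fin 6, (u = A₂ ∨ u = B₂) →
      u ≠ A₁ → u ≠ B₁ → u ≠ A₃ → u ≠ B₃ → False := by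
    intro u hu h1 h2 h3 h4
    have E₂ := E₂gen u
    rw [if_neg (show ¬(A₁ = u) from fun h => h1 h.symm),
        if_neg (show ¬(B₁ = u) from fun h => h2 h.symm),
        if_neg (show ¬(A₃ = u) from fun h => h3 h.symm),
        if_neg (show ¬(B₃ = u) from fun h => h4 h.symm)] at E₂
    rcases hu with h | h
    · rw [if_pos (show A₂ = u from h.symm),
          if_neg (show ¬(B₂ = u) from fun hh => by
            have := congrArg Fin.val (hh.trans h)
            omega)] at E₂
      simp only [add_zero] at E₂
      have hne := SI3 (2 * A₂.val) (2 * A₂.val + 1) (2 * B₂.val) (by omega) (by omega)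
      omega
    · rw [if_pos (show B₂ = u from h.symm),
          if_neg (show ¬(A₂ = u) from fun hh => by
            have := congrArg Fin.val (hh.trans h)
            omega)] at E₂
      simp only [add_zero] at E₂
      have hne := SI1 (2 * A₂.val) (2 * B₂.val) (2 * B₂.val + 1) (by omega) (by omega)
      omega
  have m3a : A₃.val = A₁.val ∨ A₃.val = B₁.val ∨ A₃.val = A₂.val ∨ A₃.val = B₂.val := by
    by_contra hc
    push_neg at hc
    exact refute3 A₃ (Or.inl rfl) (fun h => hc.1 (congrArg Fin.val h))
      (fun h => hc.2.1 (congrArg Fin.val h)) (fun h => hc.2.2.1 (congrArg Fin.val h))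
      (fun h => hc.2.2.2 (congrArg Fin.val h))
  have m3b : B₃.val = A₁.val ∨ B₃.val = B₁.val ∨ B₃.val = A₂.val ∨ B₃.val = B₂.val := by
    by_contra hc
    push_neg at hc
    exact refute3 B₃ (Or.inr rfl) (fun h => hc.1 (congrArg Fin.val h))
      (fun h => hc.2.1 (congrArg Fin.val h)) (fun h => hc.2.2.1 (congrArg Fin.val h))
      (fun h => hc.2.2.2 (congrArg Fin.val h))
  have m1a : A₁.val = A₂.val ∨ A₁.val = B₂.val ∨ A₁.val = A₃.val ∨ A₁.val = B₃.val := by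
    by_contra hc
    push_neg at hc
    exact refute1 A₁ (Or.inl rfl) (fun h => hc.1 (congrArg Fin.val h))
      (fun h => hc.2.1 (congrArg Fin.val h)) (fun h => hc.2.2.1 (congrArg Fin.val h))
      (fun h => hc.2.2.2 (congrArg Fin.val h))
  have m1b : B₁.val = A₂.val ∨ B₁.val = B₂.val ∨ B₁.val = A₃.val ∨ B₁.val = B₃.val := by
    by_contra hc
    push_neg at hc
    exact refute1 B₁ (Or.inr rfl) (fun h => hc.1 (congrArg Fin.val h))
      (fun h => hc.2.1 (congrArg Fin.val h)) (fun h => hc.2.2.1 (congrArg Fin.val h))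
      (fun h => hc.2.2.2 (congrArg Fin.val h))
  have m2a : A₂.val = A₁.val ∨ A₂.val = B₁.val ∨ A₂.val = A₃.val ∨ A₂.val = B₃.val := by
    by_contra hc
    push_neg at hc
    exact refute2 A₂ (Or.inl rfl) (fun h => hc.1 (congrArg Fin.val h))
      (fun h => hc.2.1 (congrArg Fin.val h)) (fun h => hc.2.2.1 (congrArg Fin.val h))
      (fun h => hc.2.2.2 (congrArg Fin.val h))
  have m2b : B₂.val = A₁.val ∨ B₂.val = B₁.val ∨ B₂.val = A₃.val ∨ B₂.val = B₃.val := by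
    by_contra hc
    push_neg at hc
    exact refute2 B₂ (Or.inr rfl) (fun h => hc.1 (congrArg Fin.val h))
      (fun h => hc.2.1 (congrArg Fin.val h)) (fun h => hc.2.2.1 (congrArg Fin.val h))
      (fun h => hc.2.2.2 (congrArg Fin.val h))
  rcases shape' A₁.val B₁.val A₂.val B₂.val A₃.val B₃.val v1 v2 v3 vd12 vd13 vd23
    m3a m3b m1a m1b m2a m2b with ⟨e1, e2, e3⟩ | ⟨e1, e2, e3⟩ | ⟨e1, e2, e3⟩ |
    ⟨e1, e2, e3⟩ | ⟨e1, e2, e3⟩ | ⟨e1, e2, e3⟩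
  · -- T1a : conclude j₁ = i₂
    left
    rw [← hB₁, ← hA₂]
    exact congrArg σ (Fin.ext e2)
  · -- T1b : conclude j₂ = i₁
    right
    rw [← hB₂, ← hA₁]
    exact congrArg σ (Fin.ext e2)
  · -- T2a : A₁=A₂, B₁=A₃, B₂=B₃
    exfalso
    have f1 : A₂ = A₁ := Fin.ext e1.symm
    have f2 : A₃ = B₁ := Fin.ext e2.symm
    have f3 : B₃ = B₂ := Fin.ext e3.symm
    have hQR : B₁ < B₂ := by
      rw [Fin.lt_def]
      omega
    have hRsp : ∀ a b c : ℕ, 5 ≤ a → a + 5 ≤ b → b + 5 ≤ c → φ a b + φ a c = φ b c := by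
      intro a b c ha hb hc
      obtain ⟨τ, hτ, hP, hQ, hR⟩ := mkSpaced (show A₁ < B₁ from Fin.lt_def.mpr v1) hQR ha hb hc
      have h := Rel τ hτ
      rw [f1, f2, f3, hP, hQ, hR] at h
      exact h
    have q1 := hRsp 5 10 15 (by omega) (by omega) (by omega)
    have q2 := hRsp 5 10 20 (by omega) (by omega) (by omega)
    have q3 := hRsp 5 15 20 (by omega) (by omega) (by omega)
    have q4 := hRsp 10 15 20 (by omega) (by omega) (by omega)
    have q5 := hRsp 5 15 25 (by omega) (by omega) (by omega)
    have q6 := hRsp 5 20 25 (by omega) (by omega) (by omega)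
    have q7 := hRsp 15 20 25 (by omega) (by omega) (by omega)
    have hne := SI1 5 10 15 (by omega) (by omega)
    omega
  · -- T2b : A₁=A₂, B₂=A₃, B₁=B₃
    exfalso
    have f1 : A₂ = A₁ := Fin.ext e1.symm
    have f2 : A₃ = B₂ := Fin.ext e2.symm
    have f3 : B₃ = B₁ := Fin.ext e3.symm
    have hPQ : A₁ < B₂ := by
      rw [Fin.lt_def]
      omega
    have hQR : B₂ < B₁ := by
      rw [Fin.lt_def]
      omega
    have hRsp : ∀ a b c : ℕ, 5 ≤ a → a + 5 ≤ b → b + 5 ≤ c → φ a b + φ a c = φ b c := by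
      intro a b c ha hb hc
      obtain ⟨τ, hτ, hP, hQ, hR⟩ := mkSpaced hPQ hQR ha hb hc
      have h := Rel τ hτ
      rw [f1, f2, f3, hP, hQ, hR] at h
      omega
    have q1 := hRsp 5 10 15 (by omega) (by omega) (by omega)
    have q2 := hRsp 5 10 20 (by omega) (by omega) (by omega)
    have q3 := hRsp 5 15 20 (by omega) (by omega) (by omega)
    have q4 := hRsp 10 15 20 (by omega) (by omega) (by omega)
    have q5 := hRsp 5 15 25 (by omega) (by omega) (by omega)
    have q6 := hRsp 5 20 25 (by omega) (by omega) (by omega)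
    have q7 := hRsp 15 20 25 (by omega) (by omega) (by omega)
    have hne := SI1 5 10 15 (by omega) (by omega)
    omega
  · -- T3a : B₁=B₂, A₁=A₃, A₂=B₃
    exfalso
    have f1 : B₂ = B₁ := Fin.ext e1.symm
    have f2 : A₃ = A₁ := Fin.ext e2.symm
    have f3 : B₃ = A₂ := Fin.ext e3.symm
    have hPQ : A₁ < A₂ := by
      rw [Fin.lt_def]
      omega
    have hQR : A₂ < B₁ := by
      rw [Fin.lt_def]
      omega
    have hRsp : ∀ a b c : ℕ, 5 ≤ a → a + 5 ≤ b → b + 5 ≤ c → φ a c + φ b c = φ a b := by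
      intro a b c ha hb hc
      obtain ⟨τ, hτ, hP, hQ, hR⟩ := mkSpaced hPQ hQR ha hb hc
      have h := Rel τ hτ
      rw [f1, f2, f3, hP, hQ, hR] at h
      exact h
    have q1 := hRsp 5 10 15 (by omega) (by omega) (by omega)
    have q2 := hRsp 5 10 20 (by omega) (by omega) (by omega)
    have q3 := hRsp 5 15 20 (by omega) (by omega) (by omega)
    have q4 := hRsp 10 15 20 (by omega) (by omega) (by omega)
    have q5 := hRsp 5 10 25 (by omega) (by omega) (by omega)
    have q6 := hRsp 5 15 25 (by omega) (by omega) (by omega)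
    have q7 := hRsp 10 15 25 (by omega) (by omega) (by omega)
    have hne := SI1 15 20 25 (by omega) (by omega)
    omega
  · -- T3b : B₁=B₂, A₂=A₃, A₁=B₃
    exfalso
    have f1 : B₂ = B₁ := Fin.ext e1.symm
    have f2 : A₃ = A₂ := Fin.ext e2.symm
    have f3 : B₃ = A₁ := Fin.ext e3.symm
    have hPQ : A₂ < A₁ := by
      rw [Fin.lt_def]
      omega
    have hQR : A₁ < B₁ := Fin.lt_def.mpr v1
    have hRsp : ∀ a b c : ℕ, 5 ≤ a → a + 5 ≤ b → b + 5 ≤ c → φ a c + φ b c = φ a b := by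
      intro a b c ha hb hc
      obtain ⟨τ, hτ, hP, hQ, hR⟩ := mkSpaced hPQ hQR ha hb hc
      have h := Rel τ hτ
      rw [f1, f2, f3, hP, hQ, hR] at h
      omega
    have q1 := hRsp 5 10 15 (by omega) (by omega) (by omega)
    have q2 := hRsp 5 10 20 (by omega) (by omega) (by omega)
    have q3 := hRsp 5 15 20 (by omega) (by omega) (by omega)
    have q4 := hRsp 10 15 20 (by omega) (by omega) (by omega)
    have q5 := hRsp 5 10 25 (by omega) (by omega) (by omega)
    have q6 := hRsp 5 15 25 (by omega) (by omega) (by omega)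
    have q7 := hRsp 10 15 25 (by omega) (by omega) (by omega)
    have hne := SI1 15 20 25 (by omega) (by omega)
    omega

instance : Finite (Fin 6 → Fin 6 → Fin 6 → Fin 6 → Fin 6 → Bool) := Pi.finite
instance : Finite (Fin 6 → Fin 6 → Fin 6 → Fin 6 → Fin 6 → Fin 6 → Bool) := Pi.finite

lemma oneCoord {f : Sym2 ℕ → ℕ} {e : ℕ → ℕ} (he : StrictMono e) (g : ℕ → ℕ)
    (hval : ∀ A B : ℕ, A < B →
      f (Sym2.mk (e A) (e B)) = g A ∨ f (Sym2.mk (e A) (e B)) = g B) :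
    ∃ H : Set ℕ, H.Infinite ∧ InHindman (f '' pairsOf H) := by
  classical
  by_cases hfib : ∃ v, {A | g A = v}.Infinite
  · obtain ⟨v, hI⟩ := hfib
    refine ⟨e '' {A | g A = v}, hI.image (he.injective.injOn),
      subsingleton_inHindman (v := v) ?_⟩
    intro x hx
    obtain ⟨A, B, hA, hB, hAB, hfx⟩ := transl he _ hx
    simp only [Set.mem_setOf_eq] at hA hB
    simp only [Set.mem_singleton_iff]
    rcases hval A B hAB with h | h
    · rw [← hfx, h, hA]
    · rw [← hfx, h, hB]
  · push_neg at hfib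
    have hfin : ∀ v, {A | g A = v}.Finite := fun v => hfib v
    have hnext : ∀ a : ℕ, ∃ b, a < b ∧ 2 * g a < g b := by
      intro a
      have hBadfin : ({b | g b ≤ 2 * g a} ∪ Set.Iic a).Finite := by
        refine Set.Finite.union ?_ (Set.finite_Iic a)
        have hEq : {b | g b ≤ 2 * g a} = ⋃ v ∈ Set.Iic (2 * g a), {A | g A = v} := by
          ext b
          simp only [Set.mem_setOf_eq, Set.mem_iUnion, Set.mem_Iic, exists_prop]
          constructor
          · intro h
            exact ⟨g b, h, rfl⟩
          · rintro ⟨v, hv, hvb⟩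
            rw [hvb]
            exact hv
        rw [hEq]
        exact Set.Finite.biUnion (Set.finite_Iic _) (fun v _ => hfin v)
      obtain ⟨b, hb⟩ := hBadfin.infinite_compl.nonempty
      rw [Set.mem_compl_iff, Set.mem_union] at hb
      push_neg at hb
      simp only [Set.mem_setOf_eq, Set.mem_Iic, not_le] at hb
      exact ⟨b, hb.2, hb.1⟩
    choose nxt hlt hgt using hnext
    let u : ℕ → ℕ := fun n => Nat.rec 0 (fun _ p => nxt p) n
    have hu : ∀ n, u (n + 1) = nxt (u n) := fun _ => rfl
    have humono : StrictMono u := strictMono_nat_of_lt_succ (fun n => by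
      rw [hu]
      exact hlt (u n))
    have hG : ∀ n, 2 * g (u n) < g (u (n + 1)) := fun n => by
      rw [hu]
      exact hgt (u n)
    have hGmono : ∀ m n, m ≤ n → g (u m) ≤ g (u n) := by
      intro m n h
      induction n, h using Nat.le_induction with
      | base => exact le_rfl
      | succ n hmn ih =>
        have := hG n
        omega
    have hGd : ∀ m n, m < n → 2 * g (u m) < g (u n) := by
      intro m n h
      have h1 := hG m
      have h2 := hGmono (m + 1) n h
      omega
    refine ⟨e '' Set.range u,
      ((Set.infinite_range_of_injective humono.injective).image (he.injective.injOn)),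
      inHindman_mono ?_ (doubling_inHindman (W := {x : ℕ | ∃ n, g (u n) = x}) ?_)⟩
    · intro x hx
      obtain ⟨A, B, hA, hB, hAB, hfx⟩ := transl he _ hx
      obtain ⟨m, rfl⟩ := hA
      obtain ⟨n, rfl⟩ := hB
      rcases hval _ _ hAB with h | h
      · exact ⟨m, by rw [← h]; exact hfx⟩
      · exact ⟨n, by rw [← h]; exact hfx⟩
    · rintro x ⟨m, rfl⟩ y ⟨n, rfl⟩ hxy
      have hmn : m < n := by
        by_contra hc
        push_neg at hc
        have := hGmono n m hc
        omega
      exact hGd m n hmn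

lemma main_comb (f : Sym2 ℕ → ℕ) :
    ∃ H : Set ℕ, H.Infinite ∧ InHindman (f '' pairsOf H) := by
  classical
  let c : (Fin 6 → ℕ) → ((Fin 6 → Fin 6 → Fin 6 → Fin 6 → Fin 6 → Fin 6 → Bool) ×
      (Fin 6 → Fin 6 → Fin 6 → Fin 6 → Bool)) := fun x =>
    (fun i j k l m n => decide (f (Sym2.mk (x i) (x j)) + f (Sym2.mk (x k) (x l)) =
        f (Sym2.mk (x m) (x n))),
     fun i j k l => decide (f (Sym2.mk (x i) (x j)) = f (Sym2.mk (x k) (x l))))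
  obtain ⟨T, _, hTinf, ⟨gS, gE⟩, hmono⟩ := myRamsey _ 6 c Set.univ Set.infinite_univ
  have hTnext : ∀ a : ℕ, ∃ b, a < b ∧ b ∈ T := by
    intro a
    obtain ⟨b, hb1, hb2⟩ := hTinf.exists_gt a
    exact ⟨b, hb2, hb1⟩
  choose nxt hlt hmem using hTnext
  let e : ℕ → ℕ := fun n => Nat.rec (nxt 0) (fun _ p => nxt p) n
  have he_succ : ∀ n, e (n + 1) = nxt (e n) := fun _ => rfl
  have he_mono : StrictMono e := strictMono_nat_of_lt_succ (fun n => by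
    rw [he_succ]
    exact hlt (e n))
  have he_mem : ∀ n, e n ∈ T := by
    intro n
    cases n with
    | zero => exact hmem 0
    | succ n =>
      rw [he_succ]
      exact hmem (e n)
  have hHomS : ∀ σ : Fin 6 → ℕ, StrictMono σ → ∀ i j k l m n : Fin 6,
      (f (Sym2.mk (e (σ i)) (e (σ j))) + f (Sym2.mk (e (σ k)) (e (σ l))) =
        f (Sym2.mk (e (σ m)) (e (σ n))) ↔ gS i j k l m n = true) := by
    intro σ hσ i j k l m n
    have h := hmono (fun p => e (σ p)) (he_mono.comp hσ) (fun p => he_mem (σ p))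
    have h1 : (c fun p => e (σ p)).1 = gS := by rw [h]
    have h2 := congrFun (congrFun (congrFun (congrFun (congrFun (congrFun h1 i) j) k) l) m) n
    rw [← h2]
    exact decide_eq_true_iff.symm
  have hHomE : ∀ σ : Fin 6 → ℕ, StrictMono σ → ∀ i j k l : Fin 6,
      (f (Sym2.mk (e (σ i)) (e (σ j))) = f (Sym2.mk (e (σ k)) (e (σ l))) ↔
        gE i j k l = true) := by
    intro σ hσ i j k l
    have h := hmono (fun p => e (σ p)) (he_mono.comp hσ) (fun p => he_mem (σ p))
    have h1 : (c fun p => e (σ p)).2 = gE := by rw [h]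
    have h2 := congrFun (congrFun (congrFun (congrFun h1 i) j) k) l
    rw [← h2]
    exact decide_eq_true_iff.symm
  have hE1 : ∀ a b c : ℕ, a < b → b < c →
      (f (Sym2.mk (e a) (e b)) = f (Sym2.mk (e a) (e c)) ↔ gE 0 1 0 2 = true) := by
    intro a b c hab hbc
    obtain ⟨σ, hσ, h0, h1, h2⟩ := mk3 hab hbc
    have := hHomE σ hσ 0 1 0 2
    rw [h0, h1, h2] at this
    exact this
  have hE2 : ∀ a b c : ℕ, a < b → b < c →
      (f (Sym2.mk (e a) (e c)) = f (Sym2.mk (e b) (e c)) ↔ gE 0 2 1 2 = true) := by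
    intro a b c hab hbc
    obtain ⟨σ, hσ, h0, h1, h2⟩ := mk3 hab hbc
    have := hHomE σ hσ 0 2 1 2
    rw [h0, h1, h2] at this
    exact this
  have hE3 : ∀ a b c : ℕ, a < b → b < c →
      (f (Sym2.mk (e a) (e b)) = f (Sym2.mk (e b) (e c)) ↔ gE 0 1 1 2 = true) := by
    intro a b c hab hbc
    obtain ⟨σ, hσ, h0, h1, h2⟩ := mk3 hab hbc
    have := hHomE σ hσ 0 1 1 2
    rw [h0, h1, h2] at this
    exact this
  rcases Bool.eq_false_or_eq_true (gE 0 1 0 2) with hmin' | hmin'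
  · -- MIN case : f depends only on the smaller element
    have hmin : ∀ a b c : ℕ, a < b → b < c →
        f (Sym2.mk (e a) (e b)) = f (Sym2.mk (e a) (e c)) :=
      fun a b c h h' => (hE1 a b c h h').mpr hmin'
    refine oneCoord he_mono (fun A => f (Sym2.mk (e A) (e (A + 1)))) ?_
    intro A B hAB
    left
    show f (Sym2.mk (e A) (e B)) = f (Sym2.mk (e A) (e (A + 1)))
    rcases eq_or_lt_of_le (Nat.succ_le_of_lt hAB) with h | h
    · rw [← h]
    · exact (hmin A (A + 1) B (Nat.lt_succ_self A) h).symm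
  rcases Bool.eq_false_or_eq_true (gE 0 2 1 2) with hmax' | hmax'
  · -- MAX case : f depends only on the larger element
    have hmax : ∀ a b c : ℕ, a < b → b < c →
        f (Sym2.mk (e a) (e c)) = f (Sym2.mk (e b) (e c)) :=
      fun a b c h h' => (hE2 a b c h h').mpr hmax'
    refine oneCoord he_mono (fun B => f (Sym2.mk (e 0) (e B))) ?_
    intro A B hAB
    right
    show f (Sym2.mk (e A) (e B)) = f (Sym2.mk (e 0) (e B))
    rcases Nat.eq_zero_or_pos A with h | h
    · rw [h]
    · exact (hmax 0 A B h hAB).symm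
  rcases Bool.eq_false_or_eq_true (gE 0 1 1 2) with hmid' | hmid'
  · -- CONSTANT case
    have hmid : ∀ a b c : ℕ, a < b → b < c →
        f (Sym2.mk (e a) (e b)) = f (Sym2.mk (e b) (e c)) :=
      fun a b c h h' => (hE3 a b c h h').mpr hmid'
    set v := f (Sym2.mk (e 0) (e 1)) with hv
    have claim1 : ∀ A, 1 ≤ A → f (Sym2.mk (e 0) (e A)) = v := by
      intro A
      induction A with
      | zero => intro h; omega
      | succ A ih =>
        intro _
        by_cases hA : A = 0
        · subst hA
          simp [hv]
        · have h1 : 1 ≤ A := by omega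
          have e1 : f (Sym2.mk (e 0) (e (A + 1))) = f (Sym2.mk (e (A + 1)) (e (A + 2))) :=
            hmid 0 (A + 1) (A + 2) (by omega) (by omega)
          have e2 : f (Sym2.mk (e A) (e (A + 1))) = f (Sym2.mk (e (A + 1)) (e (A + 2))) :=
            hmid A (A + 1) (A + 2) (by omega) (by omega)
          have e3 : f (Sym2.mk (e 0) (e A)) = f (Sym2.mk (e A) (e (A + 1))) :=
            hmid 0 A (A + 1) (by omega) (by omega)
          rw [e1, ← e2, ← e3]
          exact ih h1
    have hall : ∀ A B, A < B → f (Sym2.mk (e A) (e B)) = v := by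
      intro A B hAB
      rcases Nat.eq_zero_or_pos A with h | h
      · rw [h]
        exact claim1 B (by omega)
      · have h3 : f (Sym2.mk (e 0) (e A)) = f (Sym2.mk (e A) (e B)) := hmid 0 A B h hAB
        rw [← h3]
        exact claim1 A h
    refine ⟨e '' Set.univ, Set.infinite_univ.image (he_mono.injective.injOn),
      subsingleton_inHindman (v := v) ?_⟩
    intro x hx
    obtain ⟨A, B, _, _, hAB, hfx⟩ := transl he_mono _ hx
    simp only [Set.mem_singleton_iff]
    rw [← hfx]
    exact hall A B hAB
  · -- MAIN (semi-injective) case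
    have SI1 : ∀ a b c : ℕ, a < b → b < c →
        f (Sym2.mk (e a) (e b)) ≠ f (Sym2.mk (e a) (e c)) := by
      intro a b c h h' hcontra
      have := (hE1 a b c h h').mp hcontra
      rw [hmin'] at this
      exact Bool.false_ne_true this
    have SI3 : ∀ a b c : ℕ, a < b → b < c →
        f (Sym2.mk (e a) (e c)) ≠ f (Sym2.mk (e b) (e c)) := by
      intro a b c h h' hcontra
      have := (hE2 a b c h h').mp hcontra
      rw [hmax'] at this
      exact Bool.false_ne_true this
    refine ⟨e '' Set.univ, Set.infinite_univ.image (he_mono.injective.injOn), ?_⟩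
    intro B hB hsub
    obtain ⟨b₁, b₂, b₃, hb₁, hb₂, hb₃, hp1, hp12, hp23⟩ := infinite_three_pos hB
    have get : ∀ x ∈ FS B, ∃ A A' : ℕ, A < A' ∧ f (Sym2.mk (e A) (e A')) = x := by
      intro x hx
      obtain ⟨A, A', _, _, hAB, hfx⟩ := transl he_mono _ (hsub hx)
      exact ⟨A, A', hAB, hfx⟩
    obtain ⟨a1, c1, o1, v1⟩ := get b₁ (mem_FS_single hb₁)
    obtain ⟨a2, c2, o2, v2⟩ := get b₂ (mem_FS_single hb₂)
    obtain ⟨a3, c3, o3, v3⟩ := get b₃ (mem_FS_single hb₃)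
    obtain ⟨s1, t1, o12, v12⟩ := get (b₁ + b₂) (mem_FS_pair hb₁ hb₂ (by omega))
    obtain ⟨s2, t2, o13, v13⟩ := get (b₁ + b₃) (mem_FS_pair hb₁ hb₃ (by omega))
    obtain ⟨s3, t3, o23, v23⟩ := get (b₂ + b₃) (mem_FS_pair hb₂ hb₃ (by omega))
    have K12 := key (fun A A' => f (Sym2.mk (e A) (e A'))) gS hHomS SI1 SI3 o1 o2 o12
      (by rintro ⟨h, h'⟩; rw [h, h'] at v1; have := v1.symm.trans v2; omega)
      (by rintro ⟨h, h'⟩; rw [h, h'] at v1; have := v1.symm.trans v12; omega)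
      (by rintro ⟨h, h'⟩; rw [h, h'] at v2; have := v2.symm.trans v12; omega)
      (by show f (Sym2.mk (e a1) (e c1)) + f (Sym2.mk (e a2) (e c2)) =
            f (Sym2.mk (e s1) (e t1))
          rw [v1, v2, v12])
    have K13 := key (fun A A' => f (Sym2.mk (e A) (e A'))) gS hHomS SI1 SI3 o1 o3 o13
      (by rintro ⟨h, h'⟩; rw [h, h'] at v1; have := v1.symm.trans v3; omega)
      (by rintro ⟨h, h'⟩; rw [h, h'] at v1; have := v1.symm.trans v13; omega)
      (by rintro ⟨h, h'⟩; rw [h, h'] at v3; have := v3.symm.trans v13; omega)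
      (by show f (Sym2.mk (e a1) (e c1)) + f (Sym2.mk (e a3) (e c3)) =
            f (Sym2.mk (e s2) (e t2))
          rw [v1, v3, v13])
    have K23 := key (fun A A' => f (Sym2.mk (e A) (e A'))) gS hHomS SI1 SI3 o2 o3 o23
      (by rintro ⟨h, h'⟩; rw [h, h'] at v2; have := v2.symm.trans v3; omega)
      (by rintro ⟨h, h'⟩; rw [h, h'] at v2; have := v2.symm.trans v23; omega)
      (by rintro ⟨h, h'⟩; rw [h, h'] at v3; have := v3.symm.trans v23; omega)
      (by show f (Sym2.mk (e a2) (e c2)) + f (Sym2.mk (e a3) (e c3)) =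
            f (Sym2.mk (e s3) (e t3))
          rw [v2, v3, v23])
    rcases K12 with h12 | h12 <;> rcases K13 with h13 | h13 <;>
      rcases K23 with h23 | h23 <;> omega

theorem hindman_not_katetov_below_ramsey :
    ¬ ∃ f : Sym2 ℕ → ℕ, ∀ A : Set ℕ, InHindman A → InRamsey (f ⁻¹' A) := by
  rintro ⟨f, hf⟩
  obtain ⟨H, hHinf, hHin⟩ := main_comb f
  exact hf (f '' pairsOf H) hHin H hHinf (fun p hp => ⟨p, hp, rfl⟩)
end

section
/- The Ramsey ideal is not Katětov below the Hindman ideal: there is no function f : ℕ → [ℕ]² such that f⁻¹[A] belongs to the Hindman ideal for every A in the Ramsey ideal. -/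
attribute [local instance] Ultrafilter.add Ultrafilter.addSemigroup

open Filter Classical


namespace RamseyHindmanProof

lemma FS_pos : ∀ (a : Stream' ℕ) (m : ℕ), m ∈ Hindman.FS a → (∀ n, 1 ≤ a.get n) → 1 ≤ m := by
  intro a m hm
  induction hm with
  | head' a => intro hpos; exact hpos 0
  | tail' a m h ih => intro hpos; exact ih (fun n => hpos (n + 1))
  | cons' a m h ih =>
      intro hpos
      have h0 : a.head = a.get 0 := rfl
      have := hpos 0
      omega

/-- There is an idempotent ultrafilter on ℕ containing all tail sets. -/
lemma exists_good_ultrafilter :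
    ∃ U : Ultrafilter ℕ, U + U = U ∧ ∀ M : ℕ, {y : ℕ | M < y} ∈ U := by
  obtain ⟨U, hidem, hFS⟩ :=
    Hindman.exists_idempotent_ultrafilter_le_FS (Stream'.const (1 : ℕ))
  refine ⟨U, hidem, ?_⟩
  have hone : {y : ℕ | 1 ≤ y} ∈ U := by
    have hFS' : {m : ℕ | m ∈ Hindman.FS (Stream'.const 1)} ∈ U := hFS
    apply mem_of_superset hFS'
    intro y hy
    exact FS_pos _ y hy (fun n => le_refl 1)
  by_contra hbad
  push_neg at hbad
  obtain ⟨M, hM⟩ := hbad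
  have hbdd : ∃ M, {y : ℕ | y ≤ M} ∈ U := by
    refine ⟨M, ?_⟩
    have := (Ultrafilter.compl_mem_iff_notMem (s := {y : ℕ | M < y})).mpr hM
    apply mem_of_superset this
    intro y hy
    simpa using hy
  set M₀ := Nat.find hbdd with hM₀def
  have hT : {y : ℕ | y ≤ M₀} ∈ U := Nat.find_spec hbdd
  have h2 : {y : ℕ | y ≤ M₀} ∈ U + U := by rw [hidem]; exact hT
  have h3 : {m : ℕ | {m' : ℕ | m + m' ≤ M₀} ∈ U} ∈ U :=
    (Ultrafilter.eventually_add U U (fun m => m ≤ M₀)).mp h2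
  have h4 : ({m : ℕ | {m' : ℕ | m + m' ≤ M₀} ∈ U} ∩ ({y | y ≤ M₀} ∩ {y | 1 ≤ y})).Nonempty :=
    Ultrafilter.nonempty_of_mem (inter_mem h3 (inter_mem hT hone))
  obtain ⟨m₀, hm₀1, hm₀2, hm₀3⟩ := h4
  have hsub : {m' : ℕ | m' ≤ M₀ - m₀} ∈ U := by
    apply mem_of_superset hm₀1
    intro y hy
    simp only [Set.mem_setOf_eq] at *
    omega
  have : M₀ ≤ M₀ - m₀ := Nat.find_min' hbdd hsub
  simp only [Set.mem_setOf_eq] at hm₀2 hm₀3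
  omega

section Limits

variable (U : Ultrafilter ℕ)

/-- `g` converges along `U` above the slot `s`. -/
def Cv (g : ℕ → ℕ) (s : ℕ) : Prop := ∃ v, {y : ℕ | g (s + y) = v} ∈ U

/-- The limit value. -/
noncomputable def vl (g : ℕ → ℕ) (s : ℕ) : ℕ :=
  if h : Cv U g s then h.choose else 0

/-- The slot `s` is hereditarily averse for `g`. -/
def Av (g : ℕ → ℕ) (s : ℕ) : Prop := {y : ℕ | ¬ Cv U g (s + y)} ∈ U

lemma vl_spec {g : ℕ → ℕ} {s : ℕ} (h : Cv U g s) :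
    {y : ℕ | g (s + y) = vl U g s} ∈ U := by
  rw [vl, dif_pos h]
  exact h.choose_spec

lemma vl_unique {g : ℕ → ℕ} {s : ℕ} {v : ℕ} (h : {y : ℕ | g (s + y) = v} ∈ U) :
    Cv U g s ∧ vl U g s = v := by
  have hc : Cv U g s := ⟨v, h⟩
  refine ⟨hc, ?_⟩
  obtain ⟨y, hy1, hy2⟩ := Ultrafilter.nonempty_of_mem (inter_mem (vl_spec U hc) h)
  simp only [Set.mem_setOf_eq] at hy1 hy2
  omega

variable (hidem : U + U = U)
include hidem

/-- Key membership identity from idempotence. -/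
lemma mem_idem {P : ℕ → Prop} :
    {y : ℕ | P y} ∈ U ↔ {y : ℕ | {z : ℕ | P (y + z)} ∈ U} ∈ U := by
  constructor
  · intro h
    have h2 : {y : ℕ | P y} ∈ U + U := by rw [hidem]; exact h
    exact (Ultrafilter.eventually_add U U P).mp h2
  · intro h
    have h2 : {y : ℕ | P y} ∈ U + U := (Ultrafilter.eventually_add U U P).mpr h
    rwa [hidem] at h2

/-- Lock stability: a convergent slot stays convergent with the same value. -/
lemma lock_stable {g : ℕ → ℕ} {s : ℕ} (h : Cv U g s) :
    {y : ℕ | g (s + y) = vl U g s ∧ Cv U g (s + y) ∧ vl U g (s + y) = vl U g s} ∈ U := by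
  set v := vl U g s with hv
  have h1 : {y : ℕ | g (s + y) = v} ∈ U := vl_spec U h
  have h2 : {y : ℕ | {z : ℕ | g (s + (y + z)) = v} ∈ U} ∈ U :=
    (mem_idem U hidem (P := fun w => g (s + w) = v)).mp h1
  have h3 : {y : ℕ | Cv U g (s + y) ∧ vl U g (s + y) = v} ∈ U := by
    apply mem_of_superset h2
    intro y hy
    simp only [Set.mem_setOf_eq] at hy ⊢
    have hin : {z : ℕ | g ((s + y) + z) = v} ∈ U := by
      apply mem_of_superset hy
      intro z hz
      simp only [Set.mem_setOf_eq] at hz ⊢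
      rwa [add_assoc]
    exact vl_unique U hin
  have hh := inter_mem h1 h3
  apply mem_of_superset hh
  intro y hy
  exact ⟨hy.1, hy.2.1, hy.2.2⟩

omit hidem in
/-- Escape: a divergent slot's values escape any bound, U-largely. -/
lemma escape {g : ℕ → ℕ} {s : ℕ} (h : ¬ Cv U g s) (N : ℕ) :
    {y : ℕ | N < g (s + y)} ∈ U := by
  have key : ∀ N : ℕ, {y : ℕ | g (s + y) ≤ N} ∉ U := by
    intro N
    induction N with
    | zero =>
      intro hc
      exact h ⟨0, by
        apply mem_of_superset hc
        intro y hy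
        simpa using hy⟩
    | succ n ih =>
      intro hc
      have hun : {y : ℕ | g (s + y) ≤ n} ∪ {y : ℕ | g (s + y) = n + 1} ∈ U := by
        apply mem_of_superset hc
        intro y hy
        simp only [Set.mem_setOf_eq, Set.mem_union] at *
        omega
      rcases (Ultrafilter.union_mem_iff).mp hun with h1 | h1
      · exact ih h1
      · exact h ⟨n + 1, h1⟩
  have := (Ultrafilter.compl_mem_iff_notMem (s := {y : ℕ | g (s + y) ≤ N})).mpr (key N)
  apply mem_of_superset this
  intro y hy
  simp only [Set.mem_compl_iff, Set.mem_setOf_eq] at *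
  omega

/-- New lock values avoid any fixed finite set if the base slot is divergent. -/
lemma lock_avoid {g : ℕ → ℕ} {s : ℕ} (h : ¬ Cv U g s) (Φ : Finset ℕ) :
    {y : ℕ | Cv U g (s + y) → vl U g (s + y) ∉ Φ} ∈ U := by
  by_contra hc
  have hΦ : {y : ℕ | Cv U g (s + y) ∧ vl U g (s + y) ∈ Φ} ∈ U := by
    have := (Ultrafilter.compl_mem_iff_notMem
      (s := {y : ℕ | Cv U g (s + y) → vl U g (s + y) ∉ Φ})).mpr hc
    apply mem_of_superset this
    intro y hy
    simp only [Set.mem_compl_iff, Set.mem_setOf_eq] at *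
    tauto
  have hpig : ∃ v ∈ Φ, {y : ℕ | Cv U g (s + y) ∧ vl U g (s + y) = v} ∈ U := by
    have hsub : {y : ℕ | Cv U g (s + y) ∧ vl U g (s + y) ∈ Φ} ⊆
        ⋃ v ∈ (Φ : Set ℕ), {y : ℕ | Cv U g (s + y) ∧ vl U g (s + y) = v} := by
      intro y hy
      simp only [Set.mem_setOf_eq, Set.mem_iUnion] at *
      exact ⟨vl U g (s + y), hy.2, hy.1, rfl⟩
    have hU : (⋃ v ∈ (Φ : Set ℕ), {y : ℕ | Cv U g (s + y) ∧ vl U g (s + y) = v}) ∈ U :=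
      mem_of_superset hΦ hsub
    exact (Ultrafilter.finite_biUnion_mem_iff (Φ.finite_toSet)).mp hU
  obtain ⟨v, _, hv⟩ := hpig
  apply h
  refine ⟨v, ?_⟩
  rw [mem_idem U hidem (P := fun w => g (s + w) = v)]
  apply mem_of_superset hv
  intro y hy
  simp only [Set.mem_setOf_eq] at hy ⊢
  have hsp := vl_spec U hy.1
  rw [hy.2] at hsp
  apply mem_of_superset hsp
  intro z hz
  simp only [Set.mem_setOf_eq] at hz ⊢
  rwa [add_assoc] at hz

/-- Averseness is hereditary. -/
lemma averse_hered {g : ℕ → ℕ} {s : ℕ} (h : Av U g s) :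
    {y : ℕ | ¬ Cv U g (s + y) ∧ Av U g (s + y)} ∈ U := by
  have h1 : {y : ℕ | ¬ Cv U g (s + y)} ∈ U := h
  have h2 : {y : ℕ | {z : ℕ | ¬ Cv U g (s + (y + z))} ∈ U} ∈ U :=
    (mem_idem U hidem (P := fun w => ¬ Cv U g (s + w))).mp h1
  have h3 : {y : ℕ | Av U g (s + y)} ∈ U := by
    apply mem_of_superset h2
    intro y hy
    simp only [Set.mem_setOf_eq] at hy ⊢
    unfold Av
    apply mem_of_superset hy
    intro z hz
    simp only [Set.mem_setOf_eq] at hz ⊢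
    rw [add_assoc]
    exact hz
  exact mem_of_superset (inter_mem h1 h3) (fun y hy => ⟨hy.1, hy.2⟩)

/-- The Kill Lemma: if the slot `s` is hereditarily `h`-averse, then actual `h`-values above `s`
cannot `U`-largely coincide with freshly-born `g`-locks. -/
lemma kill {g h : ℕ → ℕ} {s : ℕ} (hav : Av U h s) :
    {y : ℕ | ¬ (Cv U g y ∧ h (s + y) = vl U g y)} ∈ U := by
  by_contra hc
  have hZ : {y : ℕ | Cv U g y ∧ h (s + y) = vl U g y} ∈ U := by
    have := (Ultrafilter.compl_mem_iff_notMem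
      (s := {y : ℕ | ¬ (Cv U g y ∧ h (s + y) = vl U g y)})).mpr hc
    apply mem_of_superset this
    intro y hy
    simp only [Set.mem_compl_iff, Set.mem_setOf_eq] at *
    tauto
  have hD : {y : ℕ | {z : ℕ | Cv U g (y + z) ∧ h (s + (y + z)) = vl U g (y + z)} ∈ U} ∈ U :=
    (mem_idem U hidem (P := fun w => Cv U g w ∧ h (s + w) = vl U g w)).mp hZ
  obtain ⟨y₀, hy1, hy2, hy3⟩ := Ultrafilter.nonempty_of_mem (inter_mem hD (inter_mem hZ hav))
  simp only [Set.mem_setOf_eq] at hy1 hy2 hy3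
  apply hy3
  set v := vl U g y₀ with hvdef
  have hE' : {z : ℕ | g (y₀ + z) = v ∧ Cv U g (y₀ + z) ∧ vl U g (y₀ + z) = v} ∈ U :=
    lock_stable U hidem hy2.1
  refine ⟨v, ?_⟩
  have hh := inter_mem hy1 hE'
  apply mem_of_superset hh
  intro z hz
  simp only [Set.mem_setOf_eq] at hz ⊢
  rw [add_assoc, hz.1.2, hz.2.2.2]

end Limits



/-- min endpoint of an unordered pair -/
noncomputable def emin (f : ℕ → Sym2 ℕ) (n : ℕ) : ℕ :=
  Sym2.lift ⟨fun u v => min u v, fun u v => min_comm u v⟩ (f n)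

/-- max endpoint of an unordered pair -/
noncomputable def emax (f : ℕ → Sym2 ℕ) (n : ℕ) : ℕ :=
  Sym2.lift ⟨fun u v => max u v, fun u v => max_comm u v⟩ (f n)

lemma emin_emax_of_eq {f : ℕ → Sym2 ℕ} {n h h' : ℕ} (hf : f n = Sym2.mk h h')
    (hlt : h < h') : emin f n = h ∧ emax f n = h' := by
  have h1 : emin f n = min h h' := by rw [emin, hf]; exact Sym2.lift_mk _ h h'
  have h2 : emax f n = max h h' := by rw [emax, hf]; exact Sym2.lift_mk _ h h'
  constructor
  · rw [h1]; omega
  · rw [h2]; omega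

/-- Generic combinator: recursively choose a sequence with each term in a prescribed
nonempty set depending only on earlier terms. -/
lemma seq_choice (C : (ℕ → ℕ) → ℕ → Set ℕ)
    (hdep : ∀ g g' j, (∀ i, i < j → g i = g' i) → C g j = C g' j)
    (hne : ∀ g j, (C g j).Nonempty) :
    ∃ x : ℕ → ℕ, ∀ j, x j ∈ C x j := by
  let pick : List ℕ → ℕ := fun l => (hne (fun i => l.getD i 0) l.length).some
  let Hs : ℕ → List ℕ := fun j => Nat.rec ([] : List ℕ) (fun _ l => l ++ [pick l]) j
  have hpred : ∀ j, Hs (j + 1) = Hs j ++ [pick (Hs j)] := fun j => rfl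
  have hlen : ∀ j, (Hs j).length = j := by
    intro j; induction j with
    | zero => rfl
    | succ n ih => rw [hpred, List.length_append, ih]; rfl
  set x : ℕ → ℕ := fun j => pick (Hs j) with hxdef
  have hget : ∀ j i, i < j → (Hs j).getD i 0 = x i := by
    intro j
    induction j with
    | zero => intro i h; omega
    | succ n ih =>
      intro i h
      rw [hpred]
      rcases Nat.lt_or_ge i n with h' | h'
      · rw [List.getD_append _ _ _ _ (by rw [hlen]; omega)]
        exact ih i h'
      · have heq : i = n := by omega
        subst heq
        have hge : (Hs i ++ [pick (Hs i)])[i]? = some (pick (Hs i)) := by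
          have := List.getElem?_concat_length (l := Hs i) (a := pick (Hs i))
          rwa [hlen] at this
        simp [List.getD, hge, hxdef]
  refine ⟨x, fun j => ?_⟩
  have h1 : x j ∈ C (fun i => (Hs j).getD i 0) ((Hs j).length) :=
    (hne (fun i => (Hs j).getD i 0) (Hs j).length).some_mem
  rw [hlen] at h1
  rwa [hdep _ x j (fun i hij => hget j i hij)] at h1

section Constr

variable (U : Ultrafilter ℕ) (f : ℕ → Sym2 ℕ)

/-- Values recorded up to (strictly below) stage `j`. -/
noncomputable def Vfin (x : ℕ → ℕ) (j : ℕ) : Finset ℕ :=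
  ((Finset.range j).powerset.filter Finset.Nonempty).image (fun F => emin f (F.sum x)) ∪
  ((Finset.range j).powerset.filter Finset.Nonempty).image (fun F => emax f (F.sum x)) ∪
  (Finset.range j).image (fun i => vl U (emin f) (x i)) ∪
  (Finset.range j).image (fun i => vl U (emax f) (x i))

noncomputable def MV (x : ℕ → ℕ) (j : ℕ) : ℕ := (Vfin U f x j).sup id

lemma le_MV_of_mem {x : ℕ → ℕ} {j : ℕ} {c : ℕ} (h : c ∈ Vfin U f x j) : c ≤ MV U f x j :=
  Finset.le_sup (f := id) h

lemma Vfin_mono {x : ℕ → ℕ} {j j' : ℕ} (h : j ≤ j') : Vfin U f x j ⊆ Vfin U f x j' := by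
  unfold Vfin
  have hp : (Finset.range j).powerset.filter Finset.Nonempty ⊆
      (Finset.range j').powerset.filter Finset.Nonempty := by
    apply Finset.filter_subset_filter
    exact Finset.powerset_mono.mpr (Finset.range_subset_range.mpr h)
  have hr : Finset.range j ⊆ Finset.range j' := Finset.range_subset_range.mpr h
  exact Finset.union_subset_union (Finset.union_subset_union
    (Finset.union_subset_union (Finset.image_subset_image hp) (Finset.image_subset_image hp))
    (Finset.image_subset_image hr)) (Finset.image_subset_image hr)

lemma mem_Vfin_emin {x : ℕ → ℕ} {j : ℕ} {F : Finset ℕ} (hne : F.Nonempty)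
    (hsub : F ⊆ Finset.range j) : emin f (F.sum x) ∈ Vfin U f x j := by
  unfold Vfin
  apply Finset.mem_union_left; apply Finset.mem_union_left; apply Finset.mem_union_left
  exact Finset.mem_image_of_mem _ (by simp [Finset.mem_filter, Finset.mem_powerset, hsub, hne])

lemma mem_Vfin_emax {x : ℕ → ℕ} {j : ℕ} {F : Finset ℕ} (hne : F.Nonempty)
    (hsub : F ⊆ Finset.range j) : emax f (F.sum x) ∈ Vfin U f x j := by
  unfold Vfin
  apply Finset.mem_union_left; apply Finset.mem_union_left; apply Finset.mem_union_right
  exact Finset.mem_image_of_mem _ (by simp [Finset.mem_filter, Finset.mem_powerset, hsub, hne])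

lemma mem_Vfin_vla {x : ℕ → ℕ} {j i : ℕ} (h : i < j) : vl U (emin f) (x i) ∈ Vfin U f x j := by
  unfold Vfin
  apply Finset.mem_union_left; apply Finset.mem_union_right
  exact Finset.mem_image_of_mem _ (Finset.mem_range.mpr h)

lemma mem_Vfin_vlb {x : ℕ → ℕ} {j i : ℕ} (h : i < j) : vl U (emax f) (x i) ∈ Vfin U f x j := by
  unfold Vfin
  apply Finset.mem_union_right
  exact Finset.mem_image_of_mem _ (Finset.mem_range.mpr h)

/-- The master condition at stage `j` (given earlier values of `x`), on the candidate `y`. -/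
def CondP (x : ℕ → ℕ) (j : ℕ) (y : ℕ) : Prop :=
  ((Finset.range j).sum x + MV U f x j < y)
  ∧ (∀ F ∈ (Finset.range j).powerset,
      (Cv U (emin f) (F.sum x) → (emin f (F.sum x + y) = vl U (emin f) (F.sum x) ∧
        Cv U (emin f) (F.sum x + y) ∧ vl U (emin f) (F.sum x + y) = vl U (emin f) (F.sum x)))
      ∧ (¬ Cv U (emin f) (F.sum x) → MV U f x j < emin f (F.sum x + y))
      ∧ (Av U (emin f) (F.sum x) →
          (¬ Cv U (emin f) (F.sum x + y) ∧ Av U (emin f) (F.sum x + y)))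
      ∧ (Cv U (emax f) (F.sum x) → (emax f (F.sum x + y) = vl U (emax f) (F.sum x) ∧
        Cv U (emax f) (F.sum x + y) ∧ vl U (emax f) (F.sum x + y) = vl U (emax f) (F.sum x)))
      ∧ (¬ Cv U (emax f) (F.sum x) → MV U f x j < emax f (F.sum x + y))
      ∧ (Av U (emax f) (F.sum x) →
          (¬ Cv U (emax f) (F.sum x + y) ∧ Av U (emax f) (F.sum x + y)))
      ∧ (Av U (emax f) (F.sum x) → ¬ (Cv U (emin f) y ∧ emax f (F.sum x + y) = vl U (emin f) y)))
  ∧ (¬ Cv U (emin f) 0 → (Cv U (emin f) y → vl U (emin f) y ∉ Vfin U f x j))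
  ∧ (¬ Cv U (emax f) 0 → (Cv U (emax f) y → vl U (emax f) y ∉ Vfin U f x j))
  ∧ (({z : ℕ | Cv U (emin f) z} ∈ U) → Cv U (emin f) y)
  ∧ (({z : ℕ | Cv U (emax f) z} ∈ U) → Cv U (emax f) y)

variable {U}

lemma CondP_large (hidem : U + U = U) (htail : ∀ M : ℕ, {y : ℕ | M < y} ∈ U)
    (x : ℕ → ℕ) (j : ℕ) : {y : ℕ | CondP U f x j y} ∈ U := by
  have evU : ∀ {s : Set ℕ}, s ∈ U → ∀ᶠ y in (U : Filter ℕ), y ∈ s := fun h => h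
  have big : ∀ᶠ y in (U : Filter ℕ), CondP U f x j y := by
    unfold CondP
    refine Filter.Eventually.and (evU (htail _)) ?_
    refine Filter.Eventually.and ?_ ?_
    · rw [Filter.eventually_all_finset]
      intro F _
      set s := F.sum x with hs
      have part1 : ∀ᶠ y in (U : Filter ℕ),
          (Cv U (emin f) s → (emin f (s + y) = vl U (emin f) s ∧
            Cv U (emin f) (s + y) ∧ vl U (emin f) (s + y) = vl U (emin f) s)) := by
        by_cases h : Cv U (emin f) s
        · exact (evU (lock_stable U hidem h)).mono (fun y hy _ => hy)
        · exact Filter.Eventually.of_forall (fun y hc => absurd hc h)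
      have part2 : ∀ᶠ y in (U : Filter ℕ),
          (¬ Cv U (emin f) s → MV U f x j < emin f (s + y)) := by
        by_cases h : Cv U (emin f) s
        · exact Filter.Eventually.of_forall (fun y hc => absurd h hc)
        · exact (evU (escape U h _)).mono (fun y hy _ => hy)
      have part3 : ∀ᶠ y in (U : Filter ℕ),
          (Av U (emin f) s → (¬ Cv U (emin f) (s + y) ∧ Av U (emin f) (s + y))) := by
        by_cases h : Av U (emin f) s
        · exact (evU (averse_hered U hidem h)).mono (fun y hy _ => hy)
        · exact Filter.Eventually.of_forall (fun y hc => absurd hc h)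
      have part4 : ∀ᶠ y in (U : Filter ℕ),
          (Cv U (emax f) s → (emax f (s + y) = vl U (emax f) s ∧
            Cv U (emax f) (s + y) ∧ vl U (emax f) (s + y) = vl U (emax f) s)) := by
        by_cases h : Cv U (emax f) s
        · exact (evU (lock_stable U hidem h)).mono (fun y hy _ => hy)
        · exact Filter.Eventually.of_forall (fun y hc => absurd hc h)
      have part5 : ∀ᶠ y in (U : Filter ℕ),
          (¬ Cv U (emax f) s → MV U f x j < emax f (s + y)) := by
        by_cases h : Cv U (emax f) s
        · exact Filter.Eventually.of_forall (fun y hc => absurd h hc)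
        · exact (evU (escape U h _)).mono (fun y hy _ => hy)
      have part6 : ∀ᶠ y in (U : Filter ℕ),
          (Av U (emax f) s → (¬ Cv U (emax f) (s + y) ∧ Av U (emax f) (s + y))) := by
        by_cases h : Av U (emax f) s
        · exact (evU (averse_hered U hidem h)).mono (fun y hy _ => hy)
        · exact Filter.Eventually.of_forall (fun y hc => absurd hc h)
      have part7 : ∀ᶠ y in (U : Filter ℕ),
          (Av U (emax f) s → ¬ (Cv U (emin f) y ∧ emax f (s + y) = vl U (emin f) y)) := by
        by_cases h : Av U (emax f) s
        · exact (evU (kill U hidem h)).mono (fun y hy _ => hy)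
        · exact Filter.Eventually.of_forall (fun y hc => absurd hc h)
      exact part1.and (part2.and (part3.and (part4.and (part5.and (part6.and part7)))))
    · have part8 : ∀ᶠ y in (U : Filter ℕ),
          (¬ Cv U (emin f) 0 → (Cv U (emin f) y → vl U (emin f) y ∉ Vfin U f x j)) := by
        by_cases h : Cv U (emin f) 0
        · exact Filter.Eventually.of_forall (fun y hc => absurd h hc)
        · refine (evU (lock_avoid U hidem h (Vfin U f x j))).mono (fun y hy _ hcy => ?_)
          simp only [Set.mem_setOf_eq, zero_add] at hy
          exact hy (by simpa [zero_add] using hcy)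
      have part9 : ∀ᶠ y in (U : Filter ℕ),
          (¬ Cv U (emax f) 0 → (Cv U (emax f) y → vl U (emax f) y ∉ Vfin U f x j)) := by
        by_cases h : Cv U (emax f) 0
        · exact Filter.Eventually.of_forall (fun y hc => absurd h hc)
        · refine (evU (lock_avoid U hidem h (Vfin U f x j))).mono (fun y hy _ hcy => ?_)
          simp only [Set.mem_setOf_eq, zero_add] at hy
          exact hy (by simpa [zero_add] using hcy)
      have part10 : ∀ᶠ y in (U : Filter ℕ), (({z : ℕ | Cv U (emin f) z} ∈ U) → Cv U (emin f) y) := by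
        by_cases h : {z : ℕ | Cv U (emin f) z} ∈ U
        · exact (evU h).mono (fun y hy _ => hy)
        · exact Filter.Eventually.of_forall (fun y hc => absurd hc h)
      have part11 : ∀ᶠ y in (U : Filter ℕ), (({z : ℕ | Cv U (emax f) z} ∈ U) → Cv U (emax f) y) := by
        by_cases h : {z : ℕ | Cv U (emax f) z} ∈ U
        · exact (evU h).mono (fun y hy _ => hy)
        · exact Filter.Eventually.of_forall (fun y hc => absurd hc h)
      exact part8.and (part9.and (part10.and part11))
  exact big

lemma CondP_congr {g g' : ℕ → ℕ} {j : ℕ} (hag : ∀ i, i < j → g i = g' i) :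
    {y : ℕ | CondP U f g j y} = {y : ℕ | CondP U f g' j y} := by
  have hsum : ∀ F : Finset ℕ, F ⊆ Finset.range j → F.sum g = F.sum g' := by
    intro F hF
    exact Finset.sum_congr rfl (fun i hi => hag i (Finset.mem_range.mp (hF hi)))
  have hV : Vfin U f g j = Vfin U f g' j := by
    unfold Vfin
    have h1 : ∀ F ∈ (Finset.range j).powerset.filter Finset.Nonempty,
        emin f (F.sum g) = emin f (F.sum g') := by
      intro F hF
      rw [hsum F (Finset.mem_powerset.mp (Finset.mem_filter.mp hF).1)]
    have h2 : ∀ F ∈ (Finset.range j).powerset.filter Finset.Nonempty,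
        emax f (F.sum g) = emax f (F.sum g') := by
      intro F hF
      rw [hsum F (Finset.mem_powerset.mp (Finset.mem_filter.mp hF).1)]
    have h3 : ∀ i ∈ Finset.range j, vl U (emin f) (g i) = vl U (emin f) (g' i) := by
      intro i hi; rw [hag i (Finset.mem_range.mp hi)]
    have h4 : ∀ i ∈ Finset.range j, vl U (emax f) (g i) = vl U (emax f) (g' i) := by
      intro i hi; rw [hag i (Finset.mem_range.mp hi)]
    rw [Finset.image_congr h1, Finset.image_congr h2, Finset.image_congr h3,
      Finset.image_congr h4]
  have hMV : MV U f g j = MV U f g' j := by unfold MV; rw [hV]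
  have hS : (Finset.range j).sum g = (Finset.range j).sum g' := hsum _ (le_refl _)
  ext y
  simp only [Set.mem_setOf_eq]
  unfold CondP
  rw [hMV, hS, hV]
  constructor
  · rintro ⟨c1, c2, c3⟩
    refine ⟨c1, ?_, c3⟩
    intro F hF
    have := c2 F hF
    rwa [hsum F (Finset.mem_powerset.mp hF)] at this
  · rintro ⟨c1, c2, c3⟩
    refine ⟨c1, ?_, c3⟩
    intro F hF
    have := c2 F hF
    rwa [← hsum F (Finset.mem_powerset.mp hF)] at this

/-- The constructed sequence. -/
lemma exists_xseq (hidem : U + U = U) (htail : ∀ M : ℕ, {y : ℕ | M < y} ∈ U) :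
    ∃ x : ℕ → ℕ, ∀ j, CondP U f x j (x j) := by
  obtain ⟨x, hx⟩ := seq_choice (fun g j => {y : ℕ | CondP U f g j y})
    (fun g g' j h => CondP_congr f h)
    (fun g j => Ultrafilter.nonempty_of_mem (CondP_large f hidem htail g j))
  exact ⟨x, hx⟩

end Constr



section Analysis

variable {U : Ultrafilter ℕ} (f : ℕ → Sym2 ℕ) (x : ℕ → ℕ)
variable (hx : ∀ j, CondP U f x j (x j))

include hx

lemma sum_lt_x : ∀ j, (Finset.range j).sum x < x j := by
  intro j
  have := (hx j).1
  omega

lemma MV_lt_x : ∀ j, MV U f x j < x j := by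
  intro j
  have := (hx j).1
  omega

lemma x_strictMono : StrictMono x := by
  apply strictMono_nat_of_lt_succ
  intro j
  have h1 : (Finset.range (j + 1)).sum x < x (j + 1) := sum_lt_x f x hx (j + 1)
  have h2 : x j ≤ (Finset.range (j + 1)).sum x :=
    Finset.single_le_sum (f := x) (fun i _ => Nat.zero_le _)
      (Finset.mem_range.mpr (Nat.lt_succ_self j))
  omega

omit hx in
lemma erase_max_subset_range {F : Finset ℕ} (hne : F.Nonempty) :
    F.erase (F.max' hne) ⊆ Finset.range (F.max' hne) := by
  intro i hi
  rw [Finset.mem_erase] at hi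
  rw [Finset.mem_range]
  have := F.le_max' i hi.2
  omega

omit hx in
lemma sum_split {F : Finset ℕ} (hne : F.Nonempty) :
    F.sum x = (F.erase (F.max' hne)).sum x + x (F.max' hne) :=
  (Finset.sum_erase_add F x (F.max'_mem hne)).symm

omit hx in
lemma subset_range_succ_max {F : Finset ℕ} (hne : F.Nonempty) :
    F ⊆ Finset.range (F.max' hne + 1) := by
  intro i hi
  rw [Finset.mem_range]
  have := F.le_max' i hi
  omega

/-- Access the per-parent conditions for a nonempty `F`, with the sum split. -/
lemma cond_of (F : Finset ℕ) (hne : F.Nonempty) :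
    (Cv U (emin f) ((F.erase (F.max' hne)).sum x) →
      (emin f (F.sum x) = vl U (emin f) ((F.erase (F.max' hne)).sum x) ∧
        Cv U (emin f) (F.sum x) ∧
        vl U (emin f) (F.sum x) = vl U (emin f) ((F.erase (F.max' hne)).sum x)))
    ∧ (¬ Cv U (emin f) ((F.erase (F.max' hne)).sum x) →
        MV U f x (F.max' hne) < emin f (F.sum x))
    ∧ (Av U (emin f) ((F.erase (F.max' hne)).sum x) →
        (¬ Cv U (emin f) (F.sum x) ∧ Av U (emin f) (F.sum x)))
    ∧ (Cv U (emax f) ((F.erase (F.max' hne)).sum x) →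
      (emax f (F.sum x) = vl U (emax f) ((F.erase (F.max' hne)).sum x) ∧
        Cv U (emax f) (F.sum x) ∧
        vl U (emax f) (F.sum x) = vl U (emax f) ((F.erase (F.max' hne)).sum x)))
    ∧ (¬ Cv U (emax f) ((F.erase (F.max' hne)).sum x) →
        MV U f x (F.max' hne) < emax f (F.sum x))
    ∧ (Av U (emax f) ((F.erase (F.max' hne)).sum x) →
        (¬ Cv U (emax f) (F.sum x) ∧ Av U (emax f) (F.sum x)))
    ∧ (Av U (emax f) ((F.erase (F.max' hne)).sum x) →
        ¬ (Cv U (emin f) (x (F.max' hne)) ∧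
           emax f (F.sum x) = vl U (emin f) (x (F.max' hne)))) := by
  have hc := (hx (F.max' hne)).2.1 (F.erase (F.max' hne))
    (Finset.mem_powerset.mpr (erase_max_subset_range hne))
  rw [← sum_split x hne] at hc
  exact hc

lemma cond_PrA {j : ℕ} (h : {z : ℕ | Cv U (emin f) z} ∈ U) : Cv U (emin f) (x j) :=
  (hx j).2.2.2.2.1 h

lemma cond_PrB {j : ℕ} (h : {z : ℕ | Cv U (emax f) z} ∈ U) : Cv U (emax f) (x j) :=
  (hx j).2.2.2.2.2 h

lemma cond_newA {j : ℕ} (h : ¬ Cv U (emin f) 0) (h2 : Cv U (emin f) (x j)) :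
    vl U (emin f) (x j) ∉ Vfin U f x j :=
  (hx j).2.2.1 h h2

lemma cond_newB {j : ℕ} (h : ¬ Cv U (emax f) 0) (h2 : Cv U (emax f) (x j)) :
    vl U (emax f) (x j) ∉ Vfin U f x j :=
  (hx j).2.2.2.1 h h2

/-- FS of the range of `x` consists of the subset sums. -/
lemma FS_char {n : ℕ} (h : n ∈ FS (Set.range x)) :
    ∃ F : Finset ℕ, F.Nonempty ∧ F.sum x = n := by
  obtain ⟨G, hGne, hGsub, hGsum⟩ := h
  have hinj : Function.Injective x := (x_strictMono f x hx).injective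
  refine ⟨G.preimage x (hinj.injOn), ?_, ?_⟩
  · obtain ⟨g, hg⟩ := hGne
    obtain ⟨i, rfl⟩ := hGsub hg
    exact ⟨i, Finset.mem_preimage.mpr hg⟩
  · have := Finset.sum_preimage x G (hinj.injOn) id
      (fun g hg hns => absurd (hGsub hg) hns)
    rw [← hGsum]
    exact this

/-- Realizer of a pair of the clique. -/
lemma realize {H : Set ℕ} (hsub : pairsOf H ⊆ f '' FS (Set.range x)) {h h' : ℕ}
    (hh : h ∈ H) (hh' : h' ∈ H) (hlt : h < h') :
    ∃ F : Finset ℕ, F.Nonempty ∧ emin f (F.sum x) = h ∧ emax f (F.sum x) = h' := by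
  have hp : Sym2.mk h h' ∈ pairsOf H := ⟨h, h', Nat.ne_of_lt hlt, hh, hh', rfl⟩
  obtain ⟨n, hn, hfn⟩ := hsub hp
  obtain ⟨F, hFne, hFsum⟩ := FS_char f x hx hn
  obtain ⟨he1, he2⟩ := emin_emax_of_eq hfn hlt
  exact ⟨F, hFne, by rw [hFsum]; exact he1, by rw [hFsum]; exact he2⟩

end Analysis



section Cases

variable {U : Ultrafilter ℕ} (f : ℕ → Sym2 ℕ) (x : ℕ → ℕ)
variable (hx : ∀ j, CondP U f x j (x j))

include hx

omit hx in
lemma min'_eq_max'_of_erase_empty {F : Finset ℕ} (hne : F.Nonempty)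
    (h : F.erase (F.max' hne) = ∅) : F.min' hne = F.max' hne := by
  by_contra hne'
  have hmem : F.min' hne ∈ F.erase (F.max' hne) :=
    Finset.mem_erase.mpr ⟨hne', F.min'_mem hne⟩
  rw [h] at hmem
  exact absurd hmem (Finset.notMem_empty _)

omit hx in
lemma min'_erase_max {F : Finset ℕ} (hne : F.Nonempty)
    (hne' : (F.erase (F.max' hne)).Nonempty) :
    (F.erase (F.max' hne)).min' hne' = F.min' hne := by
  apply le_antisymm
  · apply Finset.min'_le
    rw [Finset.mem_erase]
    refine ⟨?_, F.min'_mem hne⟩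
    obtain ⟨i, hi⟩ := hne'
    rw [Finset.mem_erase] at hi
    have hcard : 1 < F.card := Finset.one_lt_card.mpr ⟨i, hi.2, F.max' hne, F.max'_mem hne, hi.1⟩
    have := F.min'_lt_max'_of_card hcard
    omega
  · exact Finset.min'_le _ _ (Finset.mem_of_mem_erase ((F.erase (F.max' hne)).min'_mem hne'))

omit hx in
lemma sum_of_erase_empty {F : Finset ℕ} (hne : F.Nonempty)
    (h : F.erase (F.max' hne) = ∅) : F.sum x = x (F.max' hne) := by
  rw [sum_split x hne, h, Finset.sum_empty, zero_add]

/-! ### Case Star-A : `Cv (emin f) 0` -/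

lemma lockA_all (hcv : Cv U (emin f) 0) :
    ∀ F : Finset ℕ,
      (Cv U (emin f) (F.sum x) ∧ vl U (emin f) (F.sum x) = vl U (emin f) 0)
      ∧ (F.Nonempty → emin f (F.sum x) = vl U (emin f) 0) := by
  intro F
  induction F using Finset.strongInductionOn with
  | _ F ih =>
    rcases F.eq_empty_or_nonempty with rfl | hne
    · refine ⟨by rw [Finset.sum_empty]; exact ⟨hcv, rfl⟩, ?_⟩
      intro h
      exact absurd h Finset.not_nonempty_empty
    · have hih := ih _ (Finset.erase_ssubset (F.max'_mem hne))
      have hc := (cond_of f x hx F hne).1 hih.1.1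
      refine ⟨⟨hc.2.1, by rw [hc.2.2, hih.1.2]⟩, fun _ => by rw [hc.1, hih.1.2]⟩

lemma case_starA (hcv : Cv U (emin f) 0) : InRamsey (f '' FS (Set.range x)) := by
  intro H Hinf hsub
  obtain ⟨h₁, hh₁⟩ := Hinf.nonempty
  obtain ⟨h₂, hh₂, h12⟩ := Hinf.exists_gt h₁
  obtain ⟨h₃, hh₃, h23⟩ := Hinf.exists_gt h₂
  obtain ⟨F, hFne, hFa, _⟩ := realize f x hx hsub hh₁ hh₂ h12
  obtain ⟨G, hGne, hGa, _⟩ := realize f x hx hsub hh₂ hh₃ h23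
  have e1 := (lockA_all f x hx hcv F).2 hFne
  have e2 := (lockA_all f x hx hcv G).2 hGne
  rw [hFa] at e1
  rw [hGa] at e2
  omega

/-! ### Case Star-B : `Cv (emax f) 0` -/

lemma lockB_all (hcv : Cv U (emax f) 0) :
    ∀ F : Finset ℕ,
      (Cv U (emax f) (F.sum x) ∧ vl U (emax f) (F.sum x) = vl U (emax f) 0)
      ∧ (F.Nonempty → emax f (F.sum x) = vl U (emax f) 0) := by
  intro F
  induction F using Finset.strongInductionOn with
  | _ F ih =>
    rcases F.eq_empty_or_nonempty with rfl | hne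
    · refine ⟨by rw [Finset.sum_empty]; exact ⟨hcv, rfl⟩, ?_⟩
      intro h
      exact absurd h Finset.not_nonempty_empty
    · have hih := ih _ (Finset.erase_ssubset (F.max'_mem hne))
      have hc := (cond_of f x hx F hne).2.2.2.1 hih.1.1
      refine ⟨⟨hc.2.1, by rw [hc.2.2, hih.1.2]⟩, fun _ => by rw [hc.1, hih.1.2]⟩

lemma case_starB (hcv : Cv U (emax f) 0) : InRamsey (f '' FS (Set.range x)) := by
  intro H Hinf hsub
  obtain ⟨h₁, hh₁⟩ := Hinf.nonempty
  obtain ⟨h₂, hh₂, h12⟩ := Hinf.exists_gt h₁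
  obtain ⟨h₃, hh₃, h23⟩ := Hinf.exists_gt h₂
  obtain ⟨F, hFne, _, hFb⟩ := realize f x hx hsub hh₁ hh₂ h12
  obtain ⟨G, hGne, _, hGb⟩ := realize f x hx hsub hh₁ hh₃ (lt_trans h12 h23)
  have e1 := (lockB_all f x hx hcv F).2 hFne
  have e2 := (lockB_all f x hx hcv G).2 hGne
  rw [hFb] at e1
  rw [hGb] at e2
  omega

/-! ### Case min-fresh : `¬ Cv (emin f) 0` and `{z | Cv (emin f) z} ∉ U` -/

lemma divA_all (hnc : ¬ Cv U (emin f) 0) (hav : Av U (emin f) 0) :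
    ∀ F : Finset ℕ, ¬ Cv U (emin f) (F.sum x) ∧ Av U (emin f) (F.sum x) := by
  intro F
  induction F using Finset.strongInductionOn with
  | _ F ih =>
    rcases F.eq_empty_or_nonempty with rfl | hne
    · rw [Finset.sum_empty]; exact ⟨hnc, hav⟩
    · have hih := ih _ (Finset.erase_ssubset (F.max'_mem hne))
      exact (cond_of f x hx F hne).2.2.1 hih.2

lemma freshA_all (hnc : ¬ Cv U (emin f) 0) (hav : Av U (emin f) 0) :
    ∀ (F : Finset ℕ) (hne : F.Nonempty), MV U f x (F.max' hne) < emin f (F.sum x) :=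
  fun F hne => (cond_of f x hx F hne).2.1 (divA_all f x hx hnc hav _).1

lemma case_minFresh (hnc : ¬ Cv U (emin f) 0) (hnp : {z : ℕ | Cv U (emin f) z} ∉ U) :
    InRamsey (f '' FS (Set.range x)) := by
  have hav : Av U (emin f) 0 := by
    unfold Av
    have h1 : {z : ℕ | Cv U (emin f) z}ᶜ ∈ U := Ultrafilter.compl_mem_iff_notMem.mpr hnp
    apply mem_of_superset h1
    intro y hy
    simp only [Set.mem_compl_iff, Set.mem_setOf_eq] at *
    rwa [zero_add]
  intro H Hinf hsub
  obtain ⟨h, hh⟩ := Hinf.nonempty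
  have hPh : {h' ∈ H | h < h'}.Infinite := by
    apply (Hinf.diff (Set.finite_Iic h)).mono
    intro y hy
    refine ⟨hy.1, ?_⟩
    have := hy.2
    simp only [Set.mem_Iic] at this
    omega
  obtain ⟨h'₀, hmem₀⟩ := hPh.nonempty
  obtain ⟨F₀, hF₀ne, hF₀a, _⟩ := realize f x hx hsub hh hmem₀.1 hmem₀.2
  set t := F₀.max' hF₀ne with htdef
  have hsubim : {h' ∈ H | h < h'} ⊆
      (fun F : Finset ℕ => emax f (F.sum x)) '' ↑(Finset.range (t + 1)).powerset := by
    intro h' hmem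
    obtain ⟨F, hFne, hFa, hFb⟩ := realize f x hx hsub hh hmem.1 hmem.2
    have hstage : F.max' hFne = t := by
      by_contra hnet
      have key : ∀ (G G' : Finset ℕ) (hG : G.Nonempty) (hG' : G'.Nonempty),
          G.max' hG < G'.max' hG' → emin f (G.sum x) = h → emin f (G'.sum x) = h → False := by
        intro G G' hG hG' hlt he he'
        have hrec : emin f (G.sum x) ∈ Vfin U f x (G'.max' hG') :=
          Vfin_mono U f (by omega) (mem_Vfin_emin U f hG (subset_range_succ_max hG))
        have hle := le_MV_of_mem U f hrec
        have hfr := freshA_all f x hx hnc hav G' hG'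
        rw [he] at hle
        rw [he'] at hfr
        omega
      rcases Nat.lt_or_ge (F.max' hFne) t with hlt | hge
      · exact key F F₀ hFne hF₀ne hlt hFa hF₀a
      · have hlt : t < F.max' hFne := by omega
        exact key F₀ F hF₀ne hFne hlt hF₀a hFa
    refine ⟨F, ?_, hFb⟩
    simp only [Finset.coe_powerset, Set.mem_preimage, Set.mem_powerset_iff,
      Finset.coe_subset]
    rw [← hstage]
    exact_mod_cast subset_range_succ_max hFne
  have hfin : ((fun F : Finset ℕ => emax f (F.sum x)) ''
      ↑(Finset.range (t + 1)).powerset).Finite :=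
    Set.Finite.image _ (Finset.finite_toSet _)
  exact (hPh.mono hsubim) hfin

end Cases



section Cases2

variable {U : Ultrafilter ℕ} (f : ℕ → Sym2 ℕ) (x : ℕ → ℕ)
variable (hx : ∀ j, CondP U f x j (x j))

include hx

/-! ### shared helpers -/

lemma fresh_single_a (hnca : ¬ Cv U (emin f) 0) : ∀ m, MV U f x m < emin f (x m) := by
  intro m
  have hone : ({m} : Finset ℕ).Nonempty := Finset.singleton_nonempty m
  have hc := (cond_of f x hx {m} hone).2.1
  rw [Finset.max'_singleton, Finset.erase_singleton, Finset.sum_empty,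
    Finset.sum_singleton] at hc
  exact hc hnca

lemma fresh_single_b (hncb : ¬ Cv U (emax f) 0) : ∀ m, MV U f x m < emax f (x m) := by
  intro m
  have hone : ({m} : Finset ℕ).Nonempty := Finset.singleton_nonempty m
  have hc := (cond_of f x hx {m} hone).2.2.2.2.1
  rw [Finset.max'_singleton, Finset.erase_singleton, Finset.sum_empty,
    Finset.sum_singleton] at hc
  exact hc hncb

lemma single_inj_a (hnca : ¬ Cv U (emin f) 0) {m m' : ℕ} (h : m < m') :
    emin f (x m) ≠ emin f (x m') := by
  intro heq
  have hrec : emin f (x m) ∈ Vfin U f x m' := by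
    have h1 : emin f (({m} : Finset ℕ).sum x) ∈ Vfin U f x (m + 1) :=
      mem_Vfin_emin U f (Finset.singleton_nonempty m)
        (by intro i hi; rw [Finset.mem_singleton] at hi
            rw [Finset.mem_range, hi]; omega)
    rw [Finset.sum_singleton] at h1
    exact Vfin_mono U f (by omega) h1
  have hle := le_MV_of_mem U f hrec
  have hfr := fresh_single_a f x hx hnca m'
  rw [heq] at hle
  omega

lemma vA_inj (hnca : ¬ Cv U (emin f) 0) (hPrA : {z : ℕ | Cv U (emin f) z} ∈ U)
    {m m' : ℕ} (h : m < m') : vl U (emin f) (x m) ≠ vl U (emin f) (x m') := by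
  intro heq
  have hmem : vl U (emin f) (x m) ∈ Vfin U f x m' := mem_Vfin_vla U f h
  have hnotin := cond_newA f x hx hnca (cond_PrA f x hx hPrA (j := m'))
  rw [← heq] at hnotin
  exact hnotin hmem

lemma vB_inj (hncb : ¬ Cv U (emax f) 0) (hPrB : {z : ℕ | Cv U (emax f) z} ∈ U)
    {m m' : ℕ} (h : m < m') : vl U (emax f) (x m) ≠ vl U (emax f) (x m') := by
  intro heq
  have hmem : vl U (emax f) (x m) ∈ Vfin U f x m' := mem_Vfin_vlb U f h
  have hnotin := cond_newB f x hx hncb (cond_PrB f x hx hPrB (j := m'))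
  rw [← heq] at hnotin
  exact hnotin hmem

omit hx in
lemma infinite_gt {H : Set ℕ} (Hinf : H.Infinite) (h : ℕ) :
    {h' ∈ H | h < h'}.Infinite := by
  apply (Hinf.diff (Set.finite_Iic h)).mono
  intro y hy
  refine ⟨hy.1, ?_⟩
  have := hy.2
  simp only [Set.mem_Iic] at this
  omega

/-! ### Case 4 : `PrA` together with `b`-averseness -/

lemma inv4 (hPrA : {z : ℕ | Cv U (emin f) z} ∈ U) (havb : Av U (emax f) 0) :
    ∀ F : Finset ℕ, ∀ hne : F.Nonempty,
      Cv U (emin f) (F.sum x) ∧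
      vl U (emin f) (F.sum x) = vl U (emin f) (x (F.min' hne)) ∧
      ¬ Cv U (emax f) (F.sum x) ∧ Av U (emax f) (F.sum x) := by
  intro F
  induction F using Finset.strongInductionOn with
  | _ F ih =>
    intro hne
    have hc := cond_of f x hx F hne
    rcases (F.erase (F.max' hne)).eq_empty_or_nonempty with hemp | hne'
    · rw [hemp, Finset.sum_empty] at hc
      have hsum : F.sum x = x (F.max' hne) := sum_of_erase_empty x hne hemp
      have hCv : Cv U (emin f) (F.sum x) := by
        rw [hsum]; exact cond_PrA f x hx hPrA
      have hmin : F.min' hne = F.max' hne := min'_eq_max'_of_erase_empty hne hemp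
      exact ⟨hCv, by rw [hsum, hmin], (hc.2.2.2.2.2.1 havb).1, (hc.2.2.2.2.2.1 havb).2⟩
    · have hih := ih _ (Finset.erase_ssubset (F.max'_mem hne)) hne'
      refine ⟨(hc.1 hih.1).2.1, ?_, (hc.2.2.2.2.2.1 hih.2.2.2).1,
        (hc.2.2.2.2.2.1 hih.2.2.2).2⟩
      rw [(hc.1 hih.1).2.2, hih.2.1, min'_erase_max hne hne']

lemma val4_multi (hPrA : {z : ℕ | Cv U (emin f) z} ∈ U) (havb : Av U (emax f) 0)
    {F : Finset ℕ} (hne : F.Nonempty) (hne' : (F.erase (F.max' hne)).Nonempty) :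
    emin f (F.sum x) = vl U (emin f) (x (F.min' hne)) := by
  have hih := inv4 f x hx hPrA havb _ hne'
  have hc := (cond_of f x hx F hne).1 hih.1
  rw [hc.1, hih.2.1, min'_erase_max hne hne']

lemma val4_freshb (hncb : ¬ Cv U (emax f) 0) (hPrA : {z : ℕ | Cv U (emin f) z} ∈ U)
    (havb : Av U (emax f) 0) {F : Finset ℕ} (hne : F.Nonempty) :
    MV U f x (F.max' hne) < emax f (F.sum x) := by
  have hc := (cond_of f x hx F hne).2.2.2.2.1
  rcases (F.erase (F.max' hne)).eq_empty_or_nonempty with hemp | hne'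
  · rw [hemp, Finset.sum_empty] at hc
    exact hc hncb
  · exact hc (inv4 f x hx hPrA havb _ hne').2.2.1

lemma b_ne_vA (hnca : ¬ Cv U (emin f) 0) (hncb : ¬ Cv U (emax f) 0)
    (hPrA : {z : ℕ | Cv U (emin f) z} ∈ U) (havb : Av U (emax f) 0)
    {F : Finset ℕ} (hne : F.Nonempty) (i : ℕ) :
    emax f (F.sum x) ≠ vl U (emin f) (x i) := by
  intro heq
  rcases lt_trichotomy i (F.max' hne) with hlt | heqi | hgt
  · have hmem : vl U (emin f) (x i) ∈ Vfin U f x (F.max' hne) := mem_Vfin_vla U f hlt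
    have hle := le_MV_of_mem U f hmem
    have hfr := val4_freshb f x hx hncb hPrA havb hne
    rw [← heq] at hle
    omega
  · have hc := (cond_of f x hx F hne).2.2.2.2.2.2
    have havp : Av U (emax f) ((F.erase (F.max' hne)).sum x) := by
      rcases (F.erase (F.max' hne)).eq_empty_or_nonempty with hemp | hne'
      · rw [hemp, Finset.sum_empty]; exact havb
      · exact (inv4 f x hx hPrA havb _ hne').2.2.2
    refine hc havp ⟨cond_PrA f x hx hPrA, ?_⟩
    rw [heq, heqi]
  · have hmem : emax f (F.sum x) ∈ Vfin U f x i :=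
      Vfin_mono U f (by omega) (mem_Vfin_emax U f hne (subset_range_succ_max hne))
    have hnotin := cond_newA f x hx hnca (cond_PrA f x hx hPrA (j := i))
    rw [← heq] at hnotin
    exact hnotin hmem

lemma case4 (hnca : ¬ Cv U (emin f) 0) (hncb : ¬ Cv U (emax f) 0)
    (hPrA : {z : ℕ | Cv U (emin f) z} ∈ U) (hnpb : {z : ℕ | Cv U (emax f) z} ∉ U) :
    InRamsey (f '' FS (Set.range x)) := by
  have havb : Av U (emax f) 0 := by
    unfold Av
    have h1 : {z : ℕ | Cv U (emax f) z}ᶜ ∈ U := Ultrafilter.compl_mem_iff_notMem.mpr hnpb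
    apply mem_of_superset h1
    intro y hy
    simp only [Set.mem_compl_iff, Set.mem_setOf_eq] at *
    rwa [zero_add]
  intro H Hinf hsub
  have step1 : ∀ h ∈ H, ∃ i, h = vl U (emin f) (x i) := by
    intro h hh
    have hPh := infinite_gt Hinf h
    by_contra hno
    push_neg at hno
    have hsing : ∀ (F : Finset ℕ) (hne : F.Nonempty), emin f (F.sum x) = h →
        F.erase (F.max' hne) = ∅ := by
      intro F hne hFa
      by_contra hne'
      rw [← Ne, ← Finset.nonempty_iff_ne_empty] at hne'
      have hv := val4_multi f x hx hPrA havb hne hne'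
      exact hno _ (by rw [← hFa, hv])
    obtain ⟨h1, hm1, h2, hm2, h12⟩ := hPh.nontrivial
    obtain ⟨F1, hne1, ha1, hb1⟩ := realize f x hx hsub hh hm1.1 hm1.2
    obtain ⟨F2, hne2, ha2, hb2⟩ := realize f x hx hsub hh hm2.1 hm2.2
    have e1 : F1.sum x = x (F1.max' hne1) := sum_of_erase_empty x hne1 (hsing F1 hne1 ha1)
    have e2 : F2.sum x = x (F2.max' hne2) := sum_of_erase_empty x hne2 (hsing F2 hne2 ha2)
    rcases lt_trichotomy (F1.max' hne1) (F2.max' hne2) with hlt | heqm | hgt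
    · exact single_inj_a f x hx hnca hlt (by rw [← e1, ← e2, ha1, ha2])
    · apply h12
      rw [← hb1, ← hb2, e1, e2, heqm]
    · exact single_inj_a f x hx hnca hgt (by rw [← e1, ← e2, ha2, ha1])
  obtain ⟨h₁, hh₁⟩ := Hinf.nonempty
  obtain ⟨h₂, hh₂, h12⟩ := Hinf.exists_gt h₁
  obtain ⟨F, hFne, _, hFb⟩ := realize f x hx hsub hh₁ hh₂ h12
  obtain ⟨i, hi⟩ := step1 h₂ hh₂
  exact b_ne_vA f x hx hnca hncb hPrA havb hFne i (by rw [hFb]; exact hi)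

/-! ### Case 5 : `PrA` and `PrB` -/

lemma inv5 (hPrA : {z : ℕ | Cv U (emin f) z} ∈ U) (hPrB : {z : ℕ | Cv U (emax f) z} ∈ U) :
    ∀ F : Finset ℕ, ∀ hne : F.Nonempty,
      Cv U (emin f) (F.sum x) ∧
      vl U (emin f) (F.sum x) = vl U (emin f) (x (F.min' hne)) ∧
      Cv U (emax f) (F.sum x) ∧
      vl U (emax f) (F.sum x) = vl U (emax f) (x (F.min' hne)) := by
  intro F
  induction F using Finset.strongInductionOn with
  | _ F ih =>
    intro hne
    have hc := cond_of f x hx F hne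
    rcases (F.erase (F.max' hne)).eq_empty_or_nonempty with hemp | hne'
    · have hsum : F.sum x = x (F.max' hne) := sum_of_erase_empty x hne hemp
      have hmin : F.min' hne = F.max' hne := min'_eq_max'_of_erase_empty hne hemp
      refine ⟨by rw [hsum]; exact cond_PrA f x hx hPrA, by rw [hsum, hmin],
        by rw [hsum]; exact cond_PrB f x hx hPrB, by rw [hsum, hmin]⟩
    · have hih := ih _ (Finset.erase_ssubset (F.max'_mem hne)) hne'
      refine ⟨(hc.1 hih.1).2.1, ?_, (hc.2.2.2.1 hih.2.2.1).2.1, ?_⟩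
      · rw [(hc.1 hih.1).2.2, hih.2.1, min'_erase_max hne hne']
      · rw [(hc.2.2.2.1 hih.2.2.1).2.2, hih.2.2.2, min'_erase_max hne hne']

lemma val5_multi (hPrA : {z : ℕ | Cv U (emin f) z} ∈ U)
    (hPrB : {z : ℕ | Cv U (emax f) z} ∈ U)
    {F : Finset ℕ} (hne : F.Nonempty) (hne' : (F.erase (F.max' hne)).Nonempty) :
    emin f (F.sum x) = vl U (emin f) (x (F.min' hne)) ∧
    emax f (F.sum x) = vl U (emax f) (x (F.min' hne)) := by
  have hih := inv5 f x hx hPrA hPrB _ hne'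
  have hca := (cond_of f x hx F hne).1 hih.1
  have hcb := (cond_of f x hx F hne).2.2.2.1 hih.2.2.1
  constructor
  · rw [hca.1, hih.2.1, min'_erase_max hne hne']
  · rw [hcb.1, hih.2.2.2, min'_erase_max hne hne']

lemma case5 (hnca : ¬ Cv U (emin f) 0) (hncb : ¬ Cv U (emax f) 0)
    (hPrA : {z : ℕ | Cv U (emin f) z} ∈ U) (hPrB : {z : ℕ | Cv U (emax f) z} ∈ U) :
    InRamsey (f '' FS (Set.range x)) := by
  intro H Hinf hsub
  obtain ⟨h, hh⟩ := Hinf.nonempty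
  have hPh := infinite_gt Hinf h
  -- two partners whose realizers are both singleton-type are equal
  have both_single : ∀ (p q : ℕ) (Fp Fq : Finset ℕ) (hnep : Fp.Nonempty) (hneq : Fq.Nonempty),
      emin f (Fp.sum x) = h → emax f (Fp.sum x) = p →
      emin f (Fq.sum x) = h → emax f (Fq.sum x) = q →
      Fp.erase (Fp.max' hnep) = ∅ → Fq.erase (Fq.max' hneq) = ∅ → p = q := by
    intro p q Fp Fq hnep hneq hap hbp haq hbq hep heq
    have e1 := sum_of_erase_empty x hnep hep
    have e2 := sum_of_erase_empty x hneq heq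
    rcases lt_trichotomy (Fp.max' hnep) (Fq.max' hneq) with hlt | heqm | hgt
    · exact absurd (by rw [← e1, ← e2, hap, haq]) (single_inj_a f x hx hnca hlt)
    · rw [← hbp, ← hbq, e1, e2, heqm]
    · exact absurd (by rw [← e1, ← e2, haq, hap]) (single_inj_a f x hx hnca hgt)
  have both_multi : ∀ (p q : ℕ) (Fp Fq : Finset ℕ) (hnep : Fp.Nonempty) (hneq : Fq.Nonempty),
      emin f (Fp.sum x) = h → emax f (Fp.sum x) = p →
      emin f (Fq.sum x) = h → emax f (Fq.sum x) = q →
      (Fp.erase (Fp.max' hnep)).Nonempty → (Fq.erase (Fq.max' hneq)).Nonempty → p = q := by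
    intro p q Fp Fq hnep hneq hap hbp haq hbq hep heq
    have v1 := val5_multi f x hx hPrA hPrB hnep hep
    have v2 := val5_multi f x hx hPrA hPrB hneq heq
    have hmins : Fp.min' hnep = Fq.min' hneq := by
      rcases lt_trichotomy (Fp.min' hnep) (Fq.min' hneq) with hlt | heqm | hgt
      · exact absurd (by rw [← v1.1, ← v2.1, hap, haq])
          (vA_inj f x hx hnca hPrA hlt)
      · exact heqm
      · exact absurd (by rw [← v2.1, ← v1.1, haq, hap])
          (vA_inj f x hx hnca hPrA hgt)
    rw [← hbp, ← hbq, v1.2, v2.2, hmins]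
  obtain ⟨h1, hm1, h2, hm2, h12⟩ := hPh.nontrivial
  have h3inf : ({h' ∈ H | h < h'} \ {h1, h2}).Infinite :=
    hPh.diff (Set.Finite.insert h1 (Set.finite_singleton h2))
  obtain ⟨h3, hm3'⟩ := h3inf.nonempty
  have hm3 := hm3'.1
  have h31 : h3 ≠ h1 := fun hc => hm3'.2 (by rw [hc]; exact Set.mem_insert _ _)
  have h32 : h3 ≠ h2 := fun hc => hm3'.2 (by rw [hc]; right; exact Set.mem_singleton _)
  obtain ⟨F1, hne1, ha1, hb1⟩ := realize f x hx hsub hh hm1.1 hm1.2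
  obtain ⟨F2, hne2, ha2, hb2⟩ := realize f x hx hsub hh hm2.1 hm2.2
  obtain ⟨F3, hne3, ha3, hb3⟩ := realize f x hx hsub hh hm3.1 hm3.2
  by_cases c1 : F1.erase (F1.max' hne1) = ∅ <;>
    by_cases c2 : F2.erase (F2.max' hne2) = ∅ <;>
      by_cases c3 : F3.erase (F3.max' hne3) = ∅
  · exact h12 (both_single h1 h2 F1 F2 hne1 hne2 ha1 hb1 ha2 hb2 c1 c2)
  · exact h12 (both_single h1 h2 F1 F2 hne1 hne2 ha1 hb1 ha2 hb2 c1 c2)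
  · exact h31.symm (both_single h1 h3 F1 F3 hne1 hne3 ha1 hb1 ha3 hb3 c1 c3)
  · exact h32 (both_multi h2 h3 F2 F3 hne2 hne3 ha2 hb2 ha3 hb3
      (Finset.nonempty_iff_ne_empty.mpr c2) (Finset.nonempty_iff_ne_empty.mpr c3)).symm
  · exact h32.symm (both_single h2 h3 F2 F3 hne2 hne3 ha2 hb2 ha3 hb3 c2 c3)
  · exact h31 (both_multi h1 h3 F1 F3 hne1 hne3 ha1 hb1 ha3 hb3
      (Finset.nonempty_iff_ne_empty.mpr c1) (Finset.nonempty_iff_ne_empty.mpr c3)).symm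
  · exact h12 (both_multi h1 h2 F1 F2 hne1 hne2 ha1 hb1 ha2 hb2
      (Finset.nonempty_iff_ne_empty.mpr c1) (Finset.nonempty_iff_ne_empty.mpr c2))
  · exact h12 (both_multi h1 h2 F1 F2 hne1 hne2 ha1 hb1 ha2 hb2
      (Finset.nonempty_iff_ne_empty.mpr c1) (Finset.nonempty_iff_ne_empty.mpr c2))

end Cases2


theorem main_aux : ¬ ∃ f : ℕ → Sym2 ℕ, ∀ A : Set (Sym2 ℕ), InRamsey A → InHindman (f ⁻¹' A) := by
  rintro ⟨f, hf⟩
  obtain ⟨U, hidem, htail⟩ := exists_good_ultrafilter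
  obtain ⟨x, hx⟩ := exists_xseq f hidem htail
  have hinj : Function.Injective x := (x_strictMono f x hx).injective
  have hBinf : (Set.range x).Infinite := Set.infinite_range_of_injective hinj
  have hIR : InRamsey (f '' FS (Set.range x)) := by
    by_cases h1 : Cv U (emin f) 0
    · exact case_starA f x hx h1
    by_cases h2 : Cv U (emax f) 0
    · exact case_starB f x hx h2
    by_cases h3 : {z : ℕ | Cv U (emin f) z} ∈ U
    · by_cases h4 : {z : ℕ | Cv U (emax f) z} ∈ U
      · exact case5 f x hx h1 h2 h3 h4
      · exact case4 f x hx h1 h2 h3 h4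
    · exact case_minFresh f x hx h1 h3
  have hH := hf _ hIR
  apply hH (Set.range x) hBinf
  intro n hn
  exact Set.mem_image_of_mem f hn

end RamseyHindmanProof

theorem ramsey_not_katetov_below_hindman :
    ¬ ∃ f : ℕ → Sym2 ℕ, ∀ A : Set (Sym2 ℕ), InRamsey A → InHindman (f ⁻¹' A) :=
  RamseyHindmanProof.main_aux
end
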